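/- arXiv:2202.06311 — 7 statements merged into one kernel-verified Lean document; each statement's English description precedes it below -/
import Mathlib

section
/- In a (v,4)-packing whose maximum partial parallel class has size ρ, if B = {w,x,y,z} is a block of a fixed maximum PPC 𝒫 and t_w³ ≥ max{t_x³, t_y³, t_z³}, where t_p³ denotes the number of blocks not in 𝒫 containing point p and exactly three points outside the PPC, then either t_w³ ≤ 3, or t_w³ ≥ 4 and t_x³ = t_y³ = t_z³ = 0. -/
/-- A `(v,k)`-packing: a family of `k`-subsets of a `v`-set such that
every pair of points occurs in at most one block. -/
def IsPacking (v k : ℕ) (B : Finset (Finset (Fin v))) : Prop :=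
  (∀ b ∈ B, b.card = k) ∧
    ∀ b₁ ∈ B, ∀ b₂ ∈ B, b₁ ≠ b₂ → (b₁ ∩ b₂).card ≤ 1

/-- A partial parallel class: a set of pairwise disjoint blocks of the packing. -/
def IsPPC {v : ℕ} (B P : Finset (Finset (Fin v))) : Prop :=
  P ⊆ B ∧ ∀ b₁ ∈ P, ∀ b₂ ∈ P, b₁ ≠ b₂ → Disjoint b₁ b₂

/-- The maximum PPC of `B` has size `ρ`. -/
def MaxPPCSize {v : ℕ} (B : Finset (Finset (Fin v))) (ρ : ℕ) : Prop :=
  (∃ P, IsPPC B P ∧ P.card = ρ) ∧ ∀ P, IsPPC B P → P.card ≤ ρ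

/-- `β(ρ,v,k)`: the maximum number of blocks in a `(v,k)`-packing whose
maximum partial parallel class has size `ρ`. -/
noncomputable def beta (ρ v k : ℕ) : ℕ :=
  sSup {b | ∃ B : Finset (Finset (Fin v)),
    IsPacking v k B ∧ MaxPPCSize B ρ ∧ B.card = b}

open Finset Classical in
lemma key_lemma {v : ℕ} (B : Finset (Finset (Fin v))) (hpack : IsPacking v 4 B)
    (P : Finset (Finset (Fin v))) (hPPC : IsPPC B P)
    (hmax : ∀ Q, IsPPC B Q → Q.card ≤ P.card)
    (Bi : Finset (Fin v)) (hBi : Bi ∈ P) (w x : Fin v)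
    (hwB : w ∈ Bi) (hxB : x ∈ Bi) (hwx : w ≠ x)
    (h4 : 4 ≤ ((B \ P).filter (fun b => w ∈ b ∧ (b \ P.sup id).card = 3)).card) :
    ((B \ P).filter (fun b => x ∈ b ∧ (b \ P.sup id).card = 3)).card = 0 := by
  set U := P.sup id with hUdef
  set Sw := (B \ P).filter (fun b => w ∈ b ∧ (b \ U).card = 3) with hSw
  by_contra hne
  obtain ⟨B', hB'⟩ := Finset.card_ne_zero.mp hne
  rw [Finset.mem_filter, Finset.mem_sdiff] at hB'
  obtain ⟨⟨hB'B, hB'P⟩, hxB', hB'3⟩ := hB'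
  have hUmem : ∀ {q : Fin v} {C : Finset (Fin v)}, C ∈ P → q ∈ C → q ∈ U := by
    intro q C hC hq
    exact Finset.mem_of_subset (Finset.le_sup (f := id) hC) hq
  have hwU : w ∈ U := hUmem hBi hwB
  have hxU : x ∈ U := hUmem hBi hxB
  -- blocks with 3 outside points meet U in exactly one point
  have hcap : ∀ b ∈ B, (b \ U).card = 3 → ∀ p ∈ b, p ∈ U → b ∩ U = {p} := by
    intro b hb h3 p hp hpU
    have hc4 := hpack.1 b hb
    have hsum := Finset.card_sdiff_add_card_inter b U
    have h1 : (b ∩ U).card = 1 := by omega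
    rw [Finset.card_eq_one] at h1
    obtain ⟨a, ha⟩ := h1
    have hpm : p ∈ b ∩ U := Finset.mem_inter.mpr ⟨hp, hpU⟩
    rw [ha, Finset.mem_singleton] at hpm
    rw [ha, hpm]
  have hcapB' : B' ∩ U = {x} := hcap B' hB'B hB'3 x hxB' hxU
  have hwB' : w ∉ B' := by
    intro hw'
    have : w ∈ B' ∩ U := Finset.mem_inter.mpr ⟨hw', hwU⟩
    rw [hcapB', Finset.mem_singleton] at this
    exact hwx this
  -- members of Sw
  have hSwmem : ∀ b ∈ Sw, b ∈ B ∧ b ∉ P ∧ w ∈ b ∧ (b \ U).card = 3 := by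
    intro b hb
    rw [hSw, Finset.mem_filter, Finset.mem_sdiff] at hb
    exact ⟨hb.1.1, hb.1.2, hb.2.1, hb.2.2⟩
  -- triples of distinct Sw blocks are disjoint
  have htri : ∀ b₁ ∈ Sw, ∀ b₂ ∈ Sw, b₁ ≠ b₂ → Disjoint (b₁ \ U) (b₂ \ U) := by
    intro b1 h1 b2 h2 hne12
    obtain ⟨h1B, _, h1w, _⟩ := hSwmem b1 h1
    obtain ⟨h2B, _, h2w, _⟩ := hSwmem b2 h2
    rw [Finset.disjoint_left]
    intro p hp1 hp2
    rw [Finset.mem_sdiff] at hp1 hp2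
    have hint := hpack.2 b1 h1B b2 h2B hne12
    have hpw : p = w := by
      by_contra hpw
      have : 1 < (b1 ∩ b2).card := by
        rw [Finset.one_lt_card]
        exact ⟨p, Finset.mem_inter.mpr ⟨hp1.1, hp2.1⟩,
          w, Finset.mem_inter.mpr ⟨h1w, h2w⟩, hpw⟩
      omega
    exact hp1.2 (hpw ▸ hwU)
  -- count blocks of Sw whose triple meets B'
  have hcount : (Sw.filter (fun b => ¬ Disjoint (b \ U) B')).card ≤ (B' \ U).card := by
    apply Finset.card_le_card_of_injOn
      (fun b => if h : ((b \ U) ∩ B').Nonempty then h.choose else w)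
    · intro b hb
      rw [Finset.mem_coe, Finset.mem_filter] at hb
      have hne' : ((b \ U) ∩ B').Nonempty :=
        Finset.not_disjoint_iff_nonempty_inter.mp hb.2
      have hspec := hne'.choose_spec
      rw [Finset.mem_inter, Finset.mem_sdiff] at hspec
      simp only [dif_pos hne']
      exact Finset.mem_sdiff.mpr ⟨hspec.2, hspec.1.2⟩
    · intro b1 h1 b2 h2 heq
      rw [Finset.mem_coe, Finset.mem_filter] at h1 h2
      have hne1 : ((b1 \ U) ∩ B').Nonempty :=
        Finset.not_disjoint_iff_nonempty_inter.mp h1.2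
      have hne2 : ((b2 \ U) ∩ B').Nonempty :=
        Finset.not_disjoint_iff_nonempty_inter.mp h2.2
      simp only [dif_pos hne1, dif_pos hne2] at heq
      by_contra hne12
      have hd := htri b1 h1.1 b2 h2.1 hne12
      have hs1 := hne1.choose_spec
      have hs2 := hne2.choose_spec
      rw [Finset.mem_inter] at hs1 hs2
      exact (Finset.disjoint_left.mp hd hs1.1) (heq ▸ hs2.1)
  have hB'out : (B' \ U).card = 3 := hB'3
  -- find a block in Sw disjoint from B'
  have hnotsub : ¬ Sw ⊆ Sw.filter (fun b => ¬ Disjoint (b \ U) B') := by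
    intro hs
    have := Finset.card_le_card hs
    omega
  obtain ⟨b, hbSw, hbn⟩ := Finset.not_subset.mp hnotsub
  have hdisj3 : Disjoint (b \ U) B' := by
    by_contra h
    exact hbn (Finset.mem_filter.mpr ⟨hbSw, h⟩)
  obtain ⟨hbB, hbP, hwb, hb3⟩ := hSwmem b hbSw
  have hcapb : b ∩ U = {w} := hcap b hbB hb3 w hwb hwU
  have hxb : x ∉ b := by
    intro hx'
    have : x ∈ b ∩ U := Finset.mem_inter.mpr ⟨hx', hxU⟩
    rw [hcapb, Finset.mem_singleton] at this
    exact hwx this.symm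
  have hdbB' : Disjoint b B' := by
    rw [Finset.disjoint_left]
    intro p hpb hpB'
    by_cases hpU : p ∈ U
    · have : p ∈ b ∩ U := Finset.mem_inter.mpr ⟨hpb, hpU⟩
      rw [hcapb, Finset.mem_singleton] at this
      exact hwB' (this ▸ hpB')
    · exact (Finset.disjoint_left.mp hdisj3 (Finset.mem_sdiff.mpr ⟨hpb, hpU⟩)) hpB'
  -- b and B' are disjoint from every other PPC block
  have hbdisjP : ∀ C ∈ P.erase Bi, Disjoint b C := by
    intro C hC
    rw [Finset.mem_erase] at hC
    rw [Finset.disjoint_left]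
    intro p hpb hpC
    have : p ∈ b ∩ U := Finset.mem_inter.mpr ⟨hpb, hUmem hC.2 hpC⟩
    rw [hcapb, Finset.mem_singleton] at this
    subst this
    exact (Finset.disjoint_left.mp (hPPC.2 Bi hBi C hC.2 (Ne.symm hC.1)) hwB) hpC
  have hB'disjP : ∀ C ∈ P.erase Bi, Disjoint B' C := by
    intro C hC
    rw [Finset.mem_erase] at hC
    rw [Finset.disjoint_left]
    intro p hpb hpC
    have : p ∈ B' ∩ U := Finset.mem_inter.mpr ⟨hpb, hUmem hC.2 hpC⟩
    rw [hcapB', Finset.mem_singleton] at this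
    subst this
    exact (Finset.disjoint_left.mp (hPPC.2 Bi hBi C hC.2 (Ne.symm hC.1)) hxB) hpC
  -- build a bigger PPC
  set Q := insert b (insert B' (P.erase Bi)) with hQ
  have hbne : b ≠ B' := fun h => hwB' (h ▸ hwb)
  have hQPPC : IsPPC B Q := by
    constructor
    · intro C hC
      rw [hQ, Finset.mem_insert, Finset.mem_insert] at hC
      rcases hC with rfl | rfl | hC
      · exact hbB
      · exact hB'B
      · exact hPPC.1 (Finset.mem_of_mem_erase hC)
    · intro C1 hC1 C2 hC2 hne12
      rw [hQ, Finset.mem_insert, Finset.mem_insert] at hC1 hC2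
      rcases hC1 with rfl | rfl | hC1 <;> rcases hC2 with rfl | rfl | hC2
      · exact absurd rfl hne12
      · exact hdbB'
      · exact hbdisjP _ hC2
      · exact hdbB'.symm
      · exact absurd rfl hne12
      · exact hB'disjP _ hC2
      · exact (hbdisjP _ hC1).symm
      · exact (hB'disjP _ hC1).symm
      · exact hPPC.2 _ (Finset.mem_of_mem_erase hC1) _ (Finset.mem_of_mem_erase hC2) hne12
  have hQcard : Q.card = P.card + 1 := by
    have hb1 : b ∉ insert B' (P.erase Bi) := by
      rw [Finset.mem_insert]
      rintro (rfl | h)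
      · exact hbne rfl
      · exact hbP (Finset.mem_of_mem_erase h)
    have hb2 : B' ∉ P.erase Bi := fun h => hB'P (Finset.mem_of_mem_erase h)
    rw [hQ, Finset.card_insert_of_notMem hb1, Finset.card_insert_of_notMem hb2,
      Finset.card_erase_of_mem hBi]
    have : 1 ≤ P.card := Finset.card_pos.mpr ⟨Bi, hBi⟩
    omega
  have := hmax Q hQPPC
  omega

/-- The packing number `D(v,k)`. -/
noncomputable def packingNumber (v k : ℕ) : ℕ :=
  sSup {b | ∃ B : Finset (Finset (Fin v)), IsPacking v k B ∧ B.card = b}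

theorem stmt0 (v ρ : ℕ) (B : Finset (Finset (Fin v)))
    (hpack : IsPacking v 4 B)
    (P : Finset (Finset (Fin v)))
    (hPPC : IsPPC B P) (hcard : P.card = ρ)
    (hmax : ∀ Q, IsPPC B Q → Q.card ≤ ρ)
    (t : Fin v → ℕ)
    (ht : ∀ p, t p =
      ((B \ P).filter (fun b => p ∈ b ∧ (b \ P.sup id).card = 3)).card)
    (w x y z : Fin v)
    (hB : ({w, x, y, z} : Finset (Fin v)) ∈ P)
    (hw : t x ≤ t w ∧ t y ≤ t w ∧ t z ≤ t w) :
    t w ≤ 3 ∨ (4 ≤ t w ∧ t x = 0 ∧ t y = 0 ∧ t z = 0) := by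

  by_cases h3 : t w ≤ 3
  · exact Or.inl h3
  have h4 : 4 ≤ t w := by omega
  have hmax' : ∀ Q, IsPPC B Q → Q.card ≤ P.card := by
    intro Q hQ; rw [hcard]; exact hmax Q hQ
  have hc4 : ({w, x, y, z} : Finset (Fin v)).card = 4 := hpack.1 _ (hPPC.1 hB)
  have hle3 : ∀ a b c : Fin v, ({a, b, c} : Finset (Fin v)).card ≤ 3 := by
    intro a b c
    calc ({a, b, c} : Finset (Fin v)).card ≤ ({b, c} : Finset (Fin v)).card + 1 :=
          Finset.card_insert_le _ _
      _ ≤ (({c} : Finset (Fin v)).card + 1) + 1 := by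
          have := Finset.card_insert_le c ({c} : Finset (Fin v))
          have := Finset.card_insert_le b ({c} : Finset (Fin v))
          omega
      _ ≤ 3 := by simp
  have hwx : w ≠ x := by
    rintro rfl
    rw [show ({w, w, y, z} : Finset (Fin v)) = {w, y, z} by
      ext p; simp; try tauto] at hc4
    have := hle3 w y z; omega
  have hwy : w ≠ y := by
    rintro rfl
    rw [show ({w, x, w, z} : Finset (Fin v)) = {w, x, z} by
      ext p; simp; try tauto] at hc4
    have := hle3 w x z; omega
  have hwz : w ≠ z := by
    rintro rfl
    rw [show ({w, x, y, w} : Finset (Fin v)) = {w, x, y} by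
      ext p; simp; try tauto] at hc4
    have := hle3 w x y; omega
  have hwm : w ∈ ({w, x, y, z} : Finset (Fin v)) := by simp
  have hxm : x ∈ ({w, x, y, z} : Finset (Fin v)) := by simp
  have hym : y ∈ ({w, x, y, z} : Finset (Fin v)) := by simp
  have hzm : z ∈ ({w, x, y, z} : Finset (Fin v)) := by simp
  have h4' : 4 ≤ ((B \ P).filter (fun b => w ∈ b ∧ (b \ P.sup id).card = 3)).card := by
    rw [← ht w]; exact h4
  refine Or.inr ⟨h4, ?_, ?_, ?_⟩
  · rw [ht x]; exact key_lemma B hpack P hPPC hmax' _ hB w x hwm hxm hwx h4'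
  · rw [ht y]; exact key_lemma B hpack P hPPC hmax' _ hB w y hwm hym hwy h4'
  · rw [ht z]; exact key_lemma B hpack P hPPC hmax' _ hB w z hwm hzm hwz h4'
end

section
/- For all positive integers ρ, v, k=4 with 4ρ ≤ v, every (v,4)-packing whose maximum partial parallel class has size ρ contains at most ρ·((8ρ−7) + max{12, ⌊(v−4ρ)/3⌋}) blocks; i.e., β(ρ,v,4) ≤ ρ((8ρ−7) + max{12, ⌊(v−4ρ)/3⌋}). -/
open Finset in
lemma key_bound (ρ v : ℕ) (hρ : 1 ≤ ρ) (hv : 4 * ρ ≤ v)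
    (B : Finset (Finset (Fin v))) (hB : IsPacking v 4 B) (hM : MaxPPCSize B ρ) :
    B.card ≤ ρ * ((8 * ρ - 7) + max 12 ((v - 4 * ρ) / 3)) := by
  classical
  obtain ⟨⟨P, ⟨hPB, hPdisj⟩, hPcard⟩, hmax⟩ := hM
  obtain ⟨hcard4, hpack⟩ := hB
  set S : Finset (Fin v) := P.biUnion id with hS
  have hsubS : ∀ b ∈ P, b ⊆ S := fun b hb => subset_biUnion_of_mem id hb
  have hScard : S.card = 4 * ρ := by
    rw [hS, Finset.card_biUnion (t := id) hPdisj]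
    rw [Finset.sum_congr rfl (fun b hb => show #(id b) = 4 from hcard4 b (hPB hb))]
    simp [hPcard, mul_comm]
  have hPinter : ∀ b ∈ P, b ∩ S = b := fun b hb => inter_eq_left.mpr (hsubS b hb)
  have hBne : ∀ b ∈ B, b.Nonempty := fun b hb =>
    card_pos.mp (by rw [hcard4 b hb]; norm_num)
  -- every block meets S
  have hmeet : ∀ b ∈ B, (b ∩ S).Nonempty := by
    intro b hb
    by_contra hne
    have hdisj : Disjoint b S := by
      rw [Finset.disjoint_iff_inter_eq_empty]
      exact not_nonempty_iff_eq_empty.mp hne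
    have hbP : b ∉ P := by
      intro hbP
      exact hne (by rw [hPinter b hbP]; exact hBne b hb)
    have hppc : IsPPC B (insert b P) := by
      refine ⟨insert_subset hb hPB, ?_⟩
      intro b₁ hb₁ b₂ hb₂ hne12
      have key : ∀ c ∈ P, Disjoint b c := fun c hc => hdisj.mono_right (hsubS c hc)
      rcases mem_insert.mp hb₁ with h1 | h1 <;> rcases mem_insert.mp hb₂ with h2 | h2
      · exact absurd (h1.trans h2.symm) hne12
      · subst h1; exact key _ h2
      · subst h2; exact (key _ h1).symm
      · exact hPdisj _ h1 _ h2 hne12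
    have := hmax _ hppc
    rw [card_insert_of_notMem hbP, hPcard] at this
    omega
  set B₁ : Finset (Finset (Fin v)) := B.filter (fun b => (b ∩ S).card = 1) with hB₁
  set B₂ : Finset (Finset (Fin v)) := B.filter (fun b => 2 ≤ (b ∩ S).card) with hB₂
  have hcover : B ⊆ B₁ ∪ B₂ := by
    intro b hb
    have h1 : 1 ≤ (b ∩ S).card := card_pos.mpr (hmeet b hb)
    rcases Nat.lt_or_ge (b ∩ S).card 2 with h | h
    · exact mem_union_left _ (mem_filter.mpr ⟨hb, by omega⟩)
    · exact mem_union_right _ (mem_filter.mpr ⟨hb, h⟩)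
  -- ### bound on B₂
  have hPsubB₂ : P ⊆ B₂ := by
    intro b hb
    refine mem_filter.mpr ⟨hPB hb, ?_⟩
    rw [hPinter b hb, hcard4 b (hPB hb)]; norm_num
  -- two common points force equal blocks
  have htwo : ∀ b₁ ∈ B, ∀ b₂ ∈ B, ∀ t : Finset (Fin v), 2 ≤ t.card → t ⊆ b₁ → t ⊆ b₂ → b₁ = b₂ := by
    intro b₁ hb₁ b₂ hb₂ t ht hs₁ hs₂
    by_contra hne
    have h1 := hpack b₁ hb₁ b₂ hb₂ hne
    have h2 : t ⊆ b₁ ∩ b₂ := subset_inter hs₁ hs₂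
    have := card_le_card h2
    omega
  have hB₂bound : B₂.card ≤ ρ * (8 * ρ - 7) := by
    set f : Finset (Fin v) → Finset (Fin v) :=
      fun b => if h : 2 ≤ (b ∩ S).card then (exists_subset_card_eq h).choose else ∅ with hfdef
    have hfspec : ∀ b ∈ B₂, f b ⊆ b ∩ S ∧ (f b).card = 2 := by
      intro b hb
      have h2 : 2 ≤ (b ∩ S).card := (mem_filter.mp hb).2
      have := (exists_subset_card_eq h2).choose_spec
      simpa [hfdef, dif_pos h2] using this
    set X : Finset (Finset (Fin v)) :=
      (S.powersetCard 2).filter (fun t => ∀ q ∈ P, ¬ t ⊆ q) with hX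
    set Y : Finset (Finset (Fin v)) := P.biUnion (fun q => q.powersetCard 2) with hY
    have hYsub : Y ⊆ S.powersetCard 2 := by
      intro t ht
      obtain ⟨q, hq, ht⟩ := mem_biUnion.mp ht
      obtain ⟨hts, htc⟩ := mem_powersetCard.mp ht
      exact mem_powersetCard.mpr ⟨hts.trans (hsubS q hq), htc⟩
    have hYcard : Y.card = 6 * ρ := by
      rw [hY, card_biUnion]
      · rw [Finset.sum_congr rfl (fun q hq => by
          rw [card_powersetCard, hcard4 q (hPB hq)])]
        rw [sum_const, hPcard, smul_eq_mul]
        have h6 : Nat.choose 4 2 = 6 := by decide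
        rw [h6]; ring
      · intro q hq q' hq' hne
        rw [Function.onFun, Finset.disjoint_left]
        intro t ht ht'
        obtain ⟨hts, htc⟩ := mem_powersetCard.mp ht
        obtain ⟨hts', _⟩ := mem_powersetCard.mp ht'
        obtain ⟨a, ha⟩ := card_pos.mp (show 0 < t.card by omega)
        exact (Finset.disjoint_left.mp (hPdisj q hq q' hq' hne)) (hts ha) (hts' ha)
    have hXsub : X ⊆ S.powersetCard 2 \ Y := by
      intro t ht
      obtain ⟨ht1, ht2⟩ := mem_filter.mp ht
      refine mem_sdiff.mpr ⟨ht1, fun hty => ?_⟩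
      obtain ⟨q, hq, htq⟩ := mem_biUnion.mp hty
      exact ht2 q hq (mem_powersetCard.mp htq).1
    have hXcard : X.card ≤ 2 * ρ * (4 * ρ - 1) - 6 * ρ := by
      have h1 : ((S.powersetCard 2) \ Y).card = (S.powersetCard 2).card - Y.card :=
        card_sdiff_of_subset hYsub
      have h2 : (S.powersetCard 2).card = 2 * ρ * (4 * ρ - 1) := by
        rw [card_powersetCard, hScard, Nat.choose_two_right]
        have : 4 * ρ * (4 * ρ - 1) = 2 * (2 * ρ * (4 * ρ - 1)) := by ring
        rw [this, Nat.mul_div_cancel_left _ (by norm_num : (0:ℕ) < 2)]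
      calc X.card ≤ ((S.powersetCard 2) \ Y).card := card_le_card hXsub
        _ = 2 * ρ * (4 * ρ - 1) - 6 * ρ := by rw [h1, h2, hYcard]
    have hmap : ∀ b ∈ B₂ \ P, f b ∈ X := by
      intro b hb
      obtain ⟨hb2, hbP⟩ := mem_sdiff.mp hb
      obtain ⟨hfs, hfc⟩ := hfspec b hb2
      have hbB : b ∈ B := (mem_filter.mp hb2).1
      refine mem_filter.mpr ⟨mem_powersetCard.mpr ⟨hfs.trans (inter_subset_right), hfc⟩, ?_⟩
      intro q hq htq
      have hbq : b ≠ q := fun h => hbP (h ▸ hq)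
      have : b = q := htwo b hbB q (hPB hq) (f b) (le_of_eq hfc.symm)
        (hfs.trans inter_subset_left) htq
      exact hbq this
    have hinjOn : Set.InjOn f (B₂ \ P : Finset (Finset (Fin v))) := by
      intro b hb b' hb' hfe
      simp only [coe_sdiff, Set.mem_diff, mem_coe] at hb hb'
      obtain ⟨hfs, hfc⟩ := hfspec b hb.1
      obtain ⟨hfs', hfc'⟩ := hfspec b' hb'.1
      exact htwo b (mem_filter.mp hb.1).1 b' (mem_filter.mp hb'.1).1 (f b)
        (le_of_eq hfc.symm) (hfs.trans inter_subset_left)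
        (hfe ▸ hfs'.trans inter_subset_left)
    have hsd : (B₂ \ P).card ≤ X.card := card_le_card_of_injOn f hmap hinjOn
    have hsplit : B₂.card ≤ ρ + (B₂ \ P).card := by
      have : B₂ ⊆ P ∪ (B₂ \ P) := by
        intro b hb
        by_cases h : b ∈ P
        · exact mem_union_left _ h
        · exact mem_union_right _ (mem_sdiff.mpr ⟨hb, h⟩)
      calc B₂.card ≤ (P ∪ (B₂ \ P)).card := card_le_card this
        _ ≤ P.card + (B₂ \ P).card := card_union_le _ _
        _ = ρ + (B₂ \ P).card := by rw [hPcard]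
    have harith : ρ + (2 * ρ * (4 * ρ - 1) - 6 * ρ) ≤ ρ * (8 * ρ - 7) := by
      have h1 : (1:ℕ) ≤ 4 * ρ := by omega
      have h2 : (7:ℕ) ≤ 8 * ρ := by omega
      have h3 : 6 * ρ ≤ 2 * ρ * (4 * ρ - 1) := by
        calc 6 * ρ = 2 * ρ * 3 := by ring
          _ ≤ 2 * ρ * (4 * ρ - 1) := Nat.mul_le_mul_left _ (by omega)
      zify [h1, h2, h3]
      nlinarith [sq_nonneg (ρ:ℤ)]
    omega
  -- ### bound on B₁
  have htwo' : ∀ b₁ ∈ B, ∀ b₂ ∈ B, ∀ a c : Fin v, a ≠ c → a ∈ b₁ → a ∈ b₂ →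
      c ∈ b₁ → c ∈ b₂ → b₁ = b₂ := by
    intro b₁ hb₁ b₂ hb₂ a c hac ha₁ ha₂ hc₁ hc₂
    refine htwo b₁ hb₁ b₂ hb₂ {a, c} ?_ ?_ ?_
    · rw [card_insert_of_notMem (by simp [hac]), card_singleton]
    · exact insert_subset ha₁ (singleton_subset_iff.mpr hc₁)
    · exact insert_subset ha₂ (singleton_subset_iff.mpr hc₂)
  have hB₁bound : B₁.card ≤ ρ * max 12 ((v - 4 * ρ) / 3) := by
    have hper : ∀ p ∈ P, (B₁.filter (fun b => b ∩ S ⊆ p)).card ≤ max 12 ((v - 4 * ρ) / 3) := by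
      intro p hp
      set F := B₁.filter (fun b => b ∩ S ⊆ p) with hF
      have hFB : ∀ b ∈ F, b ∈ B := fun b hb => (mem_filter.mp (mem_filter.mp hb).1).1
      have hFcard1 : ∀ b ∈ F, (b ∩ S).card = 1 :=
        fun b hb => (mem_filter.mp (mem_filter.mp hb).1).2
      have hFsingle : ∀ b ∈ F, ∃ x, x ∈ p ∧ b ∩ S = {x} := by
        intro b hb
        obtain ⟨x, hx⟩ := card_eq_one.mp (hFcard1 b hb)
        refine ⟨x, ?_, hx⟩
        exact (mem_filter.mp hb).2 (by rw [hx]; exact mem_singleton_self x)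
      have hFnotP : ∀ b ∈ F, b ∉ P := by
        intro b hb hbP
        have h1 := hFcard1 b hb
        rw [hPinter b hbP, hcard4 b (hFB b hb)] at h1
        omega
      have hcard3 : ∀ b ∈ F, (b \ S).card = 3 := by
        intro b hb
        have h := Finset.card_inter_add_card_sdiff b S
        rw [hFcard1 b hb, hcard4 b (hFB b hb)] at h
        omega
      have hint : ∀ b₁ ∈ F, ∀ b₂ ∈ F, ¬ Disjoint b₁ b₂ := by
        intro b₁ hb₁ b₂ hb₂ hdisj
        have hne : b₁ ≠ b₂ := by
          rintro rfl
          exact (hBne b₁ (hFB b₁ hb₁)).ne_empty (disjoint_self.mp hdisj)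
        obtain ⟨x₁, hx₁p, hx₁⟩ := hFsingle b₁ hb₁
        obtain ⟨x₂, hx₂p, hx₂⟩ := hFsingle b₂ hb₂
        have hq : ∀ b x, b ∩ S = {x} → x ∈ p → ∀ q ∈ P.erase p, Disjoint b q := by
          intro b x hbx hxp q hqe
          obtain ⟨hqp, hqP⟩ := mem_erase.mp hqe
          rw [Finset.disjoint_left]
          intro a hab haq
          have haS : a ∈ S := hsubS q hqP haq
          have h1 : a ∈ b ∩ S := mem_inter.mpr ⟨hab, haS⟩
          rw [hbx, mem_singleton] at h1
          subst h1
          exact (Finset.disjoint_left.mp (hPdisj q hqP p hp hqp)) haq hxp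
        have hd1q : ∀ q ∈ P.erase p, Disjoint b₁ q := hq b₁ x₁ hx₁ hx₁p
        have hd2q : ∀ q ∈ P.erase p, Disjoint b₂ q := hq b₂ x₂ hx₂ hx₂p
        set P' := insert b₁ (insert b₂ (P.erase p)) with hP'
        have hb₁P : b₁ ∉ P := hFnotP b₁ hb₁
        have hb₂P : b₂ ∉ P := hFnotP b₂ hb₂
        have mem_cases : ∀ c ∈ P', c = b₁ ∨ c = b₂ ∨ c ∈ P.erase p := by
          intro c hc
          rcases mem_insert.mp hc with h | h
          · exact Or.inl h
          rcases mem_insert.mp h with h | h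
          · exact Or.inr (Or.inl h)
          · exact Or.inr (Or.inr h)
        have hppc : IsPPC B P' := by
          constructor
          · intro c hc
            rcases mem_cases c hc with h | h | h
            · exact h ▸ hFB _ hb₁
            · exact h ▸ hFB _ hb₂
            · exact hPB (mem_of_mem_erase h)
          · intro c₁ hc₁ c₂ hc₂ hnec
            rcases mem_cases c₁ hc₁ with h₁ | h₁ | h₁ <;>
              rcases mem_cases c₂ hc₂ with h₂ | h₂ | h₂ <;> subst_vars
            · exact absurd rfl hnec
            · exact hdisj
            · exact hd1q _ h₂
            · exact hdisj.symm
            · exact absurd rfl hnec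
            · exact hd2q _ h₂
            · exact (hd1q _ h₁).symm
            · exact (hd2q _ h₁).symm
            · exact hPdisj _ (mem_of_mem_erase h₁) _ (mem_of_mem_erase h₂) hnec
        have hb2ne : b₂ ∉ P.erase p := fun h => hb₂P (mem_of_mem_erase h)
        have hb1ne : b₁ ∉ insert b₂ (P.erase p) := by
          intro h
          rcases mem_insert.mp h with h | h
          · exact hne h
          · exact hb₁P (mem_of_mem_erase h)
        have hcardP' : P'.card = ρ + 1 := by
          rw [hP', card_insert_of_notMem hb1ne, card_insert_of_notMem hb2ne,
            card_erase_of_mem hp, hPcard]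
          omega
        have := hmax P' hppc
        omega
      by_cases hsame : ∀ b₁ ∈ F, ∀ b₂ ∈ F, b₁ ∩ S = b₂ ∩ S
      · rcases F.eq_empty_or_nonempty with hFe | ⟨b₀, hb₀⟩
        · rw [hFe, card_empty]; exact Nat.zero_le _
        obtain ⟨x₀, hx₀p, hx₀⟩ := hFsingle b₀ hb₀
        have hx₀S : x₀ ∈ S := hsubS p hp hx₀p
        have hx₀mem : ∀ b ∈ F, x₀ ∈ b := by
          intro b hb
          have h := (hsame b hb b₀ hb₀).trans hx₀
          have h2 : x₀ ∈ b ∩ S := by rw [h]; exact mem_singleton_self x₀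
          exact (mem_inter.mp h2).1
        have houtdisj : ∀ b₁ ∈ F, ∀ b₂ ∈ F, b₁ ≠ b₂ → Disjoint (b₁ \ S) (b₂ \ S) := by
          intro b₁ hb₁ b₂ hb₂ hne
          rw [Finset.disjoint_left]
          intro a ha₁ ha₂
          obtain ⟨ha₁b, ha₁S⟩ := mem_sdiff.mp ha₁
          obtain ⟨ha₂b, _⟩ := mem_sdiff.mp ha₂
          have hax : a ≠ x₀ := fun h => ha₁S (h ▸ hx₀S)
          exact hne (htwo' b₁ (hFB _ hb₁) b₂ (hFB _ hb₂) a x₀ hax ha₁b ha₂b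
            (hx₀mem b₁ hb₁) (hx₀mem b₂ hb₂))
        have hbu : 3 * F.card ≤ v - 4 * ρ := by
          have h1 : (F.biUnion (fun b => b \ S)).card = 3 * F.card := by
            rw [card_biUnion houtdisj, Finset.sum_congr rfl (fun b hb => hcard3 b hb),
              sum_const, smul_eq_mul]
            ring
          have h2 : F.biUnion (fun b => b \ S) ⊆ Sᶜ := by
            intro a ha
            obtain ⟨b, hb, hab⟩ := mem_biUnion.mp ha
            exact mem_compl.mpr (mem_sdiff.mp hab).2
          have h3 := card_le_card h2
          rw [h1, card_compl, Fintype.card_fin, hScard] at h3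
          exact h3
        have hle : F.card ≤ (v - 4 * ρ) / 3 :=
          (Nat.le_div_iff_mul_le (by norm_num)).mpr (by omega)
        exact le_trans hle (le_max_right _ _)
      · push_neg at hsame
        obtain ⟨b₁, hb₁, b₂, hb₂, hne12⟩ := hsame
        obtain ⟨x₁, hx₁p, hx₁⟩ := hFsingle b₁ hb₁
        obtain ⟨x₂, hx₂p, hx₂⟩ := hFsingle b₂ hb₂
        have hx12 : x₁ ≠ x₂ := by
          intro h
          apply hne12
          rw [hx₁, hx₂, h]
        have hclass : ∀ x ∈ p, (F.filter (fun b => x ∈ b)).card ≤ 3 := by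
          intro x hx
          obtain ⟨t, ht, y, hy, hyx⟩ : ∃ t ∈ F, ∃ y, t ∩ S = {y} ∧ y ≠ x := by
            by_cases h : x = x₁
            · exact ⟨b₂, hb₂, x₂, hx₂, fun hh => hx12 (h.symm.trans hh.symm)⟩
            · exact ⟨b₁, hb₁, x₁, hx₁, fun hh => h hh.symm⟩
          have hxS : x ∈ S := hsubS p hp hx
          have hbxeq : ∀ b ∈ F.filter (fun b => x ∈ b), b ∩ S = {x} := by
            intro b hb
            obtain ⟨hbF, hbx⟩ := mem_filter.mp hb
            obtain ⟨x', hx'p, hx'⟩ := hFsingle b hbF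
            have h1 : x ∈ b ∩ S := mem_inter.mpr ⟨hbx, hxS⟩
            rw [hx', mem_singleton] at h1
            rw [hx', h1]
          set g : Finset (Fin v) → Fin v :=
            fun b => if h : (b ∩ (t \ S)).Nonempty then h.choose else x with hg
          have hgmem : ∀ b ∈ F.filter (fun b => x ∈ b), g b ∈ b ∩ (t \ S) := by
            intro b hb
            obtain ⟨hbF, hbx⟩ := mem_filter.mp hb
            obtain ⟨w, hwb, hwt⟩ := Finset.not_disjoint_iff.mp (hint b hbF t ht)
            have hwS : w ∉ S := by
              intro hwS
              have h1 : w ∈ b ∩ S := mem_inter.mpr ⟨hwb, hwS⟩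
              have h2 : w ∈ t ∩ S := mem_inter.mpr ⟨hwt, hwS⟩
              rw [hbxeq b hb, mem_singleton] at h1
              rw [hy, mem_singleton] at h2
              exact hyx (by rw [← h1, ← h2])
            have hne' : (b ∩ (t \ S)).Nonempty :=
              ⟨w, mem_inter.mpr ⟨hwb, mem_sdiff.mpr ⟨hwt, hwS⟩⟩⟩
            simp only [hg, dif_pos hne']
            exact hne'.choose_spec
          have hcard_t : (t \ S).card = 3 := hcard3 t ht
          have hinj : (F.filter (fun b => x ∈ b)).card ≤ (t \ S).card := by
            apply card_le_card_of_injOn g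
            · intro b hb
              exact mem_of_mem_inter_right (hgmem b hb)
            · intro b hb b' hb' hgbb
              simp only [mem_coe] at hb hb'
              have h1 := hgmem b hb
              have h2 := hgmem b' hb'
              have hgS : g b ∉ S := (mem_sdiff.mp (mem_of_mem_inter_right h1)).2
              have hgx : g b ≠ x := fun h => hgS (h ▸ hxS)
              exact htwo' b (hFB b (mem_filter.mp hb).1) b' (hFB b' (mem_filter.mp hb').1)
                (g b) x hgx (mem_of_mem_inter_left h1)
                (by rw [hgbb]; exact mem_of_mem_inter_left h2)
                (mem_filter.mp hb).2 (mem_filter.mp hb').2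
          omega
        have hFsub : F ⊆ p.biUnion (fun x => F.filter (fun b => x ∈ b)) := by
          intro b hb
          obtain ⟨x, hxp, hbx⟩ := hFsingle b hb
          refine mem_biUnion.mpr ⟨x, hxp, mem_filter.mpr ⟨hb, ?_⟩⟩
          exact mem_of_mem_inter_left (by rw [hbx]; exact mem_singleton_self x)
        have h12 : F.card ≤ 12 := by
          calc F.card ≤ (p.biUnion (fun x => F.filter (fun b => x ∈ b))).card :=
                card_le_card hFsub
            _ ≤ ∑ x ∈ p, (F.filter (fun b => x ∈ b)).card := card_biUnion_le
            _ ≤ ∑ _x ∈ p, 3 := Finset.sum_le_sum hclass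
            _ = 12 := by rw [sum_const, hcard4 p (hPB hp), smul_eq_mul]
        exact le_trans h12 (le_max_left _ _)
    have hB₁sub : B₁ ⊆ P.biUnion (fun p => B₁.filter (fun b => b ∩ S ⊆ p)) := by
      intro b hb
      have h1 := (mem_filter.mp hb).2
      obtain ⟨x, hx⟩ := card_eq_one.mp h1
      have hxS : x ∈ S := (mem_inter.mp
        (show x ∈ b ∩ S by rw [hx]; exact mem_singleton_self x)).2
      obtain ⟨q, hq, hxq⟩ := mem_biUnion.mp (by rw [hS] at hxS; exact hxS)
      refine mem_biUnion.mpr ⟨q, hq, mem_filter.mpr ⟨hb, ?_⟩⟩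
      rw [hx]
      exact singleton_subset_iff.mpr hxq
    calc B₁.card ≤ (P.biUnion (fun p => B₁.filter (fun b => b ∩ S ⊆ p))).card :=
          card_le_card hB₁sub
      _ ≤ ∑ p ∈ P, (B₁.filter (fun b => b ∩ S ⊆ p)).card := card_biUnion_le
      _ ≤ ∑ _p ∈ P, max 12 ((v - 4 * ρ) / 3) := Finset.sum_le_sum hper
      _ = ρ * max 12 ((v - 4 * ρ) / 3) := by rw [sum_const, hPcard, smul_eq_mul]
  calc B.card ≤ (B₁ ∪ B₂).card := card_le_card hcover
    _ ≤ B₁.card + B₂.card := card_union_le _ _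
    _ ≤ ρ * max 12 ((v - 4 * ρ) / 3) + ρ * (8 * ρ - 7) := Nat.add_le_add hB₁bound hB₂bound
    _ = ρ * ((8 * ρ - 7) + max 12 ((v - 4 * ρ) / 3)) := by ring

theorem stmt1 (ρ v : ℕ) (hρ : 1 ≤ ρ) (hv : 4 * ρ ≤ v) :
    beta ρ v 4 ≤ ρ * ((8 * ρ - 7) + max 12 ((v - 4 * ρ) / 3)) := by
  rw [beta]
  rcases Set.eq_empty_or_nonempty {b | ∃ B : Finset (Finset (Fin v)),
      IsPacking v 4 B ∧ MaxPPCSize B ρ ∧ B.card = b} with h | h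
  · rw [h, csSup_empty]
    exact Nat.zero_le _
  · refine csSup_le h ?_
    rintro b ⟨B, hB, hM, rfl⟩
    exact key_bound ρ v hρ hv B hB hM
end

section
/- If v ≥ 4ρ + 36, then β(ρ,v,4) ≤ ρv/3 + 20ρ²/3 − 7ρ. -/
lemma main_count (ρ v : ℕ) (hρ : 1 ≤ ρ) (hv : 4 * ρ + 36 ≤ v)
    (B : Finset (Finset (Fin v))) (hpack : IsPacking v 4 B) (hmps : MaxPPCSize B ρ) :
    3 * B.card + 21 * ρ ≤ ρ * v + 20 * ρ ^ 2 := by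
  classical
  obtain ⟨hcard4, hint⟩ := hpack
  obtain ⟨⟨P, ⟨hPB, hPdisj⟩, hPcard⟩, hmax⟩ := hmps
  set S : Finset (Fin v) := P.biUnion (fun p => p) with hSdef
  have hPsub : ∀ p ∈ P, p ⊆ S := fun p hp => Finset.subset_biUnion_of_mem (fun p => p) hp
  have hScard : S.card = 4 * ρ := by
    rw [hSdef, Finset.card_biUnion (fun p hp q hq hne => hPdisj p hp q hq hne)]
    rw [Finset.sum_congr rfl (fun p hp => hcard4 p (hPB hp))]
    simp [hPcard, mul_comm]
  have hPinterS' : ∀ p ∈ P, p ∩ S = p := fun p hp =>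
    Finset.inter_eq_left.mpr (hPsub p hp)
  -- every block meets S
  have hmeet : ∀ b ∈ B, (b ∩ S).Nonempty := by
    intro b hb
    by_contra h
    rw [Finset.not_nonempty_iff_eq_empty] at h
    have hdisjS : Disjoint b S := Finset.disjoint_iff_inter_eq_empty.mpr h
    have hbP : b ∉ P := by
      intro hbP
      have : b ∩ S = b := hPinterS' b hbP
      rw [this] at h
      have := hcard4 b hb
      rw [h] at this
      simp at this
    have hppc : IsPPC B (insert b P) := by
      constructor
      · exact Finset.insert_subset hb hPB
      · intro b₁ hb₁ b₂ hb₂ hne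
        rcases Finset.mem_insert.mp hb₁ with h₁ | h₁ <;>
          rcases Finset.mem_insert.mp hb₂ with h₂ | h₂
        · exact absurd (h₁.trans h₂.symm) hne
        · exact h₁ ▸ hdisjS.mono_right (hPsub _ h₂)
        · exact h₂ ▸ (hdisjS.mono_right (hPsub _ h₁)).symm
        · exact hPdisj _ h₁ _ h₂ hne
    have := hmax _ hppc
    rw [Finset.card_insert_of_notMem hbP, hPcard] at this
    omega
  -- singleton anchors
  have hsingle : ∀ b ∈ B, (b ∩ S).card = 1 → ∃ x, b ∩ S = {x} :=
    fun b _ h => Finset.card_eq_one.mp h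
  -- blocks with one anchor point are not in P
  have hnotP : ∀ b ∈ B, (b ∩ S).card = 1 → b ∉ P := by
    intro b hb h1 hbP
    rw [hPinterS' b hbP, hcard4 b hb] at h1
    omega
  -- tails
  have htail : ∀ b ∈ B, (b ∩ S).card = 1 → (b \ S).card = 3 := by
    intro b hb h1
    have := Finset.card_inter_add_card_sdiff b S
    rw [h1, hcard4 b hb] at this
    omega
  -- tails at the same anchor are disjoint
  have htdisj : ∀ b ∈ B, ∀ b' ∈ B, b ≠ b' → (b ∩ S).card = 1 → b ∩ S = b' ∩ S →
      Disjoint (b \ S) (b' \ S) := by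
    intro b hb b' hb' hne h1 heq
    obtain ⟨x, hx⟩ := Finset.card_eq_one.mp h1
    have hxS : x ∈ S := (Finset.mem_inter.mp (hx ▸ Finset.mem_singleton_self x)).2
    rw [Finset.disjoint_left]
    intro z hz hz'
    rw [Finset.mem_sdiff] at hz hz'
    have hzbb' : z ∈ b ∩ b' := Finset.mem_inter.mpr ⟨hz.1, hz'.1⟩
    have hxbb' : x ∈ b ∩ b' := by
      have hxb : x ∈ b ∩ S := hx ▸ Finset.mem_singleton_self x
      have hxb' : x ∈ b' ∩ S := (heq ▸ hx) ▸ Finset.mem_singleton_self x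
      exact Finset.mem_inter.mpr ⟨(Finset.mem_inter.mp hxb).1, (Finset.mem_inter.mp hxb').1⟩
    have hzx : z = x := Finset.card_le_one.mp (hint b hb b' hb' hne) _ hzbb' _ hxbb'
    exact hz.2 (hzx ▸ hxS)
  -- the swap lemma: tails at different anchors in the same P-block intersect
  have hswap : ∀ p ∈ P, ∀ b ∈ B, ∀ b' ∈ B,
      (b ∩ S).card = 1 → (b' ∩ S).card = 1 → b ∩ S ⊆ p → b' ∩ S ⊆ p →
      b ∩ S ≠ b' ∩ S → ((b \ S) ∩ (b' \ S)).Nonempty := by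
    intro p hp b hb b' hb' h1 h1' hbp hbp' hne
    by_contra h
    rw [Finset.not_nonempty_iff_eq_empty] at h
    obtain ⟨x, hx⟩ := Finset.card_eq_one.mp h1
    obtain ⟨y, hy⟩ := Finset.card_eq_one.mp h1'
    have hxy : x ≠ y := fun hxyeq => hne (by rw [hx, hy, hxyeq])
    have hbb'ne : b ≠ b' := fun hbeq => hne (by rw [hbeq])
    -- b and b' are disjoint
    have hdbb' : Disjoint b b' := by
      rw [Finset.disjoint_left]
      intro z hzb hzb'
      by_cases hzS : z ∈ S
      · have h1 : z ∈ b ∩ S := Finset.mem_inter.mpr ⟨hzb, hzS⟩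
        have h2 : z ∈ b' ∩ S := Finset.mem_inter.mpr ⟨hzb', hzS⟩
        rw [hx, Finset.mem_singleton] at h1
        rw [hy, Finset.mem_singleton] at h2
        exact hxy (h1 ▸ h2 ▸ rfl)
      · have : z ∈ (b \ S) ∩ (b' \ S) := by
          simp only [Finset.mem_inter, Finset.mem_sdiff]
          exact ⟨⟨hzb, hzS⟩, ⟨hzb', hzS⟩⟩
        rw [h] at this
        exact absurd this (Finset.notMem_empty z)
    -- each of b, b' is disjoint from every block of P other than p
    have hdP : ∀ c ∈ B, c ∩ S ⊆ p → ∀ q ∈ P, q ≠ p → Disjoint c q := by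
      intro c hc hcp q hq hqp
      rw [Finset.disjoint_left]
      intro z hzc hzq
      have hzS : z ∈ S := hPsub q hq hzq
      have hzp : z ∈ p := hcp (Finset.mem_inter.mpr ⟨hzc, hzS⟩)
      exact Finset.disjoint_left.mp (hPdisj q hq p hp hqp) hzq hzp
    -- b and b' are not old blocks
    have hbnotP : b ∉ P.erase p := fun hmem => hnotP b hb h1 (Finset.mem_of_mem_erase hmem)
    have hb'notP : b' ∉ P.erase p := fun hmem => hnotP b' hb' h1' (Finset.mem_of_mem_erase hmem)
    -- build the bigger PPC
    set Q : Finset (Finset (Fin v)) := insert b (insert b' (P.erase p)) with hQdef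
    have hQppc : IsPPC B Q := by
      constructor
      · intro c hc
        rcases Finset.mem_insert.mp hc with h' | hc
        · exact h' ▸ hb
        rcases Finset.mem_insert.mp hc with h' | hc
        · exact h' ▸ hb'
        · exact hPB (Finset.mem_of_mem_erase hc)
      · intro c₁ hc₁ c₂ hc₂ hcne
        have key : ∀ c, c ∈ Q → c = b ∨ c = b' ∨ (c ∈ P ∧ c ≠ p) := by
          intro c hc
          rcases Finset.mem_insert.mp hc with h' | hc
          · exact Or.inl h'
          rcases Finset.mem_insert.mp hc with h' | hc
          · exact Or.inr (Or.inl h')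
          · exact Or.inr (Or.inr ⟨Finset.mem_of_mem_erase hc, Finset.ne_of_mem_erase hc⟩)
        have hdb : ∀ q ∈ P, q ≠ p → Disjoint b q := hdP b hb hbp
        have hdb' : ∀ q ∈ P, q ≠ p → Disjoint b' q := hdP b' hb' hbp'
        rcases key c₁ hc₁ with rfl | rfl | ⟨hq1, hq1p⟩ <;>
          rcases key c₂ hc₂ with h2 | h2 | h2
        · exact absurd h2.symm hcne
        · exact h2 ▸ hdbb'
        · exact (hdb _ h2.1 h2.2)
        · exact h2 ▸ hdbb'.symm
        · exact absurd h2.symm hcne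
        · exact (hdb' _ h2.1 h2.2)
        · rw [h2]; exact (hdb _ hq1 hq1p).symm
        · rw [h2]; exact (hdb' _ hq1 hq1p).symm
        · exact hPdisj _ hq1 _ h2.1 hcne
    have hQcard : Q.card = ρ + 1 := by
      rw [hQdef]
      rw [Finset.card_insert_of_notMem, Finset.card_insert_of_notMem hb'notP,
        Finset.card_erase_of_mem hp, hPcard]
      · omega
      · simp only [Finset.mem_insert]
        push_neg
        exact ⟨hbb'ne, hbnotP⟩
    have := hmax Q hQppc
    omega
  -- pieces
  set B1 : Finset (Finset (Fin v)) := B.filter (fun b => (b ∩ S).card = 1) with hB1def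
  set B2 : Finset (Finset (Fin v)) := B.filter (fun b => b ∉ P ∧ 2 ≤ (b ∩ S).card) with hB2def
  have hsplit : B ⊆ P ∪ B1 ∪ B2 := by
    intro b hb
    have h1 := hmeet b hb
    rw [← Finset.card_pos] at h1
    simp only [Finset.mem_union, hB1def, hB2def, Finset.mem_filter]
    by_cases hbP : b ∈ P
    · exact Or.inl (Or.inl hbP)
    · rcases Nat.lt_or_ge (b ∩ S).card 2 with h | h
      · exact Or.inl (Or.inr ⟨hb, by omega⟩)
      · exact Or.inr ⟨hb, hbP, h⟩
  -- bound on B2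
  have hB2card : B2.card + 8 * ρ ≤ 8 * ρ ^ 2 := by
    set crossPairs : Finset (Finset (Fin v)) :=
      (S.powersetCard 2).filter (fun t => ∀ p ∈ P, ¬ t ⊆ p) with hcpdef
    have hex : ∀ b ∈ B2, ∃ t, t ∈ crossPairs ∧ t ⊆ b := by
      intro b hb
      rw [hB2def, Finset.mem_filter] at hb
      obtain ⟨hbB, hbP, h2⟩ := hb
      obtain ⟨t, ht, htc⟩ := Finset.exists_subset_card_eq h2
      refine ⟨t, ?_, fun z hz => (Finset.mem_inter.mp (ht hz)).1⟩
      rw [hcpdef, Finset.mem_filter, Finset.mem_powersetCard]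
      refine ⟨⟨fun z hz => (Finset.mem_inter.mp (ht hz)).2, htc⟩, ?_⟩
      intro p hp htp
      have hbp : b ≠ p := fun h => hbP (h ▸ hp)
      have hle := hint b hbB p (hPB hp) hbp
      have htsub : t ⊆ b ∩ p :=
        fun z hz => Finset.mem_inter.mpr ⟨(Finset.mem_inter.mp (ht hz)).1, htp hz⟩
      have := Finset.card_le_card htsub
      omega
    set f : Finset (Fin v) → Finset (Fin v) :=
      fun b => if h : ∃ t, t ∈ crossPairs ∧ t ⊆ b then h.choose else ∅ with hfdef
    have hf : ∀ b ∈ B2, f b ∈ crossPairs ∧ f b ⊆ b := by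
      intro b hb
      have h := hex b hb
      rw [hfdef]
      simp only [dif_pos h]
      exact h.choose_spec
    have hB2le : B2.card ≤ crossPairs.card := by
      apply Finset.card_le_card_of_injOn f (fun b hb => (hf b hb).1)
      intro b hb b' hb' heq
      rw [Finset.mem_coe] at hb hb'
      by_contra hne
      have hsub : f b ⊆ b ∩ b' :=
        fun z hz => Finset.mem_inter.mpr ⟨(hf b hb).2 hz, (hf b' hb').2 (heq ▸ hz)⟩
      have hcard2 : (f b).card = 2 :=
        (Finset.mem_powersetCard.mp (Finset.mem_filter.mp (hf b hb).1).1).2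
      have h1 := Finset.card_le_card hsub
      have hbB : b ∈ B := (Finset.mem_filter.mp (hB2def ▸ hb)).1
      have hbB' : b' ∈ B := (Finset.mem_filter.mp (hB2def ▸ hb')).1
      have := hint b hbB b' hbB' hne
      omega
    set inner : Finset (Finset (Fin v)) := P.biUnion (fun p => p.powersetCard 2) with hindef
    have hinnercard : inner.card = 6 * ρ := by
      rw [hindef, Finset.card_biUnion]
      · rw [Finset.sum_congr rfl
          (fun p hp => by rw [Finset.card_powersetCard, hcard4 p (hPB hp)])]
        rw [Finset.sum_const, hPcard]
        norm_num [Nat.choose]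
        ring
      · intro p hp q hq hne
        rw [Function.onFun, Finset.disjoint_left]
        intro t htp htq
        have h1 := Finset.mem_powersetCard.mp htp
        have h2 := Finset.mem_powersetCard.mp htq
        have hsub : t ⊆ p ∩ q := fun z hz => Finset.mem_inter.mpr ⟨h1.1 hz, h2.1 hz⟩
        have hd := hPdisj p hp q hq hne
        rw [Finset.disjoint_iff_inter_eq_empty] at hd
        rw [hd, Finset.subset_empty] at hsub
        rw [hsub] at h1
        simp at h1
    have hinnersub : inner ⊆ S.powersetCard 2 := by
      intro t ht
      obtain ⟨p, hp, htp⟩ := Finset.mem_biUnion.mp (hindef ▸ ht)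
      have h := Finset.mem_powersetCard.mp htp
      exact Finset.mem_powersetCard.mpr ⟨h.1.trans (hPsub p hp), h.2⟩
    have hcrosseq : crossPairs = S.powersetCard 2 \ inner := by
      ext t
      rw [hcpdef, hindef]
      simp only [Finset.mem_filter, Finset.mem_sdiff, Finset.mem_biUnion]
      constructor
      · rintro ⟨ht, hall⟩
        refine ⟨ht, ?_⟩
        rintro ⟨p, hp, htp⟩
        exact hall p hp (Finset.mem_powersetCard.mp htp).1
      · rintro ⟨ht, hnone⟩
        refine ⟨ht, fun p hp htp => hnone ⟨p, hp, Finset.mem_powersetCard.mpr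
          ⟨htp, (Finset.mem_powersetCard.mp ht).2⟩⟩⟩
    have hsum : crossPairs.card + inner.card = (S.powersetCard 2).card := by
      rw [hcrosseq]
      exact Finset.card_sdiff_add_card_eq_card hinnersub
    rw [Finset.card_powersetCard, hScard, hinnercard] at hsum
    have hch : (4 * ρ).choose 2 + 2 * ρ = 8 * ρ ^ 2 := by
      obtain ⟨k, rfl⟩ : ∃ k, ρ = k + 1 := ⟨ρ - 1, by omega⟩
      rw [Nat.choose_two_right]
      have hle2 : 2 * (k + 1) ≤ 8 * (k + 1) ^ 2 := by nlinarith
      have h1 : 4 * (k + 1) * (4 * (k + 1) - 1) = 2 * (8 * (k + 1) ^ 2 - 2 * (k + 1)) := by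
        zify [hle2, show (1:ℕ) ≤ 4 * (k + 1) by omega]
        ring
      rw [h1, Nat.mul_div_cancel_left _ (by norm_num : 0 < 2)]
      omega
    linarith
  -- bound on B1
  have hB1card : 3 * B1.card + 4 * (ρ * ρ) ≤ ρ * v := by
    set T : Finset (Fin v) → Finset (Finset (Fin v)) :=
      fun p => B1.filter (fun b => b ∩ S ⊆ p) with hTdef
    have hTmem : ∀ p : Finset (Fin v), ∀ b ∈ T p, b ∈ B ∧ (b ∩ S).card = 1 ∧ b ∩ S ⊆ p := by
      intro p b hb
      rw [hTdef, Finset.mem_filter, hB1def, Finset.mem_filter] at hb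
      exact ⟨hb.1.1, hb.1.2, hb.2⟩
    have hTbound : ∀ p ∈ P, 3 * (T p).card + 4 * ρ ≤ v := by
      intro p hp
      by_cases hcase : ∀ b ∈ T p, ∀ b' ∈ T p, b ∩ S = b' ∩ S
      · -- all anchored at the same point: tails are pairwise disjoint
        have hdisj : ∀ b ∈ T p, ∀ b' ∈ T p, b ≠ b' → Disjoint (b \ S) (b' \ S) := by
          intro b hb b' hb' hne
          obtain ⟨hbB, hb1, _⟩ := hTmem p b hb
          obtain ⟨hbB', _, _⟩ := hTmem p b' hb'
          exact htdisj b hbB b' hbB' hne hb1 (hcase b hb b' hb')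
        have hcardU : ((T p).biUnion (fun b => b \ S)).card = 3 * (T p).card := by
          rw [Finset.card_biUnion hdisj]
          rw [Finset.sum_congr rfl (fun b hb => htail b (hTmem p b hb).1 (hTmem p b hb).2.1)]
          rw [Finset.sum_const, smul_eq_mul, mul_comm]
        have hsub : (T p).biUnion (fun b => b \ S) ⊆ Finset.univ \ S := by
          intro z hz
          obtain ⟨b, _, hzb⟩ := Finset.mem_biUnion.mp hz
          exact Finset.mem_sdiff.mpr ⟨Finset.mem_univ z, (Finset.mem_sdiff.mp hzb).2⟩
        have hle := Finset.card_le_card hsub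
        rw [hcardU, Finset.card_sdiff_of_subset (Finset.subset_univ S), Finset.card_univ,
          Fintype.card_fin, hScard] at hle
        omega
      · -- two different anchors exist
        push_neg at hcase
        obtain ⟨b₀, hb₀, b₁, hb₁, hne01⟩ := hcase
        have hanchor : ∀ x ∈ p, ((T p).filter (fun b => b ∩ S = {x})).card ≤ 3 := by
          intro x hx
          obtain ⟨c, hc, hcx⟩ : ∃ c, c ∈ T p ∧ c ∩ S ≠ {x} := by
            by_cases h0 : b₀ ∩ S = {x}
            · exact ⟨b₁, hb₁, fun h => hne01 (by rw [h0, h])⟩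
            · exact ⟨b₀, hb₀, h0⟩
          obtain ⟨hcB, hc1, hcp⟩ := hTmem p c hc
          have hv0 : 0 < v := by omega
          set g : Finset (Fin v) → Fin v :=
            fun b => if h : ((b \ S) ∩ (c \ S)).Nonempty then h.choose else ⟨0, hv0⟩ with hgdef
          have hg : ∀ b ∈ (T p).filter (fun b => b ∩ S = {x}), g b ∈ (b \ S) ∩ (c \ S) := by
            intro b hb
            obtain ⟨hbT, hbx⟩ := Finset.mem_filter.mp hb
            obtain ⟨hbB, hb1, hbp⟩ := hTmem p b hbT
            have hne' : b ∩ S ≠ c ∩ S := by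
              rw [hbx]; exact fun h => hcx h.symm
            have hnonempty := hswap p hp b hbB c hcB hb1 hc1 hbp hcp hne'
            rw [hgdef]
            simp only [dif_pos hnonempty]
            exact hnonempty.choose_spec
          have hinj : Set.InjOn g ((T p).filter (fun b => b ∩ S = {x})) := by
            intro b hb b' hb' heq
            rw [Finset.mem_coe] at hb hb'
            by_contra hne
            obtain ⟨hbT, hbx⟩ := Finset.mem_filter.mp hb
            obtain ⟨hbT', hbx'⟩ := Finset.mem_filter.mp hb'
            obtain ⟨hbB, hb1, _⟩ := hTmem p b hbT
            obtain ⟨hbB', _, _⟩ := hTmem p b' hbT'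
            have hd := htdisj b hbB b' hbB' hne hb1 (by rw [hbx, hbx'])
            have h1 := (Finset.mem_inter.mp (hg b (Finset.mem_filter.mpr ⟨hbT, hbx⟩))).1
            have h2 := (Finset.mem_inter.mp (hg b' (Finset.mem_filter.mpr ⟨hbT', hbx'⟩))).1
            rw [heq] at h1
            exact Finset.disjoint_left.mp hd h1 h2
          have hle := Finset.card_le_card_of_injOn g
            (fun b hb => (Finset.mem_inter.mp (hg b hb)).2) hinj
          rw [htail c hcB hc1] at hle
          exact hle
        have hTsub : T p ⊆ p.biUnion (fun x => (T p).filter (fun b => b ∩ S = {x})) := by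
          intro b hb
          obtain ⟨hbB, hb1, hbp⟩ := hTmem p b hb
          obtain ⟨x, hxeq⟩ := Finset.card_eq_one.mp hb1
          have hxp : x ∈ p := hbp (hxeq ▸ Finset.mem_singleton_self x)
          exact Finset.mem_biUnion.mpr ⟨x, hxp, Finset.mem_filter.mpr ⟨hb, hxeq⟩⟩
        have hle : (T p).card ≤ 12 := by
          calc (T p).card ≤ (p.biUnion (fun x => (T p).filter (fun b => b ∩ S = {x}))).card :=
                Finset.card_le_card hTsub
          _ ≤ ∑ x ∈ p, ((T p).filter (fun b => b ∩ S = {x})).card := Finset.card_biUnion_le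
          _ ≤ ∑ _x ∈ p, 3 := Finset.sum_le_sum hanchor
          _ = 12 := by rw [Finset.sum_const, hcard4 p (hPB hp), smul_eq_mul]
        omega
    have hB1sub : B1 ⊆ P.biUnion T := by
      intro b hb
      have hb' := hb
      rw [hB1def, Finset.mem_filter] at hb'
      obtain ⟨x, hxeq⟩ := Finset.card_eq_one.mp hb'.2
      have hxS : x ∈ S := (Finset.mem_inter.mp (hxeq ▸ Finset.mem_singleton_self x)).2
      obtain ⟨p, hp, hxp⟩ := Finset.mem_biUnion.mp (hSdef ▸ hxS)
      refine Finset.mem_biUnion.mpr ⟨p, hp, ?_⟩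
      rw [hTdef, Finset.mem_filter]
      exact ⟨hb, by rw [hxeq]; exact Finset.singleton_subset_iff.mpr hxp⟩
    have h1 : B1.card ≤ ∑ p ∈ P, (T p).card :=
      le_trans (Finset.card_le_card hB1sub) Finset.card_biUnion_le
    have h2 : ∑ p ∈ P, (3 * (T p).card + 4 * ρ) ≤ ∑ _p ∈ P, v :=
      Finset.sum_le_sum hTbound
    rw [Finset.sum_add_distrib, ← Finset.mul_sum, Finset.sum_const, Finset.sum_const,
      hPcard, smul_eq_mul, smul_eq_mul] at h2
    nlinarith
  have hcard_split : B.card ≤ ρ + B1.card + B2.card := by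
    calc B.card ≤ (P ∪ B1 ∪ B2).card := Finset.card_le_card hsplit
    _ ≤ (P ∪ B1).card + B2.card := Finset.card_union_le _ _
    _ ≤ P.card + B1.card + B2.card := by
        have := Finset.card_union_le P B1; omega
    _ = ρ + B1.card + B2.card := by rw [hPcard]
  nlinarith [sq_nonneg ρ]

theorem stmt2 (ρ v : ℕ) (hρ : 1 ≤ ρ) (hv : 4 * ρ + 36 ≤ v) :
    (beta ρ v 4 : ℚ) ≤ (ρ : ℚ) * v / 3 + 20 * (ρ : ℚ) ^ 2 / 3 - 7 * ρ := by
  have hK : 21 * ρ ≤ ρ * v + 20 * ρ ^ 2 := by nlinarith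
  have hbeta : beta ρ v 4 ≤ (ρ * v + 20 * ρ ^ 2 - 21 * ρ) / 3 := by
    apply csSup_le'
    rintro n ⟨B, hp, hm, rfl⟩
    have := main_count ρ v hρ hv B hp hm
    omega
  have h1 : (beta ρ v 4 : ℚ) ≤ (((ρ * v + 20 * ρ ^ 2 - 21 * ρ) / 3 : ℕ) : ℚ) := by
    exact_mod_cast hbeta
  have h2 : (((ρ * v + 20 * ρ ^ 2 - 21 * ρ) / 3 : ℕ) : ℚ) ≤
      ((ρ * v + 20 * ρ ^ 2 - 21 * ρ : ℕ) : ℚ) / 3 := Nat.cast_div_le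
  have h3 : ((ρ * v + 20 * ρ ^ 2 - 21 * ρ : ℕ) : ℚ) =
      (ρ : ℚ) * v + 20 * (ρ : ℚ) ^ 2 - 21 * ρ := by
    rw [Nat.cast_sub hK]
    push_cast
    ring
  rw [h3] at h2
  linarith
end

section
/- In a (v,4)-packing with a maximum PPC 𝒫 of size ρ, for any point x contained in a block of 𝒫, the inequalities 3t_x³ + 2t_x² + t_x¹ ≤ v − 4ρ and t_x² + 2t_x¹ + 3t_x⁰ ≤ 4(ρ−1) hold, where t_x^i is the number of blocks not in 𝒫 containing x and exactly i points outside the blocks of 𝒫. -/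
theorem stmt3 (v ρ : ℕ) (B : Finset (Finset (Fin v)))
    (hpack : IsPacking v 4 B)
    (P : Finset (Finset (Fin v)))
    (hPPC : IsPPC B P) (hcard : P.card = ρ)
    (hmax : ∀ Q, IsPPC B Q → Q.card ≤ ρ)
    (t : Fin v → ℕ → ℕ)
    (ht : ∀ p i, t p i =
      ((B \ P).filter (fun b => p ∈ b ∧ (b \ P.sup id).card = i)).card)
    (x : Fin v) (hx : x ∈ P.sup id) :
    3 * t x 3 + 2 * t x 2 + t x 1 ≤ v - 4 * ρ ∧
      t x 2 + 2 * t x 1 + 3 * t x 0 ≤ 4 * (ρ - 1) := by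
  set S := P.sup id with hS
  have hSb : S = P.biUnion id := Finset.sup_eq_biUnion P id
  obtain ⟨p, hpP, hxp⟩ : ∃ p ∈ P, x ∈ p := by
    rw [hSb, Finset.mem_biUnion] at hx; simpa using hx
  have hcard4 : ∀ b ∈ B, b.card = 4 := hpack.1
  have hSc : S.card = 4 * ρ := by
    rw [hSb, Finset.card_biUnion (t := id) (fun b hb c hc hbc => hPPC.2 b hb c hc hbc)]
    calc ∑ u ∈ P, (id u).card = ∑ _u ∈ P, 4 :=
          Finset.sum_congr rfl (fun b hb => hcard4 b (hPPC.1 hb))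
      _ = 4 * ρ := by simp [hcard, mul_comm]
  set F := (B \ P).filter (fun b => x ∈ b) with hF
  have hFsub : ∀ b ∈ F, b ∈ B ∧ b ∉ P ∧ x ∈ b := by
    intro b hb
    simp only [hF, Finset.mem_filter, Finset.mem_sdiff] at hb
    tauto
  have hkey : ∀ b₁ ∈ F, ∀ b₂ ∈ F, b₁ ≠ b₂ → ∀ y, y ∈ b₁ → y ∈ b₂ → y = x := by
    intro b₁ h₁ b₂ h₂ hne y hy₁ hy₂
    obtain ⟨hB₁, _, hx₁⟩ := hFsub b₁ h₁
    obtain ⟨hB₂, _, hx₂⟩ := hFsub b₂ h₂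
    exact Finset.card_le_one.1 (hpack.2 b₁ hB₁ b₂ hB₂ hne) y
      (Finset.mem_inter.2 ⟨hy₁, hy₂⟩) x (Finset.mem_inter.2 ⟨hx₁, hx₂⟩)
  have ht' : ∀ i, t x i = (F.filter (fun b => (b \ S).card = i)).card := by
    intro i; rw [ht, hF, Finset.filter_filter]
  have hle3 : ∀ b ∈ F, (b \ S).card ≤ 3 ∧ (b ∩ S).card + (b \ S).card = 4 := by
    intro b hb
    obtain ⟨hB, _, hxb⟩ := hFsub b hb
    have hsub : b \ S ⊆ b.erase x := by
      intro y hy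
      rw [Finset.mem_sdiff] at hy
      exact Finset.mem_erase.2 ⟨fun h => hy.2 (h ▸ hx), hy.1⟩
    have h1 := Finset.card_le_card hsub
    have h2 : (b.erase x).card = 3 := by
      rw [Finset.card_erase_of_mem hxb, hcard4 b hB]
    have h3 : (b \ S).card + (b ∩ S).card = b.card := Finset.card_sdiff_add_card_inter b S
    rw [hcard4 b hB] at h3
    omega
  have hfib : ∀ (f : ℕ → ℕ), ∑ b ∈ F, f (b \ S).card = ∑ i ∈ Finset.range 4, f i * t x i := by
    intro f
    rw [← Finset.sum_fiberwise_of_maps_to (g := fun b => (b \ S).card)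
      (t := Finset.range 4) (fun b hb => Finset.mem_range.2
        (show (b \ S).card < 4 by have := (hle3 b hb).1; omega)) (fun b => f (b \ S).card)]
    refine Finset.sum_congr rfl fun i _ => ?_
    rw [ht' i]
    rw [Finset.sum_congr rfl (fun b hb => by rw [(Finset.mem_filter.1 hb).2]),
      Finset.sum_const, smul_eq_mul, mul_comm]
  constructor
  · -- first inequality
    have hdisj1 : ∀ b₁ ∈ F, ∀ b₂ ∈ F, b₁ ≠ b₂ → Disjoint (b₁ \ S) (b₂ \ S) := by
      intro b₁ h₁ b₂ h₂ hne
      rw [Finset.disjoint_left]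
      intro y hy₁ hy₂
      rw [Finset.mem_sdiff] at hy₁ hy₂
      have := hkey b₁ h₁ b₂ h₂ hne y hy₁.1 hy₂.1
      exact hy₁.2 (this ▸ hx)
    have hsum1 : ∑ b ∈ F, (b \ S).card ≤ v - 4 * ρ := by
      rw [← Finset.card_biUnion hdisj1]
      have hsub : F.biUnion (fun b => b \ S) ⊆ Finset.univ \ S := by
        intro y hy
        simp only [Finset.mem_biUnion, Finset.mem_sdiff] at hy ⊢
        obtain ⟨b, hb, hy1, hy2⟩ := hy
        exact ⟨Finset.mem_univ y, hy2⟩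
      calc _ ≤ (Finset.univ \ S).card := Finset.card_le_card hsub
        _ = v - 4 * ρ := by
          rw [Finset.card_sdiff_of_subset (Finset.subset_univ S), hSc]; simp
    have := hfib id
    simp only [id_eq] at this
    rw [this] at hsum1
    simp only [Finset.sum_range_succ, Finset.sum_range_zero] at hsum1
    omega
  · -- second inequality
    have hbne : ∀ b ∈ F, b ≠ p := fun b hb h => (hFsub b hb).2.1 (h ▸ hpP)
    have hsub2 : ∀ b ∈ F, (b ∩ S).erase x ⊆ S \ p := by
      intro b hb y hy
      obtain ⟨hB, hbP, hxb⟩ := hFsub b hb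
      rw [Finset.mem_erase, Finset.mem_inter] at hy
      rw [Finset.mem_sdiff]
      refine ⟨hy.2.2, fun hyp => hy.1 ?_⟩
      exact Finset.card_le_one.1 (hpack.2 b hB p (hPPC.1 hpP) (hbne b hb)) y
        (Finset.mem_inter.2 ⟨hy.2.1, hyp⟩) x (Finset.mem_inter.2 ⟨hxb, hxp⟩)
    have hdisj2 : ∀ b₁ ∈ F, ∀ b₂ ∈ F, b₁ ≠ b₂ →
        Disjoint ((b₁ ∩ S).erase x) ((b₂ ∩ S).erase x) := by
      intro b₁ h₁ b₂ h₂ hne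
      rw [Finset.disjoint_left]
      intro y hy₁ hy₂
      rw [Finset.mem_erase, Finset.mem_inter] at hy₁ hy₂
      exact hy₁.1 (hkey b₁ h₁ b₂ h₂ hne y hy₁.2.1 hy₂.2.1)
    have hterm : ∀ b ∈ F, ((b ∩ S).erase x).card = 3 - (b \ S).card := by
      intro b hb
      obtain ⟨hB, _, hxb⟩ := hFsub b hb
      have h1 : x ∈ b ∩ S := Finset.mem_inter.2 ⟨hxb, hx⟩
      have h2 := Finset.card_erase_of_mem h1
      have := hle3 b hb
      omega
    have hρ1 : 1 ≤ ρ := by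
      rw [← hcard]
      exact Finset.card_pos.2 ⟨p, hpP⟩
    have hpsub : p ⊆ S := by
      rw [hSb]; exact Finset.subset_biUnion_of_mem id hpP
    have hsum2 : ∑ b ∈ F, (3 - (b \ S).card) ≤ 4 * (ρ - 1) := by
      rw [← Finset.sum_congr rfl hterm, ← Finset.card_biUnion hdisj2]
      have hsub : F.biUnion (fun b => (b ∩ S).erase x) ⊆ S \ p := by
        intro y hy
        rw [Finset.mem_biUnion] at hy
        obtain ⟨b, hb, hyb⟩ := hy
        exact hsub2 b hb hyb
      calc _ ≤ (S \ p).card := Finset.card_le_card hsub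
        _ = 4 * (ρ - 1) := by
          rw [Finset.card_sdiff_of_subset hpsub, hSc, hcard4 p (hPPC.1 hpP)]
          omega
    have := hfib (fun i => 3 - i)
    rw [this] at hsum2
    simp only [Finset.sum_range_succ, Finset.sum_range_zero] at hsum2
    omega
end

section
/- In a (v,4)-packing with a maximum PPC 𝒫 of size ρ, if B = {w,x,y,z} ∈ 𝒫 satisfies max{t_w³, t_x³, t_y³, t_z³} ≥ 4, then c_w + c_x + c_y + c_z ≤ v/3 + 5ρ − 19/3, where c_p = t_p³ + t_p²/2 + t_p¹/3 + t_p⁰/4. -/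
theorem stmt7 (v ρ : ℕ) (B : Finset (Finset (Fin v)))
    (hpack : IsPacking v 4 B)
    (P : Finset (Finset (Fin v)))
    (hPPC : IsPPC B P) (hcard : P.card = ρ)
    (hmax : ∀ Q, IsPPC B Q → Q.card ≤ ρ)
    (t : Fin v → ℕ → ℕ)
    (ht : ∀ p i, t p i =
      ((B \ P).filter (fun b => p ∈ b ∧ (b \ P.sup id).card = i)).card)
    (c : Fin v → ℚ)
    (hc : ∀ p, c p = (t p 3 : ℚ) + (t p 2 : ℚ) / 2 + (t p 1 : ℚ) / 3
      + (t p 0 : ℚ) / 4)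
    (w x y z : Fin v)
    (hB : ({w, x, y, z} : Finset (Fin v)) ∈ P)
    (hbig : 4 ≤ max (max (t w 3) (t x 3)) (max (t y 3) (t z 3))) :
    c w + c x + c y + c z ≤ (v : ℚ) / 3 + 5 * ρ - 19 / 3 := by
  classical
  obtain ⟨hBcard, hBint⟩ := hpack
  obtain ⟨hPB, hPdisj⟩ := hPPC
  set S : Finset (Fin v) := P.sup id with hS
  set B₀ : Finset (Fin v) := {w, x, y, z} with hB₀def
  have hB₀P : B₀ ∈ P := hB
  have hB₀B : B₀ ∈ B := hPB hB₀P
  have hB₀card : B₀.card = 4 := hBcard _ hB₀B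
  have hρ : 1 ≤ ρ := by
    rw [← hcard]; exact Finset.card_pos.mpr ⟨B₀, hB₀P⟩
  have hsubS : ∀ b ∈ P, b ⊆ S := fun b hb => Finset.le_sup (f := id) hb
  have hScard : S.card = 4 * ρ := by
    rw [hS, Finset.sup_eq_biUnion,
      Finset.card_biUnion (t := id) (fun a ha b hb hab => hPdisj a ha b hb hab)]
    simp only [id_eq]
    rw [Finset.sum_congr rfl (fun b hb => hBcard b (hPB hb))]
    simp [hcard, Nat.mul_comm]
  have two_le : ∀ (a b : Fin v) (s : Finset (Fin v)), a ∈ s → b ∈ s → a ≠ b → 2 ≤ s.card :=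
    fun a b s ha hb hab => Finset.one_lt_card.mpr ⟨a, ha, b, hb, hab⟩
  -- intersection of an outside block through p ∈ B₀ with B₀ is {p}
  have hblock : ∀ p ∈ B₀, ∀ b ∈ B \ P, p ∈ b → b ∩ B₀ = {p} := by
    intro p hp b hb hpb
    have hbB : b ∈ B := (Finset.mem_sdiff.mp hb).1
    have hbP : b ∉ P := (Finset.mem_sdiff.mp hb).2
    have hne : b ≠ B₀ := fun h => hbP (h ▸ hB₀P)
    have h1 : (b ∩ B₀).card ≤ 1 := hBint b hbB B₀ hB₀B hne
    apply Finset.eq_singleton_iff_unique_mem.mpr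
    refine ⟨Finset.mem_inter.mpr ⟨hpb, hp⟩, fun r hr => ?_⟩
    by_contra hrp
    exact absurd (two_le r p _ hr (Finset.mem_inter.mpr ⟨hpb, hp⟩) hrp) (by omega)
  have htt : ∀ p i, (((B \ P).filter (fun b => p ∈ b)).filter
      (fun b => (b \ S).card = i)).card = t p i := by
    intro p i
    rw [ht p i]
    congr 1
    ext b
    simp only [Finset.mem_filter]
    tauto
  have hmaps : ∀ p ∈ B₀, ∀ b ∈ (B \ P).filter (fun b => p ∈ b),
      (b \ S).card ∈ Finset.range 4 := by
    intro p hp b hb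
    obtain ⟨hbBP, hpb⟩ := Finset.mem_filter.mp hb
    have hpS : p ∈ S := hsubS B₀ hB₀P hp
    have hsub : b \ S ⊆ b.erase p := by
      intro r hr
      have hr' := Finset.mem_sdiff.mp hr
      exact Finset.mem_erase.mpr ⟨fun h => hr'.2 (h ▸ hpS), hr'.1⟩
    have h1 := Finset.card_le_card hsub
    have hbe : (b.erase p).card = 3 := by
      rw [Finset.card_erase_of_mem hpb, hBcard b (Finset.mem_sdiff.mp hbBP).1]
    rw [Finset.mem_range]; omega
  -- constraint (i)
  have key1 : ∀ p ∈ B₀, 3 * t p 3 + 2 * t p 2 + t p 1 + 4 * ρ ≤ v := by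
    intro p hp
    have hpS : p ∈ S := hsubS B₀ hB₀P hp
    set F : Finset (Finset (Fin v)) := (B \ P).filter (fun b => p ∈ b) with hF
    have hFd : ∀ b₁ ∈ F, ∀ b₂ ∈ F, b₁ ≠ b₂ → Disjoint (b₁ \ S) (b₂ \ S) := by
      intro b₁ h1 b₂ h2 hne
      obtain ⟨hb1, hp1⟩ := Finset.mem_filter.mp h1
      obtain ⟨hb2, hp2⟩ := Finset.mem_filter.mp h2
      rw [Finset.disjoint_left]
      intro r hr1 hr2
      have hr1' := Finset.mem_sdiff.mp hr1
      have hr2' := Finset.mem_sdiff.mp hr2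
      have hrp : r ≠ p := fun h => hr1'.2 (h ▸ hpS)
      have hc2 : 2 ≤ (b₁ ∩ b₂).card := two_le r p _
        (Finset.mem_inter.mpr ⟨hr1'.1, hr2'.1⟩) (Finset.mem_inter.mpr ⟨hp1, hp2⟩) hrp
      have := hBint b₁ (Finset.mem_sdiff.mp hb1).1 b₂ (Finset.mem_sdiff.mp hb2).1 hne
      omega
    have hbU : ∑ b ∈ F, (b \ S).card = (F.biUnion (fun b => b \ S)).card :=
      (Finset.card_biUnion hFd).symm
    have hUdisj : Disjoint (F.biUnion (fun b => b \ S)) S := by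
      rw [Finset.disjoint_left]
      intro r hr hrS
      obtain ⟨b, hb, hrb⟩ := Finset.mem_biUnion.mp hr
      exact (Finset.mem_sdiff.mp hrb).2 hrS
    have hUcard : (F.biUnion (fun b => b \ S)).card + S.card ≤ v := by
      have h := Finset.card_le_univ ((F.biUnion (fun b => b \ S)) ∪ S)
      rw [Finset.card_union_of_disjoint hUdisj] at h
      simpa using h
    have hfib := Finset.sum_fiberwise_of_maps_to (hmaps p hp) (fun b => (b \ S).card)
    have hinner : ∀ i ∈ Finset.range 4,
        ∑ b ∈ F.filter (fun b => (b \ S).card = i), (b \ S).card = i * t p i := by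
      intro i _
      rw [Finset.sum_congr rfl (fun b hb => (Finset.mem_filter.mp hb).2),
        Finset.sum_const, smul_eq_mul, ← htt p i, Nat.mul_comm]
    have hfib2 : ∑ i ∈ Finset.range 4, i * t p i = ∑ b ∈ F, (b \ S).card :=
      (Finset.sum_congr rfl hinner).symm.trans hfib
    rw [Finset.sum_range_succ, Finset.sum_range_succ, Finset.sum_range_succ,
      Finset.sum_range_one] at hfib2
    omega
  -- constraint (ii)
  have key2 : ∀ p ∈ B₀, t p 2 + 2 * t p 1 + 3 * t p 0 + 4 ≤ 4 * ρ := by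
    intro p hp
    have hpS : p ∈ S := hsubS B₀ hB₀P hp
    set F : Finset (Finset (Fin v)) := (B \ P).filter (fun b => p ∈ b) with hF
    have hFd : ∀ b₁ ∈ F, ∀ b₂ ∈ F, b₁ ≠ b₂ →
        Disjoint ((b₁ ∩ S).erase p) ((b₂ ∩ S).erase p) := by
      intro b₁ h1 b₂ h2 hne
      obtain ⟨hb1, hp1⟩ := Finset.mem_filter.mp h1
      obtain ⟨hb2, hp2⟩ := Finset.mem_filter.mp h2
      rw [Finset.disjoint_left]
      intro r hr1 hr2
      obtain ⟨hrp, hr1'⟩ := Finset.mem_erase.mp hr1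
      obtain ⟨-, hr2'⟩ := Finset.mem_erase.mp hr2
      have hc2 : 2 ≤ (b₁ ∩ b₂).card := two_le r p _
        (Finset.mem_inter.mpr ⟨(Finset.mem_inter.mp hr1').1, (Finset.mem_inter.mp hr2').1⟩)
        (Finset.mem_inter.mpr ⟨hp1, hp2⟩) hrp
      have := hBint b₁ (Finset.mem_sdiff.mp hb1).1 b₂ (Finset.mem_sdiff.mp hb2).1 hne
      omega
    have hbU : ∑ b ∈ F, ((b ∩ S).erase p).card
        = (F.biUnion (fun b => (b ∩ S).erase p)).card :=
      (Finset.card_biUnion hFd).symm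
    have hsubT : F.biUnion (fun b => (b ∩ S).erase p) ⊆ S \ B₀ := by
      intro r hr
      obtain ⟨b, hb, hrb⟩ := Finset.mem_biUnion.mp hr
      obtain ⟨hrp, hr'⟩ := Finset.mem_erase.mp hrb
      obtain ⟨hrbmem, hrS⟩ := Finset.mem_inter.mp hr'
      refine Finset.mem_sdiff.mpr ⟨hrS, fun hrB₀ => ?_⟩
      obtain ⟨hbBP, hpb⟩ := Finset.mem_filter.mp hb
      have heq := hblock p hp b hbBP hpb
      have : r ∈ ({p} : Finset (Fin v)) := heq ▸ Finset.mem_inter.mpr ⟨hrbmem, hrB₀⟩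
      exact hrp (Finset.mem_singleton.mp this)
    have hUcard : (F.biUnion (fun b => (b ∩ S).erase p)).card ≤ S.card - B₀.card := by
      calc (F.biUnion (fun b => (b ∩ S).erase p)).card ≤ (S \ B₀).card :=
            Finset.card_le_card hsubT
        _ = S.card - B₀.card := Finset.card_sdiff_of_subset (hsubS B₀ hB₀P)
    have hgcard : ∀ b ∈ F, ((b ∩ S).erase p).card = 3 - (b \ S).card := by
      intro b hb
      obtain ⟨hbBP, hpb⟩ := Finset.mem_filter.mp hb
      have h4 : b.card = 4 := hBcard b (Finset.mem_sdiff.mp hbBP).1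
      have hics := Finset.card_inter_add_card_sdiff b S
      rw [Finset.card_erase_of_mem (Finset.mem_inter.mpr ⟨hpb, hpS⟩)]
      omega
    have hfib := Finset.sum_fiberwise_of_maps_to (hmaps p hp)
      (fun b => ((b ∩ S).erase p).card)
    have hinner : ∀ i ∈ Finset.range 4,
        ∑ b ∈ F.filter (fun b => (b \ S).card = i), ((b ∩ S).erase p).card
          = (3 - i) * t p i := by
      intro i _
      rw [Finset.sum_congr rfl (fun b hb => by
          rw [hgcard b (Finset.mem_filter.mp hb).1, (Finset.mem_filter.mp hb).2]),
        Finset.sum_const, smul_eq_mul, ← htt p i, Nat.mul_comm]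
    have hfib2 : ∑ i ∈ Finset.range 4, (3 - i) * t p i
        = ∑ b ∈ F, ((b ∩ S).erase p).card :=
      (Finset.sum_congr rfl hinner).symm.trans hfib
    rw [Finset.sum_range_succ, Finset.sum_range_succ, Finset.sum_range_succ,
      Finset.sum_range_one] at hfib2
    omega
  -- exchange argument
  have hSint : ∀ r ∈ B₀, ∀ b ∈ B \ P, r ∈ b → (b \ S).card = 3 → b ∩ S = {r} := by
    intro r hr b hb hrb h3
    have h4 : b.card = 4 := hBcard b (Finset.mem_sdiff.mp hb).1
    have hics := Finset.card_inter_add_card_sdiff b S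
    have h1 : (b ∩ S).card = 1 := by omega
    obtain ⟨a, ha⟩ := Finset.card_eq_one.mp h1
    have hmem : r ∈ ({a} : Finset (Fin v)) :=
      ha ▸ Finset.mem_inter.mpr ⟨hrb, hsubS B₀ hB₀P hr⟩
    rw [ha, Finset.mem_singleton.mp hmem]
  have key3 : ∀ p ∈ B₀, ∀ q ∈ B₀, p ≠ q → 4 ≤ t p 3 → t q 3 = 0 := by
    intro p hp q hq hpq hp4
    by_contra hq0
    have hqne : ((B \ P).filter (fun b => q ∈ b ∧ (b \ S).card = 3)).Nonempty := by
      rw [Finset.nonempty_iff_ne_empty]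
      intro h
      apply hq0
      rw [ht q 3, h, Finset.card_empty]
    obtain ⟨bq, hbqmem⟩ := hqne
    have hbqBP : bq ∈ B \ P := (Finset.mem_filter.mp hbqmem).1
    have hqbq : q ∈ bq := (Finset.mem_filter.mp hbqmem).2.1
    have hbq3 : (bq \ S).card = 3 := (Finset.mem_filter.mp hbqmem).2.2
    have hbqS : bq ∩ S = {q} := hSint q hq bq hbqBP hqbq hbq3
    have hpbq : p ∉ bq := by
      intro hpbq
      have : p ∈ ({q} : Finset (Fin v)) :=
        hbqS ▸ Finset.mem_inter.mpr ⟨hpbq, hsubS B₀ hB₀P hp⟩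
      exact hpq (Finset.mem_singleton.mp this)
    set Fp : Finset (Finset (Fin v)) :=
      (B \ P).filter (fun b => p ∈ b ∧ (b \ S).card = 3) with hFp
    have hFpcard : 4 ≤ Fp.card := by rw [hFp, ← ht p 3]; exact hp4
    have hex : ∃ bp ∈ Fp, Disjoint bp bq := by
      by_contra hno
      push_neg at hno
      set f : Finset (Fin v) → Fin v :=
        fun b => if h : (b ∩ bq).Nonempty then (b ∩ bq).min' h else q with hf
      have hfmem : ∀ b ∈ Fp, f b ∈ b ∩ bq := by
        intro b hbF
        have hne : (b ∩ bq).Nonempty :=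
          Finset.not_disjoint_iff_nonempty_inter.mp (hno b hbF)
        rw [hf]
        simp only [dif_pos hne]
        exact Finset.min'_mem _ hne
      have hmapsf : ∀ b ∈ Fp, f b ∈ bq.erase q := by
        intro b hbF
        obtain ⟨hbBP, hpb, hb3⟩ := Finset.mem_filter.mp hbF
        have hm := hfmem b hbF
        have hbS : b ∩ S = {p} := hSint p hp b hbBP hpb hb3
        refine Finset.mem_erase.mpr ⟨fun hfq => ?_, (Finset.mem_inter.mp hm).2⟩
        have hqb : q ∈ b := hfq ▸ (Finset.mem_inter.mp hm).1
        have : q ∈ ({p} : Finset (Fin v)) :=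
          hbS ▸ Finset.mem_inter.mpr ⟨hqb, hsubS B₀ hB₀P hq⟩
        exact hpq (Finset.mem_singleton.mp this).symm
      have hinjOn : Set.InjOn f Fp := by
        intro b₁ h1' b₂ h2' hfeq
        have h1 : b₁ ∈ Fp := h1'
        have h2 : b₂ ∈ Fp := h2'
        by_contra hne
        obtain ⟨hb1, hp1, -⟩ := Finset.mem_filter.mp h1
        obtain ⟨hb2, hp2, -⟩ := Finset.mem_filter.mp h2
        have hm1 := hfmem b₁ h1
        have hm2 := hfmem b₂ h2
        have hfp : f b₁ ≠ p := fun h => hpbq (h ▸ (Finset.mem_inter.mp hm1).2)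
        have hc2 : 2 ≤ (b₁ ∩ b₂).card := two_le (f b₁) p _
          (Finset.mem_inter.mpr ⟨(Finset.mem_inter.mp hm1).1,
            hfeq ▸ (Finset.mem_inter.mp hm2).1⟩)
          (Finset.mem_inter.mpr ⟨hp1, hp2⟩) hfp
        have := hBint b₁ (Finset.mem_sdiff.mp hb1).1 b₂ (Finset.mem_sdiff.mp hb2).1 hne
        omega
      have hle := Finset.card_le_card_of_injOn f hmapsf hinjOn
      have herase : (bq.erase q).card = 3 := by
        rw [Finset.card_erase_of_mem hqbq, hBcard bq (Finset.mem_sdiff.mp hbqBP).1]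
      omega
    obtain ⟨bp, hbpF, hdisjpq⟩ := hex
    obtain ⟨hbpBP, hpbp, hbp3⟩ := Finset.mem_filter.mp hbpF
    have hbpS : bp ∩ S = {p} := hSint p hp bp hbpBP hpbp hbp3
    set Q : Finset (Finset (Fin v)) := insert bp (insert bq (P.erase B₀)) with hQ
    have hnew : ∀ b' ∈ P.erase B₀, ∀ bb : Finset (Fin v), ∀ r ∈ B₀,
        bb ∩ S = {r} → Disjoint bb b' := by
      intro b' hb' bb r hr hbbS
      have hb'P : b' ∈ P := Finset.mem_of_mem_erase hb'
      rw [Finset.disjoint_left]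
      intro a ha hab'
      have haS : a ∈ S := hsubS b' hb'P hab'
      have har : a = r := Finset.mem_singleton.mp
        (hbbS ▸ Finset.mem_inter.mpr ⟨ha, haS⟩)
      subst har
      have hd : Disjoint B₀ b' := hPdisj B₀ hB₀P b' hb'P
        (fun h => (Finset.mem_erase.mp hb').1 h.symm)
      exact (Finset.disjoint_left.mp hd hr) hab'
    have hQPPC : IsPPC B Q := by
      constructor
      · intro b hb'
        rw [hQ] at hb'
        rcases Finset.mem_insert.mp hb' with rfl | hb'
        · exact (Finset.mem_sdiff.mp hbpBP).1
        rcases Finset.mem_insert.mp hb' with rfl | hb'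
        · exact (Finset.mem_sdiff.mp hbqBP).1
        · exact hPB (Finset.mem_of_mem_erase hb')
      · intro b₁ h1 b₂ h2 hne
        rw [hQ] at h1 h2
        simp only [Finset.mem_insert] at h1 h2
        rcases h1 with rfl | rfl | h1 <;> rcases h2 with rfl | rfl | h2
        · exact absurd rfl hne
        · exact hdisjpq
        · exact hnew b₂ h2 b₁ p hp hbpS
        · exact hdisjpq.symm
        · exact absurd rfl hne
        · exact hnew b₂ h2 b₁ q hq hbqS
        · exact (hnew b₁ h1 b₂ p hp hbpS).symm
        · exact (hnew b₁ h1 b₂ q hq hbqS).symm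
        · exact hPdisj b₁ (Finset.mem_of_mem_erase h1) b₂ (Finset.mem_of_mem_erase h2) hne
    have hQcard : Q.card = ρ + 1 := by
      have hbqnot : bq ∉ P.erase B₀ :=
        fun h => (Finset.mem_sdiff.mp hbqBP).2 (Finset.mem_of_mem_erase h)
      have hbpnot : bp ∉ insert bq (P.erase B₀) := by
        intro h
        rcases Finset.mem_insert.mp h with rfl | h
        · exact hpbq hpbp
        · exact (Finset.mem_sdiff.mp hbpBP).2 (Finset.mem_of_mem_erase h)
      rw [hQ, Finset.card_insert_of_notMem hbpnot, Finset.card_insert_of_notMem hbqnot,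
        Finset.card_erase_of_mem hB₀P, hcard]
      omega
    have := hmax Q hQPPC
    omega
  -- distinctness of w, x, y, z
  have hsub3 : ∀ (a b d : Fin v), ({a, b, d} : Finset (Fin v)).card ≤ 3 := by
    intro a b d
    apply le_trans (Finset.card_insert_le _ _)
    have h2 := Finset.card_insert_le b ({d} : Finset (Fin v))
    simp only [Finset.card_singleton] at h2
    omega
  have hcard_ne : ∀ (a b d : Fin v), B₀ ⊆ {a, b, d} → False := by
    intro a b d h
    have := (Finset.card_le_card h).trans (hsub3 a b d)
    omega
  have hwx : w ≠ x := fun h => hcard_ne x y z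
    (by rw [hB₀def, h]; intro r hr; simp at hr ⊢; tauto)
  have hwy : w ≠ y := fun h => hcard_ne x y z
    (by rw [hB₀def, h]; intro r hr; simp at hr ⊢; tauto)
  have hwz : w ≠ z := fun h => hcard_ne x y z
    (by rw [hB₀def, h]; intro r hr; simp at hr ⊢; tauto)
  have hxy : x ≠ y := fun h => hcard_ne w y z
    (by rw [hB₀def, h]; intro r hr; simp at hr ⊢; tauto)
  have hxz : x ≠ z := fun h => hcard_ne w y z
    (by rw [hB₀def, h]; intro r hr; simp at hr ⊢; tauto)
  have hyz : y ≠ z := fun h => hcard_ne w x z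
    (by rw [hB₀def, h]; intro r hr; simp at hr ⊢; tauto)
  have hw : w ∈ B₀ := by rw [hB₀def]; simp
  have hx : x ∈ B₀ := by rw [hB₀def]; simp
  have hy : y ∈ B₀ := by rw [hB₀def]; simp
  have hz : z ∈ B₀ := by rw [hB₀def]; simp
  -- rational bounds
  have bound1 : ∀ p ∈ B₀, c p ≤ (v : ℚ) / 3 - ρ - 1 / 3 := by
    intro p hp
    have h1 := key1 p hp
    have h2 := key2 p hp
    have h1' : 3 * (t p 3 : ℚ) + 2 * (t p 2 : ℚ) + (t p 1 : ℚ) + 4 * (ρ : ℚ) ≤ v := by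
      exact_mod_cast h1
    have h2' : (t p 2 : ℚ) + 2 * (t p 1 : ℚ) + 3 * (t p 0 : ℚ) + 4 ≤ 4 * (ρ : ℚ) := by
      exact_mod_cast h2
    have hn2 : (0 : ℚ) ≤ (t p 2 : ℚ) := Nat.cast_nonneg _
    have hn1 : (0 : ℚ) ≤ (t p 1 : ℚ) := Nat.cast_nonneg _
    rw [hc]
    linarith
  have bound0 : ∀ p ∈ B₀, t p 3 = 0 → c p ≤ 2 * (ρ : ℚ) - 2 := by
    intro p hp h0
    have h2 := key2 p hp
    have h2' : (t p 2 : ℚ) + 2 * (t p 1 : ℚ) + 3 * (t p 0 : ℚ) + 4 ≤ 4 * (ρ : ℚ) := by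
      exact_mod_cast h2
    have hn2 : (0 : ℚ) ≤ (t p 2 : ℚ) := Nat.cast_nonneg _
    have hn1 : (0 : ℚ) ≤ (t p 1 : ℚ) := Nat.cast_nonneg _
    have hn0 : (0 : ℚ) ≤ (t p 0 : ℚ) := Nat.cast_nonneg _
    rw [hc, h0]
    push_cast
    linarith
  rcases le_max_iff.mp hbig with h | h <;> rcases le_max_iff.mp h with h4 | h4
  · have h1 := bound1 w hw
    have h0x := bound0 x hx (key3 w hw x hx hwx h4)
    have h0y := bound0 y hy (key3 w hw y hy hwy h4)
    have h0z := bound0 z hz (key3 w hw z hz hwz h4)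
    linarith
  · have h1 := bound1 x hx
    have h0w := bound0 w hw (key3 x hx w hw hwx.symm h4)
    have h0y := bound0 y hy (key3 x hx y hy hxy h4)
    have h0z := bound0 z hz (key3 x hx z hz hxz h4)
    linarith
  · have h1 := bound1 y hy
    have h0w := bound0 w hw (key3 y hy w hw hwy.symm h4)
    have h0x := bound0 x hx (key3 y hy x hx hxy.symm h4)
    have h0z := bound0 z hz (key3 y hy z hz hyz h4)
    linarith
  · have h1 := bound1 z hz
    have h0w := bound0 w hw (key3 z hz w hw hwz.symm h4)
    have h0x := bound0 x hx (key3 z hz x hx hxz.symm h4)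
    have h0y := bound0 y hy (key3 z hz y hy hyz.symm h4)
    linarith
end

section
/- If v ≥ 9ρ + 31, then β(ρ,v,4) ≤ ρv/3 + 5ρ² − 16ρ/3. -/
open Finset

noncomputable section
open scoped Classical

namespace Stmt8Aux

variable {v ρ : ℕ} {B P : Finset (Finset (Fin v))}

/-- All context hypotheses bundled. -/
structure Ctx (v ρ : ℕ) (B P : Finset (Finset (Fin v))) : Prop where
  pack : IsPacking v 4 B
  ppc : IsPPC B P
  pcard : P.card = ρ
  hmax : ∀ Q, IsPPC B Q → Q.card ≤ ρ
  hρ : 1 ≤ ρ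
  hv : 9 * ρ + 31 ≤ v

/-- the point set of the PPC -/
def pts (P : Finset (Finset (Fin v))) : Finset (Fin v) := P.biUnion id

lemma mem_pts {x : Fin v} : x ∈ pts P ↔ ∃ p ∈ P, x ∈ p := by
  simp [pts]

lemma subset_pts {p : Finset (Fin v)} (hp : p ∈ P) : p ⊆ pts P := by
  intro x hx; exact mem_pts.2 ⟨p, hp, hx⟩

lemma Ctx.bcard (h : Ctx v ρ B P) {b : Finset (Fin v)} (hb : b ∈ B) : b.card = 4 :=
  h.pack.1 b hb

lemma Ctx.inter_le_one (h : Ctx v ρ B P) {b b' : Finset (Fin v)} (hb : b ∈ B)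
    (hb' : b' ∈ B) (hne : b ≠ b') : (b ∩ b').card ≤ 1 :=
  h.pack.2 b hb b' hb' hne

lemma Ctx.Pdisj (h : Ctx v ρ B P) {p p' : Finset (Fin v)} (hp : p ∈ P) (hp' : p' ∈ P)
    (hne : p ≠ p') : Disjoint p p' :=
  h.ppc.2 p hp p' hp' hne

lemma Ctx.p_unique (h : Ctx v ρ B P) {p p' : Finset (Fin v)} {x : Fin v} (hp : p ∈ P)
    (hp' : p' ∈ P) (hx : x ∈ p) (hx' : x ∈ p') : p = p' := by
  by_contra hne
  exact (Finset.disjoint_left.1 (h.Pdisj hp hp' hne) hx) hx'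

lemma Ctx.pts_card (h : Ctx v ρ B P) : (pts P).card = 4 * ρ := by
  rw [pts, card_biUnion]
  · rw [Finset.sum_congr rfl (fun p hp => h.bcard (h.ppc.1 hp) : ∀ p ∈ P, (id p).card = 4),
      Finset.sum_const, h.pcard]
    ring
  · intro p hp q hq hne; exact h.Pdisj hp hq hne

lemma Ctx.P_sub_pts (h : Ctx v ρ B P) {p : Finset (Fin v)} (hp : p ∈ P) :
    p ∩ pts P = p := by
  apply Finset.inter_eq_left.2 (subset_pts hp)

/-- The master exchange lemma: cannot replace R ⊆ P by a strictly larger disjoint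
family N of blocks all of whose `pts`-intersections live inside R. -/
lemma Ctx.exch (h : Ctx v ρ B P) (R N : Finset (Finset (Fin v))) (hR : R ⊆ P)
    (hN : N ⊆ B) (hNS : ∀ b ∈ N, b ∩ pts P ⊆ R.biUnion id)
    (hN4 : ∀ b ∈ N, (b ∩ pts P).card < 4)
    (hNd : ∀ b₁ ∈ N, ∀ b₂ ∈ N, b₁ ≠ b₂ → Disjoint b₁ b₂)
    (hc : R.card < N.card) : False := by
  have hdisjPN : Disjoint (P \ R) N := by
    rw [Finset.disjoint_left]
    intro b hb hbN
    have h4 : (b ∩ pts P).card < 4 := hN4 b hbN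
    rw [h.P_sub_pts (Finset.mem_sdiff.1 hb).1, h.bcard (h.ppc.1 (Finset.mem_sdiff.1 hb).1)] at h4
    omega
  have hcross : ∀ b₁ ∈ P \ R, ∀ b₂ ∈ N, Disjoint b₁ b₂ := by
    intro p hp b hbN
    rw [Finset.disjoint_left]
    intro a hap hab
    have haS : a ∈ b ∩ pts P := Finset.mem_inter.2 ⟨hab, subset_pts (Finset.mem_sdiff.1 hp).1 hap⟩
    have := hNS b hbN haS
    rw [Finset.mem_biUnion] at this
    obtain ⟨r, hrR, har⟩ := this
    have hpne : p ≠ r := fun he => (Finset.mem_sdiff.1 hp).2 (he ▸ hrR)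
    exact Finset.disjoint_left.1 (h.Pdisj (Finset.mem_sdiff.1 hp).1 (hR hrR) hpne) hap har
  have hQ : IsPPC B ((P \ R) ∪ N) := by
    constructor
    · exact Finset.union_subset ((Finset.sdiff_subset).trans h.ppc.1) hN
    · intro b₁ hb₁ b₂ hb₂ hne
      rcases Finset.mem_union.1 hb₁ with h₁ | h₁ <;> rcases Finset.mem_union.1 hb₂ with h₂ | h₂
      · exact h.Pdisj (Finset.mem_sdiff.1 h₁).1 (Finset.mem_sdiff.1 h₂).1 hne
      · exact hcross b₁ h₁ b₂ h₂
      · exact (hcross b₂ h₂ b₁ h₁).symm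
      · exact hNd b₁ h₁ b₂ h₂ hne
  have hcard : ((P \ R) ∪ N).card = (P.card - R.card) + N.card := by
    rw [Finset.card_union_of_disjoint hdisjPN, Finset.card_sdiff_of_subset hR]
  have hle := h.hmax _ hQ
  have hRP : R.card ≤ P.card := Finset.card_le_card hR
  rw [hcard, h.pcard] at hle
  rw [h.pcard] at hRP
  omega

lemma Ctx.meets (h : Ctx v ρ B P) {b : Finset (Fin v)} (hb : b ∈ B) :
    (b ∩ pts P).Nonempty := by
  rw [Finset.nonempty_iff_ne_empty]
  intro he
  apply h.exch ∅ {b} (Finset.empty_subset _) (by simpa using hb)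
  · intro c hc; rw [Finset.mem_singleton] at hc; subst hc; simp [he]
  · intro c hc; rw [Finset.mem_singleton] at hc; subst hc; simp [he]
  · intro b₁ h₁ b₂ h₂ hne; simp only [Finset.mem_singleton] at h₁ h₂; subst h₁; subst h₂; simp at hne
  · simp


/-! ### Block classes -/

/-- Blocks meeting the PPC point set in exactly one point. -/
def Ablk (B P : Finset (Finset (Fin v))) : Finset (Finset (Fin v)) :=
  B.filter (fun b => b ∉ P ∧ (b ∩ pts P).card = 1)

/-- Blocks meeting the PPC point set in at least two points. -/
def Eblk (B P : Finset (Finset (Fin v))) : Finset (Finset (Fin v)) :=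
  B.filter (fun b => b ∉ P ∧ 2 ≤ (b ∩ pts P).card)

/-- A-blocks at the point x. -/
def Axp (B P : Finset (Finset (Fin v))) (x : Fin v) : Finset (Finset (Fin v)) :=
  B.filter (fun b => b ∉ P ∧ b ∩ pts P = {x})

def ndeg (B P : Finset (Finset (Fin v))) (x : Fin v) : ℕ := (Axp B P x).card

def Heavy (B P : Finset (Finset (Fin v))) (p : Finset (Fin v)) : Prop :=
  ∃ x ∈ p, 6 ≤ ndeg B P x

lemma Axp_sub_A {x : Fin v} : Axp B P x ⊆ Ablk B P := by
  intro b hb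
  rw [Axp, Finset.mem_filter] at hb
  rw [Ablk, Finset.mem_filter]
  exact ⟨hb.1, hb.2.1, by rw [hb.2.2]; simp⟩

lemma mem_Axp {x : Fin v} {b : Finset (Fin v)} :
    b ∈ Axp B P x ↔ b ∈ B ∧ b ∉ P ∧ b ∩ pts P = {x} := by
  simp [Axp]

lemma Ctx.card_split (h : Ctx v ρ B P) :
    B.card = ρ + (Ablk B P).card + (Eblk B P).card := by
  have hU : B = P ∪ (Ablk B P ∪ Eblk B P) := by
    apply Finset.Subset.antisymm
    · intro b hb
      by_cases hbP : b ∈ P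
      · exact Finset.mem_union.2 (Or.inl hbP)
      · have h1 : 1 ≤ (b ∩ pts P).card := Finset.card_pos.2 (h.meets hb)
        rcases Nat.lt_or_ge (b ∩ pts P).card 2 with hlt | hge
        · exact Finset.mem_union.2 (Or.inr (Finset.mem_union.2 (Or.inl
            (Finset.mem_filter.2 ⟨hb, hbP, by omega⟩))))
        · exact Finset.mem_union.2 (Or.inr (Finset.mem_union.2 (Or.inr
            (Finset.mem_filter.2 ⟨hb, hbP, hge⟩))))
    · apply Finset.union_subset h.ppc.1
      apply Finset.union_subset (Finset.filter_subset _ _) (Finset.filter_subset _ _)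
  have hd1 : Disjoint (Ablk B P) (Eblk B P) := by
    rw [Finset.disjoint_left]
    intro b hb hb'
    rw [Ablk, Finset.mem_filter] at hb
    rw [Eblk, Finset.mem_filter] at hb'
    omega
  have hd2 : Disjoint P (Ablk B P ∪ Eblk B P) := by
    rw [Finset.disjoint_left]
    intro b hb hb'
    rcases Finset.mem_union.1 hb' with hc | hc
    · exact (Finset.mem_filter.1 hc).2.1 hb
    · exact (Finset.mem_filter.1 hc).2.1 hb
  have hc2 := congrArg Finset.card hU
  rw [Finset.card_union_of_disjoint hd2, Finset.card_union_of_disjoint hd1, h.pcard] at hc2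
  omega

/-! ### Residuals -/

lemma Ctx.resid_card (h : Ctx v ρ B P) {b : Finset (Fin v)} (hb : b ∈ B) :
    (b \ pts P).card = 4 - (b ∩ pts P).card := by
  have := Finset.card_inter_add_card_sdiff b (pts P)
  rw [h.bcard hb] at this
  omega

lemma Ctx.inter_eq_singleton (h : Ctx v ρ B P) {b b' : Finset (Fin v)} {x : Fin v}
    (hb : b ∈ B) (hb' : b' ∈ B) (hne : b ≠ b') (hx : x ∈ b) (hx' : x ∈ b') :
    b ∩ b' = {x} := by
  have h1 : {x} ⊆ b ∩ b' := by
    intro a ha; rw [Finset.mem_singleton] at ha; subst ha; exact Finset.mem_inter.2 ⟨hx, hx'⟩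
  have h2 := h.inter_le_one hb hb' hne
  exact (Finset.eq_of_subset_of_card_le h1 (by simpa using h2)).symm

lemma Ctx.resid_disj (h : Ctx v ρ B P) {b b' : Finset (Fin v)} {x : Fin v}
    (hb : b ∈ B) (hb' : b' ∈ B) (hne : b ≠ b') (hx : x ∈ b) (hx' : x ∈ b')
    (hxS : x ∈ pts P) : Disjoint (b \ pts P) (b' \ pts P) := by
  rw [Finset.disjoint_left]
  intro a ha ha'
  have : a ∈ b ∩ b' := Finset.mem_inter.2 ⟨(Finset.mem_sdiff.1 ha).1, (Finset.mem_sdiff.1 ha').1⟩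
  rw [h.inter_eq_singleton hb hb' hne hx hx', Finset.mem_singleton] at this
  exact (Finset.mem_sdiff.1 ha).2 (this ▸ hxS)

lemma Ctx.Axp_resid_disj (h : Ctx v ρ B P) {x : Fin v} {b b' : Finset (Fin v)}
    (hb : b ∈ Axp B P x) (hb' : b' ∈ Axp B P x) (hne : b ≠ b') :
    Disjoint (b \ pts P) (b' \ pts P) := by
  rw [mem_Axp] at hb hb'
  have hxb : x ∈ b := by
    have : x ∈ b ∩ pts P := by rw [hb.2.2]; simp
    exact (Finset.mem_inter.1 this).1
  have hxb' : x ∈ b' := by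
    have : x ∈ b' ∩ pts P := by rw [hb'.2.2]; simp
    exact (Finset.mem_inter.1 this).1
  have hxS : x ∈ pts P := by
    have : x ∈ b ∩ pts P := by rw [hb.2.2]; simp
    exact (Finset.mem_inter.1 this).2
  exact h.resid_disj hb.1 hb'.1 hne hxb hxb' hxS

/-- Generic: in a family with pairwise disjoint "residuals", at most `|W|` members
can have residual meeting `W`. -/
lemma hit_bound (F : Finset (Finset (Fin v))) (t : Finset (Fin v) → Finset (Fin v))
    (W : Finset (Fin v))
    (hd : ∀ b ∈ F, ∀ b' ∈ F, b ≠ b' → Disjoint (t b) (t b')) :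
    (F.filter (fun b => ¬ Disjoint (t b) W)).card ≤ W.card := by
  set G := F.filter (fun b => ¬ Disjoint (t b) W) with hG
  have h1 : G.card ≤ (G.biUnion (fun b => t b ∩ W)).card := by
    rw [Finset.card_biUnion]
    · calc G.card = ∑ _b ∈ G, 1 := by simp
        _ ≤ ∑ b ∈ G, (t b ∩ W).card := by
          apply Finset.sum_le_sum
          intro b hb
          rw [hG, Finset.mem_filter] at hb
          have := Finset.not_disjoint_iff_nonempty_inter.1 hb.2
          exact Finset.card_pos.2 this
    · intro b hb b' hb' hne
      apply Finset.disjoint_of_subset_left (Finset.inter_subset_left)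
      apply Finset.disjoint_of_subset_right (Finset.inter_subset_left)
      exact hd b (Finset.filter_subset _ _ hb) b' (Finset.filter_subset _ _ hb') hne
  have h2 : (G.biUnion (fun b => t b ∩ W)) ⊆ W := by
    intro a ha
    rw [Finset.mem_biUnion] at ha
    obtain ⟨b, _, hab⟩ := ha
    exact (Finset.mem_inter.1 hab).2
  exact h1.trans (Finset.card_le_card h2)

lemma Ctx.pick_avoid (h : Ctx v ρ B P) {x : Fin v} {W : Finset (Fin v)}
    (hW : W.card < ndeg B P x) :
    ∃ c ∈ Axp B P x, Disjoint (c \ pts P) W := by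
  by_contra hcon
  push_neg at hcon
  have heq : (Axp B P x).filter (fun b => ¬ Disjoint (b \ pts P) W) = Axp B P x :=
    Finset.filter_eq_self.2 (fun b hb => hcon b hb)
  have hcard := hit_bound (Axp B P x) (fun b => b \ pts P) W
    (fun b hb b' hb' hne => h.Axp_resid_disj hb hb' hne)
  rw [heq] at hcard
  rw [ndeg] at hW
  omega

lemma Ctx.ndeg_bound (h : Ctx v ρ B P) (x : Fin v) : 3 * ndeg B P x + 4 * ρ ≤ v := by
  set T := (Axp B P x).biUnion (fun b => b \ pts P) with hT
  have hTcard : T.card = 3 * ndeg B P x := by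
    rw [hT, Finset.card_biUnion (fun b hb b' hb' hne => h.Axp_resid_disj hb hb' hne)]
    rw [ndeg]
    rw [Finset.sum_congr rfl (fun b hb => by
      rw [h.resid_card (mem_Axp.1 hb).1, (mem_Axp.1 hb).2.2]
      simp : ∀ b ∈ Axp B P x, (b \ pts P).card = 3)]
    rw [Finset.sum_const]
    ring
  have hdisj : Disjoint T (pts P) := by
    rw [hT, Finset.disjoint_biUnion_left]
    intro b _
    exact Finset.sdiff_disjoint
  have : T.card + (pts P).card = (T ∪ pts P).card := (Finset.card_union_of_disjoint hdisj).symm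
  have hle : (T ∪ pts P).card ≤ v := by
    have := Finset.card_le_card (Finset.subset_univ (T ∪ pts P))
    simpa using this
  rw [hTcard, h.pts_card] at this
  omega

/-! ### Dominance -/

lemma Ctx.dom (h : Ctx v ρ B P) {p : Finset (Fin v)} {x y : Fin v} (hp : p ∈ P)
    (hx : x ∈ p) (hy : y ∈ p) (hxy : x ≠ y) (h4 : 4 ≤ ndeg B P x) : ndeg B P y = 0 := by
  by_contra h0
  have : 0 < ndeg B P y := Nat.pos_of_ne_zero h0
  rw [ndeg, Finset.card_pos] at this
  obtain ⟨d, hd⟩ := this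
  have hdB := (mem_Axp.1 hd).1
  have hdres : (d \ pts P).card = 3 := by
    rw [h.resid_card hdB, (mem_Axp.1 hd).2.2]; simp
  obtain ⟨c, hc, hcd⟩ := h.pick_avoid (x := x) (W := d \ pts P) (by omega)
  have hcB := (mem_Axp.1 hc).1
  -- c and d are disjoint
  have hdisj : Disjoint c d := by
    rw [Finset.disjoint_left]
    intro a hac had
    by_cases haS : a ∈ pts P
    · have h1 : a ∈ c ∩ pts P := Finset.mem_inter.2 ⟨hac, haS⟩
      have h2 : a ∈ d ∩ pts P := Finset.mem_inter.2 ⟨had, haS⟩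
      rw [(mem_Axp.1 hc).2.2, Finset.mem_singleton] at h1
      rw [(mem_Axp.1 hd).2.2, Finset.mem_singleton] at h2
      exact hxy (h1 ▸ h2 ▸ rfl)
    · exact Finset.disjoint_left.1 hcd (Finset.mem_sdiff.2 ⟨hac, haS⟩)
        (Finset.mem_sdiff.2 ⟨had, haS⟩)
  have hcd_ne : c ≠ d := by
    intro he
    have : (c ∩ pts P) = {x} := (mem_Axp.1 hc).2.2
    have h2 : (d ∩ pts P) = {y} := (mem_Axp.1 hd).2.2
    rw [he, h2] at this
    exact hxy (Finset.singleton_injective this).symm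
  apply h.exch {p} {c, d} (by simpa using hp)
  · intro b hb
    rcases Finset.mem_insert.1 hb with he | he
    · subst he; exact hcB
    · rw [Finset.mem_singleton] at he; subst he; exact hdB
  · intro b hb
    have hps : p ⊆ ({p} : Finset _).biUnion id := by intro a ha; simpa using ha
    rcases Finset.mem_insert.1 hb with he | he
    · subst he
      rw [(mem_Axp.1 hc).2.2]
      exact fun a ha => hps (by rw [Finset.mem_singleton] at ha; exact ha ▸ hx)
    · rw [Finset.mem_singleton] at he; subst he
      rw [(mem_Axp.1 hd).2.2]
      exact fun a ha => hps (by rw [Finset.mem_singleton] at ha; exact ha ▸ hy)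
  · intro b hb
    rcases Finset.mem_insert.1 hb with he | he
    · subst he; rw [(mem_Axp.1 hc).2.2]; simp
    · rw [Finset.mem_singleton] at he; subst he; rw [(mem_Axp.1 hd).2.2]; simp
  · intro b₁ h₁ b₂ h₂ hne
    simp only [Finset.mem_insert, Finset.mem_singleton] at h₁ h₂
    rcases h₁ with rfl | rfl <;> rcases h₂ with rfl | rfl
    · exact absurd rfl hne
    · exact hdisj
    · exact hdisj.symm
    · exact absurd rfl hne
  · rw [Finset.card_singleton, Finset.card_insert_of_notMem (by simpa using hcd_ne),
      Finset.card_singleton]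
    omega


/-! ### A-side counting -/

/-- number of A-blocks whose point lies in the PPC block `p` -/
def adeg (B P : Finset (Finset (Fin v))) (p : Finset (Fin v)) : ℕ :=
  ((Ablk B P).filter (fun b => b ∩ pts P ⊆ p)).card

lemma Ctx.A_partition (h : Ctx v ρ B P) :
    (Ablk B P).card = ∑ p ∈ P, adeg B P p := by
  have hU : Ablk B P = P.biUnion (fun p => (Ablk B P).filter (fun b => b ∩ pts P ⊆ p)) := by
    apply Finset.Subset.antisymm
    · intro b hb
      have hb' := Finset.mem_filter.1 hb
      obtain ⟨x, hx⟩ := Finset.card_eq_one.1 hb'.2.2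
      have hxS : x ∈ pts P := by
        have : x ∈ b ∩ pts P := by rw [hx]; simp
        exact (Finset.mem_inter.1 this).2
      obtain ⟨p, hp, hxp⟩ := mem_pts.1 hxS
      refine Finset.mem_biUnion.2 ⟨p, hp, Finset.mem_filter.2 ⟨hb, ?_⟩⟩
      rw [hx]
      intro a ha; rw [Finset.mem_singleton] at ha; exact ha ▸ hxp
    · intro b hb
      obtain ⟨p, _, hbp⟩ := Finset.mem_biUnion.1 hb
      exact Finset.filter_subset _ _ hbp
  rw [hU, Finset.card_biUnion]
  · rfl
  intro p hp q hq hne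
  rw [Function.onFun, Finset.disjoint_left]
  intro b hbp hbq
  have h1 := (Finset.mem_filter.1 hbp)
  have h2 := (Finset.mem_filter.1 hbq)
  obtain ⟨x, hx⟩ := Finset.card_eq_one.1 (Finset.mem_filter.1 h1.1).2.2
  have hxp : x ∈ p := h1.2 (by rw [hx]; simp)
  have hxq : x ∈ q := h2.2 (by rw [hx]; simp)
  exact hne (h.p_unique hp hq hxp hxq)

lemma Ctx.adeg_eq_sum (h : Ctx v ρ B P) {p : Finset (Fin v)} (hp : p ∈ P) :
    adeg B P p = ∑ x ∈ p, ndeg B P x := by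
  have hU : (Ablk B P).filter (fun b => b ∩ pts P ⊆ p) =
      p.biUnion (fun x => Axp B P x) := by
    apply Finset.Subset.antisymm
    · intro b hb
      have hb' := Finset.mem_filter.1 hb
      have hbA := Finset.mem_filter.1 hb'.1
      obtain ⟨x, hx⟩ := Finset.card_eq_one.1 hbA.2.2
      have hxp : x ∈ p := hb'.2 (by rw [hx]; simp)
      exact Finset.mem_biUnion.2 ⟨x, hxp, mem_Axp.2 ⟨hbA.1, hbA.2.1, hx⟩⟩
    · intro b hb
      obtain ⟨x, hxp, hbx⟩ := Finset.mem_biUnion.1 hb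
      rw [mem_Axp] at hbx
      refine Finset.mem_filter.2 ⟨Finset.mem_filter.2 ⟨hbx.1, hbx.2.1, by rw [hbx.2.2]; simp⟩, ?_⟩
      rw [hbx.2.2]
      intro a ha; rw [Finset.mem_singleton] at ha; exact ha ▸ hxp
  rw [adeg, hU, Finset.card_biUnion]
  · rfl
  · intro x hx y hy hne
    rw [Function.onFun, Finset.disjoint_left]
    intro b hbx hby
    rw [mem_Axp] at hbx hby
    rw [hbx.2.2] at hby
    exact hne (Finset.singleton_injective hby.2.2)

lemma Ctx.pcard4 (h : Ctx v ρ B P) {p : Finset (Fin v)} (hp : p ∈ P) : p.card = 4 :=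
  h.bcard (h.ppc.1 hp)

lemma Ctx.adeg_heavy (h : Ctx v ρ B P) {p : Finset (Fin v)} (hp : p ∈ P)
    (hH : Heavy B P p) : 3 * adeg B P p + 4 * ρ ≤ v := by
  obtain ⟨x', hx'p, h6⟩ := hH
  have hsum : adeg B P p = ndeg B P x' := by
    rw [h.adeg_eq_sum hp]
    apply Finset.sum_eq_single_of_mem x' hx'p
    intro y hy hne
    exact h.dom hp hx'p hy (fun he => hne (he ▸ rfl)) (by omega)
  rw [hsum]
  exact h.ndeg_bound x'

lemma Ctx.adeg_light (h : Ctx v ρ B P) {p : Finset (Fin v)} (hp : p ∈ P)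
    (hH : ¬ Heavy B P p) : adeg B P p ≤ 12 := by
  rw [h.adeg_eq_sum hp]
  by_cases hd : ∃ x ∈ p, 4 ≤ ndeg B P x
  · obtain ⟨x, hxp, h4⟩ := hd
    have hsum : ∑ y ∈ p, ndeg B P y = ndeg B P x := by
      apply Finset.sum_eq_single_of_mem x hxp
      intro y hy hne
      exact h.dom hp hxp hy (fun he => hne (he ▸ rfl)) h4
    rw [hsum]
    have : ¬ (6 ≤ ndeg B P x) := fun hc => hH ⟨x, hxp, hc⟩
    omega
  · push_neg at hd
    calc ∑ x ∈ p, ndeg B P x ≤ ∑ _x ∈ p, 3 := Finset.sum_le_sum (fun x hx => by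
          have := hd x hx; omega)
      _ = 12 := by rw [Finset.sum_const, h.pcard4 hp]; simp

/-- total bound for A-blocks; `h` heavy blocks contribute `(v-4ρ)/3` each, the
rest at most 12 each. -/
lemma Ctx.A_total (h : Ctx v ρ B P) :
    3 * (Ablk B P).card ≤ (P.filter (fun p => Heavy B P p)).card * (v - 4 * ρ) +
      36 * (ρ - (P.filter (fun p => Heavy B P p)).card) := by
  have hmul : 3 * (Ablk B P).card = ∑ p ∈ P, 3 * adeg B P p := by
    rw [h.A_partition, Finset.mul_sum]
  have hs := Finset.sum_filter_add_sum_filter_not P (fun p => Heavy B P p)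
    (fun p => 3 * adeg B P p)
  have hcc := Finset.card_filter_add_card_filter_not (s := P)
    (p := fun p => Heavy B P p)
  rw [h.pcard] at hcc
  have h1 : ∑ p ∈ P.filter (fun p => Heavy B P p), 3 * adeg B P p ≤
      (P.filter (fun p => Heavy B P p)).card * (v - 4 * ρ) := by
    calc ∑ p ∈ P.filter (fun p => Heavy B P p), 3 * adeg B P p
        ≤ ∑ _p ∈ P.filter (fun p => Heavy B P p), (v - 4 * ρ) := Finset.sum_le_sum (fun p hp => by
          have := h.adeg_heavy (Finset.mem_filter.1 hp).1 (Finset.mem_filter.1 hp).2; omega)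
      _ = (P.filter (fun p => Heavy B P p)).card * (v - 4 * ρ) := by
          rw [Finset.sum_const, smul_eq_mul]
  have h2 : ∑ p ∈ P.filter (fun p => ¬ Heavy B P p), 3 * adeg B P p ≤
      36 * (ρ - (P.filter (fun p => Heavy B P p)).card) := by
    calc ∑ p ∈ P.filter (fun p => ¬ Heavy B P p), 3 * adeg B P p
        ≤ ∑ _p ∈ P.filter (fun p => ¬ Heavy B P p), 36 := Finset.sum_le_sum (fun p hp => by
          have := h.adeg_light (Finset.mem_filter.1 hp).1 (Finset.mem_filter.1 hp).2; omega)
      _ = (P.filter (fun p => ¬ Heavy B P p)).card * 36 := by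
          rw [Finset.sum_const, smul_eq_mul]
      _ ≤ 36 * (ρ - (P.filter (fun p => Heavy B P p)).card) := by omega
  omega


/-! ### E-side: global pair count -/

def Mset (B P : Finset (Finset (Fin v))) : Finset (Finset (Fin v)) :=
  (Eblk B P).filter (fun b => (b ∩ pts P).card = 2)

lemma Ctx.E_pairs (h : Ctx v ρ B P) :
    3 * (Eblk B P).card + 8 * ρ ≤ 2 * (Mset B P).card + 8 * ρ * ρ := by
  set prs : Finset (Fin v) → Finset (Finset (Fin v)) :=
    (fun b => (b ∩ pts P).powersetCard 2) with hprs
  set cross : Finset (Finset (Fin v)) :=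
    ((pts P).powersetCard 2).filter (fun τ => ∀ p ∈ P, ¬ τ ⊆ p) with hcross
  have hEmem : ∀ b ∈ Eblk B P, b ∈ B ∧ b ∉ P ∧ 2 ≤ (b ∩ pts P).card := by
    intro b hb; exact Finset.mem_filter.1 hb |>.imp_right (by exact fun x => x)
  have hsub : ∀ b ∈ Eblk B P, prs b ⊆ cross := by
    intro b hb τ hτ
    rw [hprs, Finset.mem_powersetCard] at hτ
    obtain ⟨hbB, hbP, _⟩ := hEmem b hb
    rw [hcross, Finset.mem_filter, Finset.mem_powersetCard]
    refine ⟨⟨hτ.1.trans Finset.inter_subset_right, hτ.2⟩, ?_⟩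
    intro p hpP hτp
    have hne : b ≠ p := fun he => hbP (he ▸ hpP)
    have : τ ⊆ b ∩ p := Finset.subset_inter (hτ.1.trans Finset.inter_subset_left) hτp
    have := (Finset.card_le_card this)
    have := h.inter_le_one hbB (h.ppc.1 hpP) hne
    omega
  have hdisj : ∀ b ∈ Eblk B P, ∀ b' ∈ Eblk B P, b ≠ b' → Disjoint (prs b) (prs b') := by
    intro b hb b' hb' hne
    rw [Finset.disjoint_left]
    intro τ hτ hτ'
    rw [hprs, Finset.mem_powersetCard] at hτ hτ'
    have : τ ⊆ b ∩ b' := Finset.subset_inter (hτ.1.trans Finset.inter_subset_left)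
      (hτ'.1.trans Finset.inter_subset_left)
    have := Finset.card_le_card this
    have := h.inter_le_one (hEmem b hb).1 (hEmem b' hb').1 hne
    omega
  have hsum : ∑ b ∈ Eblk B P, (prs b).card ≤ cross.card := by
    rw [← Finset.card_biUnion hdisj]
    apply Finset.card_le_card
    intro τ hτ
    obtain ⟨b, hb, hτb⟩ := Finset.mem_biUnion.1 hτ
    exact hsub b hb hτb
  -- bound on cross.card
  have hcrosscard : cross.card + 8 * ρ ≤ 8 * ρ * ρ := by
    set inner : Finset (Finset (Fin v)) := P.biUnion (fun p => p.powersetCard 2) with hinner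
    have hinnercard : inner.card = 6 * ρ := by
      rw [hinner, Finset.card_biUnion]
      · trans (∑ _p ∈ P, 6)
        · exact Finset.sum_congr rfl (fun p hp => by
            rw [Finset.card_powersetCard, h.pcard4 hp]; decide)
        · rw [Finset.sum_const, smul_eq_mul, h.pcard]; ring
      · intro p hp q hq hne
        rw [Function.onFun, Finset.disjoint_left]
        intro τ hτp hτq
        rw [Finset.mem_powersetCard] at hτp hτq
        obtain ⟨hτp1, hτ2⟩ := hτp
        have hss : τ ⊆ p ∩ q := Finset.subset_inter hτp1 hτq.1
        rw [Finset.disjoint_iff_inter_eq_empty.1 (h.Pdisj hp hq hne)] at hss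
        have hc := Finset.card_le_card hss
        rw [Finset.card_empty] at hc
        omega
    have hdisj2 : Disjoint cross inner := by
      rw [Finset.disjoint_left]
      intro τ hτc hτi
      obtain ⟨p, hp, hτp⟩ := Finset.mem_biUnion.1 hτi
      exact (Finset.mem_filter.1 hτc).2 p hp (Finset.mem_powersetCard.1 hτp).1
    have hsub2 : cross ∪ inner ⊆ (pts P).powersetCard 2 := by
      apply Finset.union_subset (Finset.filter_subset _ _)
      intro τ hτ
      obtain ⟨p, hp, hτp⟩ := Finset.mem_biUnion.1 hτ
      rw [Finset.mem_powersetCard] at hτp ⊢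
      exact ⟨hτp.1.trans (subset_pts hp), hτp.2⟩
    have hle : cross.card + 6 * ρ ≤ ((pts P).powersetCard 2).card := by
      rw [← hinnercard, ← Finset.card_union_of_disjoint hdisj2]
      exact Finset.card_le_card hsub2
    rw [Finset.card_powersetCard, h.pts_card, Nat.choose_two_right] at hle
    have hdiv : 4 * ρ * (4 * ρ - 1) / 2 = 2 * ρ * (4 * ρ - 1) := by
      rw [show 4 * ρ * (4 * ρ - 1) = 2 * (2 * ρ * (4 * ρ - 1)) by ring]
      exact Nat.mul_div_cancel_left _ (by norm_num)
    rw [hdiv] at hle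
    have hρ1 := h.hρ
    have e1 : 2 * ρ * (4 * ρ - 1) + 2 * ρ = 8 * ρ * ρ := by
      have e2 : (4 * ρ - 1) + 1 = 4 * ρ := by omega
      calc 2 * ρ * (4 * ρ - 1) + 2 * ρ = 2 * ρ * ((4 * ρ - 1) + 1) := by ring
        _ = 8 * ρ * ρ := by rw [e2]; ring
    omega
  -- lower bound on the sum
  have s1 : ∑ b ∈ Mset B P, (prs b).card = (Mset B P).card := by
    trans (∑ _b ∈ Mset B P, 1)
    · exact Finset.sum_congr rfl (fun b hb => by
        rw [hprs, Finset.card_powersetCard, (Finset.mem_filter.1 hb).2]; decide)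
    · simp
  have s2 : ∑ b ∈ (Eblk B P).filter (fun b => ¬ ((b ∩ pts P).card = 2)), (prs b).card ≥
      3 * ((Eblk B P).filter (fun b => ¬ ((b ∩ pts P).card = 2))).card := by
    calc ∑ b ∈ (Eblk B P).filter (fun b => ¬ ((b ∩ pts P).card = 2)), (prs b).card
        ≥ ∑ _b ∈ (Eblk B P).filter (fun b => ¬ ((b ∩ pts P).card = 2)), 3 := by
          apply Finset.sum_le_sum
          intro b hb
          have hbE := (Finset.mem_filter.1 hb).1
          have hb2 := (Finset.mem_filter.1 hb).2
          have := (hEmem b hbE).2.2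
          rw [hprs, Finset.card_powersetCard]
          calc (3 : ℕ) = (3).choose 2 := by simp [Nat.choose]
            _ ≤ ((b ∩ pts P).card).choose 2 := Nat.choose_le_choose 2 (by omega)
      _ = 3 * ((Eblk B P).filter (fun b => ¬ ((b ∩ pts P).card = 2))).card := by
          rw [Finset.sum_const, smul_eq_mul, mul_comm]
  have s3 : (Mset B P).card + ((Eblk B P).filter (fun b => ¬ ((b ∩ pts P).card = 2))).card
      = (Eblk B P).card := by
    rw [Mset]
    exact Finset.card_filter_add_card_filter_not (p := fun b => (b ∩ pts P).card = 2)
  have hsplit : ∑ b ∈ Mset B P, (prs b).card +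
      ∑ b ∈ (Eblk B P).filter (fun b => ¬ ((b ∩ pts P).card = 2)), (prs b).card =
      ∑ b ∈ Eblk B P, (prs b).card := by
    rw [Mset]
    exact Finset.sum_filter_add_sum_filter_not _ _ _
  omega


/-! ### Per-pair analysis -/

def Mpq (B P : Finset (Finset (Fin v))) (p q : Finset (Fin v)) : Finset (Finset (Fin v)) :=
  (Mset B P).filter (fun b => (b ∩ p).Nonempty ∧ (b ∩ q).Nonempty)

lemma Mpq_symm {p q : Finset (Fin v)} : Mpq B P p q = Mpq B P q p := by
  unfold Mpq
  apply Finset.filter_congr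
  intro b _
  exact and_comm

variable {p q : Finset (Fin v)}

lemma Ctx.Mset_mem (h : Ctx v ρ B P) {b : Finset (Fin v)} (hb : b ∈ Mset B P) :
    b ∈ B ∧ b ∉ P ∧ (b ∩ pts P).card = 2 := by
  have h1 := Finset.mem_filter.1 hb
  have h2 := Finset.mem_filter.1 h1.1
  exact ⟨h2.1, h2.2.1, h1.2⟩

lemma Ctx.Mset_resid (h : Ctx v ρ B P) {b : Finset (Fin v)} (hb : b ∈ Mset B P) :
    (b \ pts P).card = 2 := by
  obtain ⟨hbB, _, h2⟩ := h.Mset_mem hb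
  rw [h.resid_card hbB, h2]

lemma Ctx.Mpq_struct (h : Ctx v ρ B P) (hp : p ∈ P) (hq : q ∈ P) (hpq : p ≠ q)
    {b : Finset (Fin v)} (hb : b ∈ Mpq B P p q) :
    ∃ x y, x ∈ p ∧ y ∈ q ∧ b ∩ p = {x} ∧ b ∩ q = {y} ∧ b ∩ pts P = {x, y} ∧ x ≠ y := by
  have h1 := Finset.mem_filter.1 hb
  obtain ⟨hbB, hbP, h2⟩ := h.Mset_mem h1.1
  have hbp : b ≠ p := fun he => hbP (he ▸ hp)
  have hbq : b ≠ q := fun he => hbP (he ▸ hq)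
  have hcp : (b ∩ p).card = 1 := le_antisymm (h.inter_le_one hbB (h.ppc.1 hp) hbp)
    (Finset.card_pos.2 h1.2.1)
  have hcq : (b ∩ q).card = 1 := le_antisymm (h.inter_le_one hbB (h.ppc.1 hq) hbq)
    (Finset.card_pos.2 h1.2.2)
  obtain ⟨x, hx⟩ := Finset.card_eq_one.1 hcp
  obtain ⟨y, hy⟩ := Finset.card_eq_one.1 hcq
  have hxp : x ∈ p := (Finset.mem_inter.1 (hx ▸ Finset.mem_singleton_self x : x ∈ b ∩ p)).2
  have hxb : x ∈ b := (Finset.mem_inter.1 (hx ▸ Finset.mem_singleton_self x : x ∈ b ∩ p)).1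
  have hyq : y ∈ q := (Finset.mem_inter.1 (hy ▸ Finset.mem_singleton_self y : y ∈ b ∩ q)).2
  have hyb : y ∈ b := (Finset.mem_inter.1 (hy ▸ Finset.mem_singleton_self y : y ∈ b ∩ q)).1
  have hxy : x ≠ y := by
    intro he
    exact Finset.disjoint_left.1 (h.Pdisj hp hq hpq) hxp (he ▸ hyq)
  refine ⟨x, y, hxp, hyq, hx, hy, ?_, hxy⟩
  have hsub : ({x, y} : Finset (Fin v)) ⊆ b ∩ pts P := by
    intro a ha
    rcases Finset.mem_insert.1 ha with rfl | ha
    · exact Finset.mem_inter.2 ⟨hxb, subset_pts hp hxp⟩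
    · rw [Finset.mem_singleton] at ha; subst ha
      exact Finset.mem_inter.2 ⟨hyb, subset_pts hq hyq⟩
  have hc2 : ({x, y} : Finset (Fin v)).card = 2 := by
    rw [Finset.card_insert_of_notMem (by simpa using hxy), Finset.card_singleton]
  exact (Finset.eq_of_subset_of_card_le hsub (by omega)).symm

lemma Ctx.Mpq_inj (h : Ctx v ρ B P) (hp : p ∈ P) (hq : q ∈ P) (hpq : p ≠ q)
    {b b' : Finset (Fin v)} (hb : b ∈ Mpq B P p q) (hb' : b' ∈ Mpq B P p q)
    (hep : b ∩ p = b' ∩ p) (heq : b ∩ q = b' ∩ q) : b = b' := by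
  by_contra hne
  obtain ⟨x, y, hxp, hyq, hxs, hys, hS, hxy⟩ := h.Mpq_struct hp hq hpq hb
  have hbB := (h.Mset_mem (Finset.mem_filter.1 hb).1).1
  have hbB' := (h.Mset_mem (Finset.mem_filter.1 hb').1).1
  have hxb' : x ∈ b' := by
    have : x ∈ b' ∩ p := by rw [← hep, hxs]; simp
    exact (Finset.mem_inter.1 this).1
  have hyb' : y ∈ b' := by
    have : y ∈ b' ∩ q := by rw [← heq, hys]; simp
    exact (Finset.mem_inter.1 this).1
  have hxb : x ∈ b := by
    have : x ∈ b ∩ p := by rw [hxs]; simp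
    exact (Finset.mem_inter.1 this).1
  have hyb : y ∈ b := by
    have : y ∈ b ∩ q := by rw [hys]; simp
    exact (Finset.mem_inter.1 this).1
  have hsub : ({x, y} : Finset (Fin v)) ⊆ b ∩ b' := by
    intro a ha
    rcases Finset.mem_insert.1 ha with rfl | ha
    · exact Finset.mem_inter.2 ⟨hxb, hxb'⟩
    · rw [Finset.mem_singleton] at ha; subst ha
      exact Finset.mem_inter.2 ⟨hyb, hyb'⟩
  have hc2 : ({x, y} : Finset (Fin v)).card = 2 := by
    rw [Finset.card_insert_of_notMem (by simpa using hxy), Finset.card_singleton]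
  have := Finset.card_le_card hsub
  have := h.inter_le_one hbB hbB' hne
  omega

lemma Ctx.Mpq_card16 (h : Ctx v ρ B P) (hp : p ∈ P) (hq : q ∈ P) (hpq : p ≠ q) :
    (Mpq B P p q).card ≤ 16 := by
  have := Finset.card_le_card_of_injOn
    (f := fun b => ((b ∩ p).min, (b ∩ q).min))
    (s := Mpq B P p q)
    (t := (p.image (fun x : Fin v => (x : WithBot (Fin v)))) ×ˢ
          (q.image (fun x : Fin v => (x : WithBot (Fin v)))))
    ?_ ?_
  · have hcard : ((p.image (fun x : Fin v => (x : WithBot (Fin v)))) ×ˢ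
        (q.image (fun x : Fin v => (x : WithBot (Fin v))))).card = 16 := by
      rw [Finset.card_product, Finset.card_image_of_injective _ (fun a b => by
        exact fun he => WithBot.coe_injective he),
        Finset.card_image_of_injective _ (fun a b => by
        exact fun he => WithBot.coe_injective he), h.pcard4 hp, h.pcard4 hq]
    omega
  · intro b hb
    obtain ⟨x, y, hxp, hyq, hxs, hys, _, _⟩ := h.Mpq_struct hp hq hpq hb
    refine Finset.mem_coe.2 (Finset.mem_product.2 ?_)
    dsimp only
    constructor
    · rw [hxs, Finset.min_singleton]
      exact Finset.mem_image.2 ⟨x, hxp, rfl⟩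
    · rw [hys, Finset.min_singleton]
      exact Finset.mem_image.2 ⟨y, hyq, rfl⟩
  · intro b hb b' hb' he
    obtain ⟨x, y, hxp, hyq, hxs, hys, _, _⟩ := h.Mpq_struct hp hq hpq hb
    obtain ⟨x', y', hxp', hyq', hxs', hys', _, _⟩ := h.Mpq_struct hp hq hpq hb'
    have h1 : ((b ∩ p).min, (b ∩ q).min) = ((b' ∩ p).min, (b' ∩ q).min) := he
    rw [hxs, hys, hxs', hys', Finset.min_singleton, Finset.min_singleton,
      Finset.min_singleton, Finset.min_singleton, Prod.mk.injEq] at h1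
    have hxx : x = x' := WithBot.coe_injective h1.1
    have hyy : y = y' := WithBot.coe_injective h1.2
    exact h.Mpq_inj hp hq hpq hb hb' (by rw [hxs, hxs', hxx]) (by rw [hys, hys', hyy])

/-- blocks of `Mpq` through a fixed point of `p` -/
lemma Ctx.Mpq_fiber_p (h : Ctx v ρ B P) (hp : p ∈ P) (hq : q ∈ P) (hpq : p ≠ q)
    {z : Fin v} (hz : z ∈ p) :
    ((Mpq B P p q).filter (fun b => z ∈ b)).card ≤ 4 := by
  have := Finset.card_le_card_of_injOn
    (f := fun b => (b ∩ q).min)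
    (s := (Mpq B P p q).filter (fun b => z ∈ b))
    (t := q.image (fun x : Fin v => (x : WithBot (Fin v)))) ?_ ?_
  · have hcard : (q.image (fun x : Fin v => (x : WithBot (Fin v)))).card = 4 := by
      rw [Finset.card_image_of_injective _ (fun a b => by
        exact fun he => WithBot.coe_injective he), h.pcard4 hq]
    omega
  · intro b hb
    obtain ⟨x, y, hxp, hyq, hxs, hys, _, _⟩ :=
      h.Mpq_struct hp hq hpq (Finset.filter_subset _ _ hb)
    dsimp only
    rw [hys, Finset.min_singleton]
    exact Finset.mem_image.2 ⟨y, hyq, rfl⟩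
  · intro b hb b' hb' he
    have hbM := Finset.filter_subset _ _ hb
    have hbM' := Finset.filter_subset _ _ hb'
    obtain ⟨x, y, hxp, hyq, hxs, hys, _, _⟩ := h.Mpq_struct hp hq hpq hbM
    obtain ⟨x', y', hxp', hyq', hxs', hys', _, _⟩ := h.Mpq_struct hp hq hpq hbM'
    have hzb : z ∈ b ∩ p := Finset.mem_inter.2 ⟨(Finset.mem_filter.1 hb).2, hz⟩
    have hzb' : z ∈ b' ∩ p := Finset.mem_inter.2 ⟨(Finset.mem_filter.1 hb').2, hz⟩
    rw [hxs, Finset.mem_singleton] at hzb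
    rw [hxs', Finset.mem_singleton] at hzb'
    have he' : (b ∩ q).min = (b' ∩ q).min := he
    rw [hys, hys', Finset.min_singleton, Finset.min_singleton] at he'
    have hyy : y = y' := WithBot.coe_injective he'
    exact h.Mpq_inj hp hq hpq hbM hbM' (by rw [hxs, hxs', ← hzb, ← hzb'])
      (by rw [hys, hys', hyy])

lemma Ctx.Mpq_fiber_q (h : Ctx v ρ B P) (hp : p ∈ P) (hq : q ∈ P) (hpq : p ≠ q)
    {z : Fin v} (hz : z ∈ q) :
    ((Mpq B P p q).filter (fun b => z ∈ b)).card ≤ 4 := by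
  rw [Mpq_symm]
  exact h.Mpq_fiber_p hq hp (Ne.symm hpq) hz


/-- disjointness of an A-block from a block avoiding its point -/
lemma disj_of {c b : Finset (Fin v)} {x' : Fin v} (hcS : c ∩ pts P = {x'}) (hx'b : x' ∉ b)
    (hres : Disjoint (c \ pts P) (b \ pts P)) : Disjoint c b := by
  rw [Finset.disjoint_left]
  intro a hac hab
  by_cases haS : a ∈ pts P
  · have : a ∈ c ∩ pts P := Finset.mem_inter.2 ⟨hac, haS⟩
    rw [hcS, Finset.mem_singleton] at this
    exact hx'b (this ▸ hab)
  · exact Finset.disjoint_left.1 hres (Finset.mem_sdiff.2 ⟨hac, haS⟩)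
      (Finset.mem_sdiff.2 ⟨hab, haS⟩)

lemma pair_biUnion : ({p, q} : Finset (Finset (Fin v))).biUnion id = p ∪ q := by
  rw [Finset.biUnion_insert, Finset.singleton_biUnion]
  rfl

lemma Ctx.Mpq_in_pq (h : Ctx v ρ B P) (hp : p ∈ P) (hq : q ∈ P) (hpq : p ≠ q)
    {b : Finset (Fin v)} (hb : b ∈ Mpq B P p q) : b ∩ pts P ⊆ p ∪ q := by
  obtain ⟨x, y, hxp, hyq, _, _, hS, _⟩ := h.Mpq_struct hp hq hpq hb
  rw [hS]
  intro a ha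
  rcases Finset.mem_insert.1 ha with rfl | ha
  · exact Finset.mem_union.2 (Or.inl hxp)
  · rw [Finset.mem_singleton] at ha; subst ha
    exact Finset.mem_union.2 (Or.inr hyq)

lemma Ctx.evader_pair (h : Ctx v ρ B P) (hp : p ∈ P) (hq : q ∈ P) (hpq : p ≠ q)
    {x' : Fin v} (hx'p : x' ∈ p) (h6 : 6 ≤ ndeg B P x')
    {b b' : Finset (Fin v)} (hb : b ∈ Mpq B P p q) (hb' : b' ∈ Mpq B P p q)
    (hx'b : x' ∉ b) (hx'b' : x' ∉ b')
    (hnp : b ∩ p ≠ b' ∩ p) (hnq : b ∩ q ≠ b' ∩ q) : ¬ Disjoint b b' := by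
  intro hd
  have hbne : b ≠ b' := fun he => hnp (he ▸ rfl)
  have hbM := (Finset.mem_filter.1 hb).1
  have hbM' := (Finset.mem_filter.1 hb').1
  have hbB := (h.Mset_mem hbM).1
  have hbB' := (h.Mset_mem hbM').1
  set W := (b \ pts P) ∪ (b' \ pts P) with hW
  have hWc : W.card ≤ 4 := by
    calc W.card ≤ (b \ pts P).card + (b' \ pts P).card := Finset.card_union_le _ _
      _ ≤ 4 := by rw [h.Mset_resid hbM, h.Mset_resid hbM']
  obtain ⟨c, hc, hcres⟩ := h.pick_avoid (x := x') (W := W) (by omega)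
  have hcB := (mem_Axp.1 hc).1
  have hcS := (mem_Axp.1 hc).2.2
  rw [hW, Finset.disjoint_union_right] at hcres
  have hcb : Disjoint c b := disj_of hcS hx'b hcres.1
  have hcb' : Disjoint c b' := disj_of hcS hx'b' hcres.2
  have hbc_ne : b ≠ c := by
    intro he
    have h1 := (h.Mset_mem hbM).2.2
    rw [he, hcS] at h1
    simp at h1
  have hbc_ne' : b' ≠ c := by
    intro he
    have h1 := (h.Mset_mem hbM').2.2
    rw [he, hcS] at h1
    simp at h1
  apply h.exch {p, q} {b, b', c}
  · intro r hr
    rcases Finset.mem_insert.1 hr with rfl | hr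
    · exact hp
    · rw [Finset.mem_singleton] at hr; subst hr; exact hq
  · intro r hr
    rcases Finset.mem_insert.1 hr with rfl | hr
    · exact hbB
    rcases Finset.mem_insert.1 hr with rfl | hr
    · exact hbB'
    · rw [Finset.mem_singleton] at hr; subst hr; exact hcB
  · intro r hr
    rw [pair_biUnion]
    rcases Finset.mem_insert.1 hr with rfl | hr
    · exact h.Mpq_in_pq hp hq hpq hb
    rcases Finset.mem_insert.1 hr with rfl | hr
    · exact h.Mpq_in_pq hp hq hpq hb'
    · rw [Finset.mem_singleton] at hr; subst hr
      rw [hcS]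
      intro a ha
      rw [Finset.mem_singleton] at ha; subst ha
      exact Finset.mem_union.2 (Or.inl hx'p)
  · intro r hr
    rcases Finset.mem_insert.1 hr with rfl | hr
    · rw [(h.Mset_mem hbM).2.2]; omega
    rcases Finset.mem_insert.1 hr with rfl | hr
    · rw [(h.Mset_mem hbM').2.2]; omega
    · rw [Finset.mem_singleton] at hr; subst hr
      rw [hcS]; simp
  · intro b₁ h₁ b₂ h₂ hne
    simp only [Finset.mem_insert, Finset.mem_singleton] at h₁ h₂
    rcases h₁ with rfl | rfl | rfl <;> rcases h₂ with rfl | rfl | rfl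
    · exact absurd rfl hne
    · exact hd
    · exact hcb.symm
    · exact hd.symm
    · exact absurd rfl hne
    · exact hcb'.symm
    · exact hcb
    · exact hcb'
    · exact absurd rfl hne
  · have hc2 : ({p, q} : Finset (Finset (Fin v))).card = 2 := by
      rw [Finset.card_insert_of_notMem (by simpa using hpq), Finset.card_singleton]
    have hc3 : ({b, b', c} : Finset (Finset (Fin v))).card = 3 := by
      rw [Finset.card_insert_of_notMem (by simp [hbne, hbc_ne]),
        Finset.card_insert_of_notMem (by simpa using hbc_ne'), Finset.card_singleton]
    omega

lemma Ctx.evaders_card (h : Ctx v ρ B P) (hp : p ∈ P) (hq : q ∈ P) (hpq : p ≠ q)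
    {x' : Fin v} (hx'p : x' ∈ p) (h6 : 6 ≤ ndeg B P x') :
    ((Mpq B P p q).filter (fun b => x' ∉ b)).card ≤ 9 := by
  set F := (Mpq B P p q).filter (fun b => x' ∉ b) with hF
  have hFM : F ⊆ Mpq B P p q := Finset.filter_subset _ _
  have hFsum : F.card = ∑ z ∈ p, (F.filter (fun b => z ∈ b)).card := by
    have hFU : F = p.biUnion (fun z => F.filter (fun b => z ∈ b)) := by
      apply Finset.Subset.antisymm
      · intro b hb
        obtain ⟨x, y, hxp, _, hxs, _, _, _⟩ := h.Mpq_struct hp hq hpq (hFM hb)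
        have hxb : x ∈ b := by
          have : x ∈ b ∩ p := by rw [hxs]; simp
          exact (Finset.mem_inter.1 this).1
        exact Finset.mem_biUnion.2 ⟨x, hxp, Finset.mem_filter.2 ⟨hb, hxb⟩⟩
      · intro b hb
        obtain ⟨z, _, hbz⟩ := Finset.mem_biUnion.1 hb
        exact Finset.filter_subset _ _ hbz
    have hdisjfib : ∀ z ∈ p, ∀ z' ∈ p, z ≠ z' →
        Disjoint (F.filter (fun b => z ∈ b)) (F.filter (fun b => z' ∈ b)) := by
      intro z hz z' hz' hne
      rw [Finset.disjoint_left]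
      intro b hbz hbz'
      obtain ⟨x, y, hxp, _, hxs, _, _, _⟩ :=
        h.Mpq_struct hp hq hpq (hFM (Finset.filter_subset _ _ hbz))
      have e1 : z ∈ b ∩ p := Finset.mem_inter.2 ⟨(Finset.mem_filter.1 hbz).2, hz⟩
      have e2 : z' ∈ b ∩ p := Finset.mem_inter.2 ⟨(Finset.mem_filter.1 hbz').2, hz'⟩
      rw [hxs, Finset.mem_singleton] at e1 e2
      exact hne (e1.trans e2.symm)
    have hcb := Finset.card_biUnion hdisjfib
    rw [← hFU] at hcb
    exact hcb
  by_cases hbig : ∃ z ∈ p, 4 ≤ (F.filter (fun b => z ∈ b)).card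
  · obtain ⟨z, hzp, h4⟩ := hbig
    set Gz := F.filter (fun b => z ∈ b) with hGz
    have hGM : Gz ⊆ Mpq B P p q := (Finset.filter_subset _ _).trans hFM
    have hzP : z ∈ pts P := subset_pts hp hzp
    have hFG : F ⊆ Gz := by
      intro b₅ hb₅
      by_contra hnot
      have hz5 : z ∉ b₅ := fun hz5 => hnot (Finset.mem_filter.2 ⟨hb₅, hz5⟩)
      have hb₅M := hFM hb₅
      have hx'b₅ : x' ∉ b₅ := (Finset.mem_filter.1 hb₅).2
      set K := Gz.filter (fun b => ¬ (b ∩ q = b₅ ∩ q)) with hK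
      have hK3 : 3 ≤ K.card := by
        have hle1 : (Gz.filter (fun b => b ∩ q = b₅ ∩ q)).card ≤ 1 := by
          rw [Finset.card_le_one]
          intro a ha a' ha'
          have haM := hGM (Finset.filter_subset _ _ ha)
          have haM' := hGM (Finset.filter_subset _ _ ha')
          obtain ⟨xa, ya, _, _, hxsa, _, _, _⟩ := h.Mpq_struct hp hq hpq haM
          obtain ⟨xa', ya', _, _, hxsa', _, _, _⟩ := h.Mpq_struct hp hq hpq haM'
          have e1 : z ∈ a ∩ p := Finset.mem_inter.2
            ⟨(Finset.mem_filter.1 (Finset.filter_subset _ _ ha : a ∈ Gz)).2, hzp⟩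
          have e2 : z ∈ a' ∩ p := Finset.mem_inter.2
            ⟨(Finset.mem_filter.1 (Finset.filter_subset _ _ ha' : a' ∈ Gz)).2, hzp⟩
          rw [hxsa, Finset.mem_singleton] at e1
          rw [hxsa', Finset.mem_singleton] at e2
          apply h.Mpq_inj hp hq hpq haM haM'
          · rw [hxsa, hxsa', ← e1, ← e2]
          · rw [(Finset.mem_filter.1 ha).2, (Finset.mem_filter.1 ha').2]
        have hsub2 : Gz ⊆ (Gz.filter (fun b => b ∩ q = b₅ ∩ q)) ∪ K := by
          intro b hb
          by_cases hcase : b ∩ q = b₅ ∩ q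
          · exact Finset.mem_union.2 (Or.inl (Finset.mem_filter.2 ⟨hb, hcase⟩))
          · exact Finset.mem_union.2 (Or.inr (Finset.mem_filter.2 ⟨hb, hcase⟩))
        have := (Finset.card_le_card hsub2).trans (Finset.card_union_le _ _)
        omega
      have hhit : ∀ b ∈ K, ¬ Disjoint (b \ pts P) (b₅ \ pts P) := by
        intro b hbK
        have hbG : b ∈ Gz := Finset.filter_subset _ _ hbK
        have hbM : b ∈ Mpq B P p q := hGM hbG
        have hzb : z ∈ b := (Finset.mem_filter.1 hbG).2
        have hbF : b ∈ F := Finset.filter_subset _ _ hbG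
        have hx'b : x' ∉ b := (Finset.mem_filter.1 hbF).2
        have hbnq : b ∩ q ≠ b₅ ∩ q := (Finset.mem_filter.1 hbK).2
        have hbnp : b ∩ p ≠ b₅ ∩ p := by
          intro he
          have : z ∈ b ∩ p := Finset.mem_inter.2 ⟨hzb, hzp⟩
          rw [he] at this
          exact hz5 (Finset.mem_inter.1 this).1
        have hnd := h.evader_pair hp hq hpq hx'p h6 hbM hb₅M hx'b hx'b₅ hbnp hbnq
        obtain ⟨a, hab, hab₅⟩ := Finset.not_disjoint_iff.1 hnd
        obtain ⟨xb, yb, hxbp, hybq, hxsb, hysb, hSb, _⟩ := h.Mpq_struct hp hq hpq hbM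
        obtain ⟨x₅, y₅, _, _, hxs₅, hys₅, hS₅, _⟩ := h.Mpq_struct hp hq hpq hb₅M
        have hzxb : xb = z := by
          have : z ∈ b ∩ p := Finset.mem_inter.2 ⟨hzb, hzp⟩
          rw [hxsb, Finset.mem_singleton] at this
          exact this.symm
        have haS : a ∉ pts P := by
          intro haS
          have h1 : a ∈ b ∩ pts P := Finset.mem_inter.2 ⟨hab, haS⟩
          rw [hSb] at h1
          rcases Finset.mem_insert.1 h1 with rfl | h1
          · exact hz5 (hzxb ▸ hab₅)
          · rw [Finset.mem_singleton] at h1; subst h1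
            have h2 : a ∈ b₅ ∩ pts P := Finset.mem_inter.2 ⟨hab₅, haS⟩
            rw [hS₅] at h2
            rcases Finset.mem_insert.1 h2 with he | h2
            · exact Finset.disjoint_left.1 (h.Pdisj hq hp (Ne.symm hpq)) hybq (he ▸ ‹x₅ ∈ p›)
            · rw [Finset.mem_singleton] at h2
              apply hbnq
              rw [hysb, hys₅, h2]
        exact Finset.not_disjoint_iff.2 ⟨a, Finset.mem_sdiff.2 ⟨hab, haS⟩,
          Finset.mem_sdiff.2 ⟨hab₅, haS⟩⟩
      have hdisjK : ∀ b ∈ K, ∀ b' ∈ K, b ≠ b' → Disjoint (b \ pts P) (b' \ pts P) := by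
        intro b hb b' hb'  hne
        have h1 : z ∈ b := (Finset.mem_filter.1 (Finset.filter_subset _ _ hb : b ∈ Gz)).2
        have h2 : z ∈ b' := (Finset.mem_filter.1 (Finset.filter_subset _ _ hb' : b' ∈ Gz)).2
        exact h.resid_disj (h.Mset_mem (Finset.mem_filter.1 (hGM (Finset.filter_subset _ _ hb))).1).1
          (h.Mset_mem (Finset.mem_filter.1 (hGM (Finset.filter_subset _ _ hb'))).1).1
          hne h1 h2 hzP
      have hb1 := hit_bound K (fun b => b \ pts P) (b₅ \ pts P) hdisjK
      have heq : K.filter (fun b => ¬ Disjoint (b \ pts P) (b₅ \ pts P)) = K :=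
        Finset.filter_eq_self.2 hhit
      rw [heq, h.Mset_resid (Finset.mem_filter.1 hb₅M).1] at hb1
      omega
    have h4' : Gz.card ≤ 4 := by
      have : Gz ⊆ (Mpq B P p q).filter (fun b => z ∈ b) := by
        intro b hb
        exact Finset.mem_filter.2 ⟨hGM hb, (Finset.mem_filter.1 hb).2⟩
      exact (Finset.card_le_card this).trans (h.Mpq_fiber_p hp hq hpq hzp)
    have := Finset.card_le_card hFG
    omega
  · push_neg at hbig
    have hzero : (F.filter (fun b => x' ∈ b)).card = 0 := by
      rw [Finset.card_eq_zero]
      apply Finset.eq_empty_of_forall_notMem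
      intro b hb
      exact (Finset.mem_filter.1 (Finset.filter_subset _ _ hb : b ∈ F)).2
        (Finset.mem_filter.1 hb).2
    have hsum2 : ∑ z ∈ p.erase x', (F.filter (fun b => z ∈ b)).card +
        (F.filter (fun b => x' ∈ b)).card = ∑ z ∈ p, (F.filter (fun b => z ∈ b)).card :=
      Finset.sum_erase_add p _ hx'p
    have hbound : ∑ z ∈ p.erase x', (F.filter (fun b => z ∈ b)).card ≤ 9 := by
      calc ∑ z ∈ p.erase x', (F.filter (fun b => z ∈ b)).card
          ≤ ∑ _z ∈ p.erase x', 3 := Finset.sum_le_sum (fun z hz => by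
            have := hbig z (Finset.mem_of_mem_erase hz); omega)
        _ = (p.erase x').card * 3 := by rw [Finset.sum_const, smul_eq_mul]
        _ ≤ 9 := by
            rw [Finset.card_erase_of_mem hx'p, h.pcard4 hp]
    omega

lemma Ctx.Mpq_13 (h : Ctx v ρ B P) (hp : p ∈ P) (hq : q ∈ P) (hpq : p ≠ q)
    (hH : Heavy B P p) : (Mpq B P p q).card ≤ 13 := by
  obtain ⟨x', hx'p, h6⟩ := hH
  have hsplit := Finset.card_filter_add_card_filter_not (s := Mpq B P p q)
    (p := fun b => x' ∈ b)
  have h1 := h.Mpq_fiber_p hp hq hpq hx'p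
  have h2 := h.evaders_card hp hq hpq hx'p h6
  omega


lemma Ctx.Mpq_8 (h : Ctx v ρ B P) (hp : p ∈ P) (hq : q ∈ P) (hpq : p ≠ q)
    (hHp : Heavy B P p) (hHq : Heavy B P q) : (Mpq B P p q).card ≤ 8 := by
  obtain ⟨x', hx'p, h6p⟩ := hHp
  obtain ⟨y', hy'q, h6q⟩ := hHq
  have hx'y' : x' ≠ y' := by
    intro he
    exact Finset.disjoint_left.1 (h.Pdisj hp hq hpq) hx'p (he ▸ hy'q)
  set F := (Mpq B P p q).filter (fun b => x' ∉ b) with hF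
  have hsplit1 : (Mpq B P p q).card ≤
      ((Mpq B P p q).filter (fun b => x' ∈ b)).card + F.card := by
    refine (Finset.card_le_card ?_).trans (Finset.card_union_le _ _)
    intro b hb
    by_cases hcase : x' ∈ b
    · exact Finset.mem_union.2 (Or.inl (Finset.mem_filter.2 ⟨hb, hcase⟩))
    · exact Finset.mem_union.2 (Or.inr (Finset.mem_filter.2 ⟨hb, hcase⟩))
  have hsplit2 : F.card ≤
      (F.filter (fun b => y' ∈ b)).card + (F.filter (fun b => y' ∉ b)).card := by
    refine (Finset.card_le_card ?_).trans (Finset.card_union_le _ _)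
    intro b hb
    by_cases hcase : y' ∈ b
    · exact Finset.mem_union.2 (Or.inl (Finset.mem_filter.2 ⟨hb, hcase⟩))
    · exact Finset.mem_union.2 (Or.inr (Finset.mem_filter.2 ⟨hb, hcase⟩))
  have h1 := h.Mpq_fiber_p hp hq hpq hx'p
  have h2 : (F.filter (fun b => y' ∈ b)).card ≤ 4 := by
    have hss : F.filter (fun b => y' ∈ b) ⊆ (Mpq B P p q).filter (fun b => y' ∈ b) := by
      intro b hb
      exact Finset.mem_filter.2 ⟨Finset.filter_subset _ _ (Finset.filter_subset _ _ hb),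
        (Finset.mem_filter.1 hb).2⟩
    exact (Finset.card_le_card hss).trans (h.Mpq_fiber_q hp hq hpq hy'q)
  have h3 : (F.filter (fun b => y' ∉ b)).card = 0 := by
    rw [Finset.card_eq_zero]
    apply Finset.eq_empty_of_forall_notMem
    intro b hb
    have hbF : b ∈ F := Finset.filter_subset _ _ hb
    have hy'b : y' ∉ b := (Finset.mem_filter.1 hb).2
    have hx'b : x' ∉ b := (Finset.mem_filter.1 hbF).2
    have hbM : b ∈ Mpq B P p q := Finset.filter_subset _ _ hbF
    have hbMs := (Finset.mem_filter.1 hbM).1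
    have hbB := (h.Mset_mem hbMs).1
    have hbres := h.Mset_resid hbMs
    -- pick d at y' avoiding b's residual
    obtain ⟨d, hd, hdres⟩ := h.pick_avoid (x := y') (W := b \ pts P) (by omega)
    have hdB := (mem_Axp.1 hd).1
    have hdS := (mem_Axp.1 hd).2.2
    have hdres3 : (d \ pts P).card = 3 := by
      rw [h.resid_card hdB, hdS]; simp
    -- pick c at x' avoiding b and d residuals
    obtain ⟨c, hc, hcres⟩ := h.pick_avoid (x := x')
      (W := (b \ pts P) ∪ (d \ pts P)) (by
        have := Finset.card_union_le (b \ pts P) (d \ pts P)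
        omega)
    have hcB := (mem_Axp.1 hc).1
    have hcS := (mem_Axp.1 hc).2.2
    rw [Finset.disjoint_union_right] at hcres
    have hdb : Disjoint d b := disj_of hdS hy'b hdres
    have hcb : Disjoint c b := disj_of hcS hx'b hcres.1
    have hcd : Disjoint c d := by
      rw [Finset.disjoint_left]
      intro a hac had
      by_cases haS : a ∈ pts P
      · have e1 : a ∈ c ∩ pts P := Finset.mem_inter.2 ⟨hac, haS⟩
        have e2 : a ∈ d ∩ pts P := Finset.mem_inter.2 ⟨had, haS⟩
        rw [hcS, Finset.mem_singleton] at e1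
        rw [hdS, Finset.mem_singleton] at e2
        exact hx'y' (e1 ▸ e2 ▸ rfl)
      · exact Finset.disjoint_left.1 hcres.2 (Finset.mem_sdiff.2 ⟨hac, haS⟩)
          (Finset.mem_sdiff.2 ⟨had, haS⟩)
    have hbc_ne : b ≠ c := by
      intro he
      have h1' := (h.Mset_mem hbMs).2.2
      rw [he, hcS] at h1'
      simp at h1'
    have hbd_ne : b ≠ d := by
      intro he
      have h1' := (h.Mset_mem hbMs).2.2
      rw [he, hdS] at h1'
      simp at h1'
    have hcd_ne : c ≠ d := by
      intro he
      rw [he, hdS] at hcS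
      exact hx'y' (Finset.singleton_injective hcS).symm
    apply h.exch {p, q} {b, c, d}
    · intro r hr
      rcases Finset.mem_insert.1 hr with rfl | hr
      · exact hp
      · rw [Finset.mem_singleton] at hr; subst hr; exact hq
    · intro r hr
      rcases Finset.mem_insert.1 hr with rfl | hr
      · exact hbB
      rcases Finset.mem_insert.1 hr with rfl | hr
      · exact hcB
      · rw [Finset.mem_singleton] at hr; subst hr; exact hdB
    · intro r hr
      rw [pair_biUnion]
      rcases Finset.mem_insert.1 hr with rfl | hr
      · exact h.Mpq_in_pq hp hq hpq hbM
      rcases Finset.mem_insert.1 hr with rfl | hr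
      · rw [hcS]
        intro a ha; rw [Finset.mem_singleton] at ha; subst ha
        exact Finset.mem_union.2 (Or.inl hx'p)
      · rw [Finset.mem_singleton] at hr; subst hr
        rw [hdS]
        intro a ha; rw [Finset.mem_singleton] at ha; subst ha
        exact Finset.mem_union.2 (Or.inr hy'q)
    · intro r hr
      rcases Finset.mem_insert.1 hr with rfl | hr
      · rw [(h.Mset_mem hbMs).2.2]; omega
      rcases Finset.mem_insert.1 hr with rfl | hr
      · rw [hcS]; simp
      · rw [Finset.mem_singleton] at hr; subst hr
        rw [hdS]; simp
    · intro b₁ h₁ b₂ h₂ hne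
      simp only [Finset.mem_insert, Finset.mem_singleton] at h₁ h₂
      rcases h₁ with rfl | rfl | rfl <;> rcases h₂ with rfl | rfl | rfl
      · exact absurd rfl hne
      · exact hcb.symm
      · exact hdb.symm
      · exact hcb
      · exact absurd rfl hne
      · exact hcd
      · exact hdb
      · exact hcd.symm
      · exact absurd rfl hne
    · have hc2 : ({p, q} : Finset (Finset (Fin v))).card = 2 := by
        rw [Finset.card_insert_of_notMem (by simpa using hpq), Finset.card_singleton]
      have hc3 : ({b, c, d} : Finset (Finset (Fin v))).card = 3 := by
        rw [Finset.card_insert_of_notMem (by simp [hbc_ne, hbd_ne]),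
          Finset.card_insert_of_notMem (by simpa using hcd_ne), Finset.card_singleton]
      omega
  omega


/-! ### Global double counting -/

lemma Ctx.meets_two (h : Ctx v ρ B P) {b : Finset (Fin v)} (hb : b ∈ Mset B P) :
    (P.filter (fun r => (b ∩ r).Nonempty)).card = 2 := by
  obtain ⟨hbB, hbP, h2⟩ := h.Mset_mem hb
  obtain ⟨x, y, hxy, hxyS⟩ := Finset.card_eq_two.1 h2
  have hx : x ∈ b ∩ pts P := by rw [hxyS]; simp
  have hy : y ∈ b ∩ pts P := by rw [hxyS]; simp
  obtain ⟨px, hpx, hxpx⟩ := mem_pts.1 (Finset.mem_inter.1 hx).2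
  obtain ⟨py, hpy, hypy⟩ := mem_pts.1 (Finset.mem_inter.1 hy).2
  have hxb : x ∈ b := (Finset.mem_inter.1 hx).1
  have hyb : y ∈ b := (Finset.mem_inter.1 hy).1
  have hpxy : px ≠ py := by
    intro he
    have hbpx : b ≠ px := fun he2 => hbP (he2 ▸ hpx)
    have hsub : ({x, y} : Finset (Fin v)) ⊆ b ∩ px := by
      intro a ha
      rcases Finset.mem_insert.1 ha with rfl | ha
      · exact Finset.mem_inter.2 ⟨hxb, hxpx⟩
      · rw [Finset.mem_singleton] at ha; subst ha
        exact Finset.mem_inter.2 ⟨hyb, he ▸ hypy⟩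
    have hc2 : ({x, y} : Finset (Fin v)).card = 2 := by
      rw [Finset.card_insert_of_notMem (by simpa using hxy), Finset.card_singleton]
    have := Finset.card_le_card hsub
    have := h.inter_le_one hbB (h.ppc.1 hpx) hbpx
    omega
  have hfe : P.filter (fun r => (b ∩ r).Nonempty) = {px, py} := by
    apply Finset.Subset.antisymm
    · intro r hr
      obtain ⟨hrP, a, har⟩ := Finset.mem_filter.1 hr
      have haS : a ∈ b ∩ pts P := Finset.mem_inter.2
        ⟨(Finset.mem_inter.1 har).1, subset_pts hrP (Finset.mem_inter.1 har).2⟩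
      rw [hxyS] at haS
      rcases Finset.mem_insert.1 haS with rfl | haS
      · exact Finset.mem_insert.2 (Or.inl (h.p_unique hrP hpx (Finset.mem_inter.1 har).2 hxpx))
      · rw [Finset.mem_singleton] at haS; subst haS
        exact Finset.mem_insert.2 (Or.inr (Finset.mem_singleton.2
          (h.p_unique hrP hpy (Finset.mem_inter.1 har).2 hypy)))
    · intro r hr
      rcases Finset.mem_insert.1 hr with rfl | hr
      · exact Finset.mem_filter.2 ⟨hpx, ⟨x, Finset.mem_inter.2 ⟨hxb, hxpx⟩⟩⟩
      · rw [Finset.mem_singleton] at hr; subst hr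
        exact Finset.mem_filter.2 ⟨hpy, ⟨y, Finset.mem_inter.2 ⟨hyb, hypy⟩⟩⟩
  rw [hfe, Finset.card_insert_of_notMem (by simpa using hpxy), Finset.card_singleton]

lemma Ctx.two_m (h : Ctx v ρ B P) :
    ∑ z ∈ P.offDiag, (Mpq B P z.1 z.2).card = 2 * (Mset B P).card := by
  have step1 : ∀ z : Finset (Fin v) × Finset (Fin v), z ∈ P.offDiag →
      (Mpq B P z.1 z.2).card =
      ∑ b ∈ Mset B P, (if (b ∩ z.1).Nonempty ∧ (b ∩ z.2).Nonempty then 1 else 0) := by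
    intro z _
    rw [Mpq, Finset.card_filter]
  rw [Finset.sum_congr rfl step1, Finset.sum_comm]
  have step2 : ∀ b ∈ Mset B P,
      ∑ z ∈ P.offDiag, (if (b ∩ z.1).Nonempty ∧ (b ∩ z.2).Nonempty then 1 else 0) = 2 := by
    intro b hb
    rw [← Finset.card_filter]
    have hfe : P.offDiag.filter (fun z => (b ∩ z.1).Nonempty ∧ (b ∩ z.2).Nonempty) =
        (P.filter (fun r => (b ∩ r).Nonempty)).offDiag := by
      ext z
      rw [Finset.mem_filter, Finset.mem_offDiag, Finset.mem_offDiag,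
        Finset.mem_filter, Finset.mem_filter]
      tauto
    rw [hfe, Finset.offDiag_card, h.meets_two hb]
  rw [Finset.sum_congr rfl step2, Finset.sum_const, smul_eq_mul, mul_comm]

lemma Ctx.two_m_bound (h : Ctx v ρ B P) :
    2 * (Mset B P).card + 6 * ((ρ - 1) * (P.filter (fun p => Heavy B P p)).card) ≤
      16 * (ρ * ρ - ρ) := by
  set g : Finset (Fin v) → ℕ := fun p => if Heavy B P p then 1 else 0 with hg
  have hkcard : ∑ r ∈ P, g r = (P.filter (fun p => Heavy B P p)).card := by
    rw [Finset.card_filter]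
  have hbnd : ∀ z ∈ P.offDiag, (Mpq B P z.1 z.2).card + (3 * g z.1 + 3 * g z.2) ≤ 16 := by
    intro z hz
    obtain ⟨hz1, hz2, hzne⟩ := Finset.mem_offDiag.1 hz
    by_cases h1 : Heavy B P z.1 <;> by_cases h2 : Heavy B P z.2
    · have hc := h.Mpq_8 hz1 hz2 hzne h1 h2
      have e1 : g z.1 = 1 := by simp [hg, h1]
      have e2 : g z.2 = 1 := by simp [hg, h2]
      omega
    · have hc := h.Mpq_13 hz1 hz2 hzne h1
      have e1 : g z.1 = 1 := by simp [hg, h1]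
      have e2 : g z.2 = 0 := by simp [hg, h2]
      omega
    · have hc := h.Mpq_13 hz2 hz1 (Ne.symm hzne) h2
      rw [← Mpq_symm] at hc
      have e1 : g z.1 = 0 := by simp [hg, h1]
      have e2 : g z.2 = 1 := by simp [hg, h2]
      omega
    · have hc := h.Mpq_card16 hz1 hz2 hzne
      have e1 : g z.1 = 0 := by simp [hg, h1]
      have e2 : g z.2 = 0 := by simp [hg, h2]
      omega
  have hsum := Finset.sum_le_sum hbnd
  rw [Finset.sum_const, smul_eq_mul, Finset.offDiag_card, h.pcard] at hsum
  rw [Finset.sum_add_distrib, Finset.sum_add_distrib, ← Finset.mul_sum, ← Finset.mul_sum,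
    h.two_m] at hsum
  have hprod1 : ∑ z ∈ P ×ˢ P, g z.1 = ρ * (P.filter (fun p => Heavy B P p)).card := by
    rw [Finset.sum_product]
    rw [Finset.sum_congr rfl (fun x _ => by
      rw [Finset.sum_const, smul_eq_mul, h.pcard, mul_comm] : ∀ x ∈ P, (∑ _y ∈ P, g x) = ρ * g x)]
    rw [← Finset.mul_sum, hkcard]
  have hprod2 : ∑ z ∈ P ×ˢ P, g z.2 = ρ * (P.filter (fun p => Heavy B P p)).card := by
    rw [Finset.sum_product]
    rw [Finset.sum_congr rfl (fun x _ => hkcard : ∀ x ∈ P, (∑ y ∈ P, g y) =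
      (P.filter (fun p => Heavy B P p)).card)]
    rw [Finset.sum_const, smul_eq_mul, h.pcard]
  have hdiag1 : ∑ z ∈ P.diag, g z.1 = (P.filter (fun p => Heavy B P p)).card := by
    rw [Finset.sum_diag P (fun z => g z.1), hkcard]
  have hdiag2 : ∑ z ∈ P.diag, g z.2 = (P.filter (fun p => Heavy B P p)).card := by
    rw [Finset.sum_diag P (fun z => g z.2), hkcard]
  have hsplit1 : ∑ z ∈ P.diag, g z.1 + ∑ z ∈ P.offDiag, g z.1 = ∑ z ∈ P ×ˢ P, g z.1 := by
    rw [← Finset.sum_union (Finset.disjoint_diag_offDiag P), Finset.diag_union_offDiag]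
  have hsplit2 : ∑ z ∈ P.diag, g z.2 + ∑ z ∈ P.offDiag, g z.2 = ∑ z ∈ P ×ˢ P, g z.2 := by
    rw [← Finset.sum_union (Finset.disjoint_diag_offDiag P), Finset.diag_union_offDiag]
  have hmulk : (ρ - 1) * (P.filter (fun p => Heavy B P p)).card +
      (P.filter (fun p => Heavy B P p)).card = ρ * (P.filter (fun p => Heavy B P p)).card := by
    have h' : ((ρ - 1) + 1) * (P.filter (fun p => Heavy B P p)).card =
        (ρ - 1) * (P.filter (fun p => Heavy B P p)).card +
        (P.filter (fun p => Heavy B P p)).card := by ring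
    rw [Nat.sub_add_cancel h.hρ] at h'
    exact h'.symm
  omega

/-! ### Final assembly -/

lemma Ctx.main (h : Ctx v ρ B P) : 3 * B.card + 16 * ρ ≤ ρ * v + 15 * ρ ^ 2 := by
  have n1 := h.card_split
  have n2 := h.A_total
  have n3 := h.E_pairs
  have n4 := h.two_m_bound
  have hv := h.hv
  have hρ := h.hρ
  have n5 : (P.filter (fun p => Heavy B P p)).card ≤ ρ := by
    rw [← h.pcard]
    exact Finset.card_filter_le _ _
  set k := (P.filter (fun p => Heavy B P p)).card with hkdef
  have h4v : 4 * ρ ≤ v := by omega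
  have e1 : k * (v - 4 * ρ) + k * (4 * ρ) = k * v := by
    have h' : k * ((v - 4 * ρ) + 4 * ρ) = k * (v - 4 * ρ) + k * (4 * ρ) := by ring
    rw [Nat.sub_add_cancel h4v] at h'
    exact h'.symm
  have e2 : 36 * (ρ - k) + 36 * k = 36 * ρ := by
    have h' : 36 * ((ρ - k) + k) = 36 * (ρ - k) + 36 * k := by ring
    rw [Nat.sub_add_cancel n5] at h'
    exact h'.symm
  have e3 : (ρ - 1) * k + k = ρ * k := by
    have h' : ((ρ - 1) + 1) * k = (ρ - 1) * k + k := by ring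
    rw [Nat.sub_add_cancel hρ] at h'
    exact h'.symm
  have e4 : 16 * (ρ * ρ - ρ) + 16 * ρ = 16 * (ρ * ρ) := by
    have h' : 16 * ((ρ * ρ - ρ) + ρ) = 16 * (ρ * ρ - ρ) + 16 * ρ := by ring
    rw [Nat.sub_add_cancel (Nat.le_mul_of_pos_left ρ hρ)] at h'
    exact h'.symm
  have hj : (ρ - k) + k = ρ := Nat.sub_add_cancel n5
  have c1 : (ρ - k) * (9 * ρ + 31) ≤ (ρ - k) * v := Nat.mul_le_mul_left _ hv
  have d1 : (ρ - k) * (9 * ρ + 31) = 9 * ((ρ - k) * ρ) + 31 * (ρ - k) := by ring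
  have d2 : (ρ - k) * v + k * v = ρ * v := by rw [← add_mul, hj]
  have d3 : (ρ - k) * ρ + k * ρ = ρ * ρ := by rw [← add_mul, hj]
  have d4 : ρ * k = k * ρ := by ring
  have d5 : k * (4 * ρ) = 4 * (k * ρ) := by ring
  have d6 : 8 * ρ * ρ = 8 * (ρ * ρ) := by ring
  have c2 : k * 1 ≤ k * ρ := Nat.mul_le_mul_left _ hρ
  have hsq : ρ ^ 2 = ρ * ρ := by ring
  rw [hsq]
  omega

end Stmt8Aux


end

theorem stmt8 (ρ v : ℕ) (hρ : 1 ≤ ρ) (hv : 9 * ρ + 31 ≤ v) :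
    (beta ρ v 4 : ℚ) ≤ (ρ : ℚ) * v / 3 + 5 * (ρ : ℚ) ^ 2 - 16 * ρ / 3 := by
  have hkey : ∀ n ∈ {b | ∃ B : Finset (Finset (Fin v)),
      IsPacking v 4 B ∧ MaxPPCSize B ρ ∧ B.card = b},
      n ≤ (ρ * v + 15 * ρ ^ 2 - 16 * ρ) / 3 := by
    intro n hn
    obtain ⟨B, hpack, hmps, hcard⟩ := hn
    obtain ⟨⟨P, hppc, hpc⟩, hmax⟩ := hmps
    have hctx : Stmt8Aux.Ctx v ρ B P := ⟨hpack, hppc, hpc, hmax, hρ, hv⟩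
    have hmain := hctx.main
    rw [hcard] at hmain
    rw [Nat.le_div_iff_mul_le (by norm_num : (0:ℕ) < 3)]
    have hsq : ρ ^ 2 = ρ * ρ := by ring
    rw [hsq] at hmain ⊢
    omega
  have hbeta : beta ρ v 4 ≤ (ρ * v + 15 * ρ ^ 2 - 16 * ρ) / 3 := csSup_le' hkey
  have h16 : 16 * ρ ≤ ρ * v + 15 * ρ ^ 2 := by
    have h1 : ρ * 16 ≤ ρ * v := Nat.mul_le_mul_left _ (by omega)
    have h2 : ρ * 16 = 16 * ρ := by ring
    omega
  calc (beta ρ v 4 : ℚ) ≤ (((ρ * v + 15 * ρ ^ 2 - 16 * ρ) / 3 : ℕ) : ℚ) := by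
        exact_mod_cast hbeta
    _ ≤ ((ρ * v + 15 * ρ ^ 2 - 16 * ρ : ℕ) : ℚ) / 3 := Nat.cast_div_le
    _ = ((ρ : ℚ) * v + 15 * ρ ^ 2 - 16 * ρ) / 3 := by
        rw [Nat.cast_sub h16]
        push_cast
        ring
    _ = (ρ : ℚ) * v / 3 + 5 * (ρ : ℚ) ^ 2 - 16 * ρ / 3 := by ring
end

section
/- In a (v,4)-packing with maximum PPC 𝒫 = {B₁,…,B_ρ} where B_i = {a_i,b_i,c_i,d_i}, t_{a_1}³ ≤ ⋯ ≤ t_{a_ρ}³ and t_{a_i}³ ≥ max{t_{b_i}³,t_{c_i}³,t_{d_i}³} for all i: if ρ ≥ 2, t_{a_1}³ ≥ 3 and t_{a_2}³ ≥ 6, then there is no block of the packing consisting of two points of P \ {a_1,…,a_ρ} and two points of T. -/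
lemma avoid_aux {v : ℕ} (F : Finset (Finset (Fin v))) (S : Finset (Fin v))
    (hinj : ∀ q ∈ S, (F.filter (fun b => q ∈ b)).card ≤ 1)
    (hlt : S.card < F.card) :
    ∃ b ∈ F, ∀ q ∈ S, q ∉ b := by
  by_contra h
  push_neg at h
  have hsub : F ⊆ S.biUnion (fun q => F.filter (fun b => q ∈ b)) := by
    intro b hb
    obtain ⟨q, hq, hqb⟩ := h b hb
    exact Finset.mem_biUnion.2 ⟨q, hq, Finset.mem_filter.2 ⟨hb, hqb⟩⟩
  have h1 := Finset.card_le_card hsub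
  have h2 := Finset.card_biUnion_le (s := S) (t := fun q => F.filter (fun b => q ∈ b))
  have h3 : ∑ q ∈ S, (F.filter (fun b => q ∈ b)).card ≤ ∑ _q ∈ S, 1 :=
    Finset.sum_le_sum hinj
  simp only [Finset.sum_const, smul_eq_mul, mul_one] at h3
  omega

set_option maxHeartbeats 1000000 in
theorem stmt13 (v ρ : ℕ) (hρ : 2 ≤ ρ)
    (B : Finset (Finset (Fin v))) (hpack : IsPacking v 4 B)
    (P : Finset (Finset (Fin v)))
    (hPPC : IsPPC B P) (hcard : P.card = ρ)
    (hmax : ∀ Q, IsPPC B Q → Q.card ≤ ρ)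
    (t : Fin v → ℕ)
    (ht : ∀ p, t p =
      ((B \ P).filter (fun b => p ∈ b ∧ (b \ P.sup id).card = 3)).card)
    (a b c d : Fin ρ → Fin v)
    (hblocks : ∀ i, ({a i, b i, c i, d i} : Finset (Fin v)) ∈ P)
    (hall : ∀ bl ∈ P, ∃ i, bl = ({a i, b i, c i, d i} : Finset (Fin v)))
    (hmono : ∀ i j : Fin ρ, i ≤ j → t (a i) ≤ t (a j))
    (hamax : ∀ i, t (b i) ≤ t (a i) ∧ t (c i) ≤ t (a i) ∧ t (d i) ≤ t (a i))
    (h1 : 3 ≤ t (a ⟨0, by omega⟩)) (h2 : 6 ≤ t (a ⟨1, by omega⟩)) :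
    ¬ ∃ bl ∈ B, (bl ∩ (P.sup id \ Finset.image a Finset.univ)).card = 2 ∧
        (bl \ P.sup id).card = 2 := by
  rintro ⟨bl, hblB, h2a, h2b⟩
  set Psup := P.sup id with hPsupdef
  clear_value Psup
  have hPsub : ∀ Bb ∈ P, Bb ⊆ Psup := by
    intro Bb hBb
    rw [hPsupdef]
    exact Finset.le_sup (f := id) hBb
  have hblcard : bl.card = 4 := hpack.1 bl hblB
  have hsplit : (bl ∩ Psup).card + (bl \ Psup).card = bl.card :=
    Finset.card_inter_add_card_sdiff bl Psup
  have hcap2 : (bl ∩ Psup).card = 2 := by omega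
  have hsubA : bl ∩ (Psup \ Finset.image a Finset.univ) ⊆ bl ∩ Psup := by
    intro q hq
    simp only [Finset.mem_inter, Finset.mem_sdiff] at hq ⊢
    exact ⟨hq.1, hq.2.1⟩
  have heqA : bl ∩ (Psup \ Finset.image a Finset.univ) = bl ∩ Psup :=
    Finset.eq_of_subset_of_card_le hsubA (by omega)
  have haPsup : ∀ k : Fin ρ, a k ∈ Psup := by
    intro k
    exact hPsub _ (hblocks k) (Finset.mem_insert_self _ _)
  have hano : ∀ k : Fin ρ, a k ∉ bl := by
    intro k hk
    have hmem : a k ∈ bl ∩ Psup := Finset.mem_inter.2 ⟨hk, haPsup k⟩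
    rw [← heqA] at hmem
    simp only [Finset.mem_inter, Finset.mem_sdiff, Finset.mem_image] at hmem
    exact hmem.2.2 ⟨k, Finset.mem_univ k, rfl⟩
  -- bl is not in P, and similarly for any block with points outside Psup
  have hnotP : ∀ bb : Finset (Fin v), (bb \ Psup).card ≠ 0 → bb ∉ P := by
    intro bb h hbb
    apply h
    rw [Finset.card_eq_zero, Finset.sdiff_eq_empty_iff_subset]
    exact hPsub bb hbb
  have hblnotP : bl ∉ P := hnotP bl (by omega)
  -- two distinct points of bl ∩ Psup
  obtain ⟨e, he, f, hf, hef⟩ : ∃ e ∈ bl ∩ Psup, ∃ f ∈ bl ∩ Psup, e ≠ f :=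
    Finset.one_lt_card.1 (by omega)
  obtain ⟨Be, hBe, heBe⟩ : ∃ Bb ∈ P, e ∈ Bb := by
    have := (Finset.mem_inter.1 he).2
    rw [hPsupdef, Finset.mem_sup] at this
    exact this
  obtain ⟨Bf, hBf, hfBf⟩ : ∃ Bb ∈ P, f ∈ Bb := by
    have := (Finset.mem_inter.1 hf).2
    rw [hPsupdef, Finset.mem_sup] at this
    exact this
  have heblf : e ∈ bl := (Finset.mem_inter.1 he).1
  have hfblf : f ∈ bl := (Finset.mem_inter.1 hf).1
  have hBeBf : Be ≠ Bf := by
    rintro rfl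
    have hblne : bl ≠ Be := fun h => hblnotP (h ▸ hBe)
    have hle := hpack.2 bl hblB Be (hPPC.1 hBe) hblne
    have : ({e, f} : Finset (Fin v)) ⊆ bl ∩ Be := by
      intro q hq
      simp only [Finset.mem_insert, Finset.mem_singleton] at hq
      rcases hq with rfl | rfl
      · exact Finset.mem_inter.2 ⟨heblf, heBe⟩
      · exact Finset.mem_inter.2 ⟨hfblf, hfBf⟩
    have h2' : ({e, f} : Finset (Fin v)).card = 2 := Finset.card_pair hef
    have := Finset.card_le_card this
    omega
  -- bl ∩ Psup = {e, f}
  have hblcap : bl ∩ Psup = {e, f} := by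
    symm
    apply Finset.eq_of_subset_of_card_le
    · intro q hq
      simp only [Finset.mem_insert, Finset.mem_singleton] at hq
      rcases hq with rfl | rfl
      · exact he
      · exact hf
    · rw [Finset.card_pair hef]; omega
  -- bl is disjoint from all blocks of P other than Be, Bf
  have hdis : ∀ Bb ∈ P, Bb ≠ Be → Bb ≠ Bf → Disjoint bl Bb := by
    intro Bb hBb hne hnf
    rw [Finset.disjoint_left]
    intro q hqbl hqBb
    have hq : q ∈ bl ∩ Psup := Finset.mem_inter.2 ⟨hqbl, hPsub Bb hBb hqBb⟩
    rw [hblcap] at hq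
    simp only [Finset.mem_insert, Finset.mem_singleton] at hq
    rcases hq with rfl | rfl
    · exact Finset.disjoint_left.1 (hPPC.2 Bb hBb Be hBe hne) hqBb heBe
    · exact Finset.disjoint_left.1 (hPPC.2 Bb hBb Bf hBf hnf) hqBb hfBf
  -- helper: a block of B with one point in Psup and three outside meets Psup in a singleton
  have hcapone : ∀ (p : Fin v) (bb : Finset (Fin v)), bb ∈ B → p ∈ bb → p ∈ Psup →
      (bb \ Psup).card = 3 → bb ∩ Psup = {p} := by
    intro p bb hbbB hp hpP h3
    have hc4 : bb.card = 4 := hpack.1 bb hbbB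
    have hsp := Finset.card_inter_add_card_sdiff bb Psup
    have hc1 : (bb ∩ Psup).card = 1 := by omega
    obtain ⟨x, hx⟩ := Finset.card_eq_one.1 hc1
    have hpx : p ∈ bb ∩ Psup := Finset.mem_inter.2 ⟨hp, hpP⟩
    rw [hx, Finset.mem_singleton] at hpx
    rw [hx, hpx]
  -- helper: at most one block of a subfamily of B containing both p and q
  have huniq : ∀ (p q : Fin v), p ≠ q → ∀ F : Finset (Finset (Fin v)), (∀ bb ∈ F, bb ∈ B ∧ p ∈ bb) →
      (F.filter (fun bb => q ∈ bb)).card ≤ 1 := by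
    intro p q hpq F hF
    rw [Finset.card_le_one]
    intro x hx y hy
    rw [Finset.mem_filter] at hx hy
    by_contra hxy
    have hle := hpack.2 x (hF x hx.1).1 y (hF y hy.1).1 hxy
    have hsub : ({p, q} : Finset (Fin v)) ⊆ x ∩ y := by
      intro z hz
      simp only [Finset.mem_insert, Finset.mem_singleton] at hz
      rcases hz with rfl | rfl
      · exact Finset.mem_inter.2 ⟨(hF x hx.1).2, (hF y hy.1).2⟩
      · exact Finset.mem_inter.2 ⟨hx.2, hy.2⟩
    have := Finset.card_le_card hsub
    rw [Finset.card_pair hpq] at this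
    omega
  -- the key contradiction
  have key : ∀ (i j : Fin ρ) (Be' Bf' : Finset (Fin v)), i < j → Be' ∈ P → Bf' ∈ P →
      Be' ≠ Bf' → Be' = ({a i, b i, c i, d i} : Finset (Fin v)) →
      Bf' = ({a j, b j, c j, d j} : Finset (Fin v)) →
      (∀ Bb ∈ P, Bb ≠ Be' → Bb ≠ Bf' → Disjoint bl Bb) → False := by
    intro i j Be' Bf' hij hBe' hBf' hne' heqi heqj hdis'
    have h0i : (⟨0, by omega⟩ : Fin ρ) ≤ i := by
      rw [Fin.le_def]
      exact Nat.zero_le _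
    have h1j : (⟨1, by omega⟩ : Fin ρ) ≤ j := by
      rw [Fin.le_def]
      show 1 ≤ (j : ℕ)
      have := hij
      rw [Fin.lt_def] at this
      omega
    have t3i : 3 ≤ t (a i) := le_trans h1 (hmono _ i h0i)
    have t6j : 6 ≤ t (a j) := le_trans h2 (hmono _ j h1j)
    have haiBe : a i ∈ Be' := heqi ▸ Finset.mem_insert_self _ _
    have hajBf : a j ∈ Bf' := heqj ▸ Finset.mem_insert_self _ _
    have haij : a i ≠ a j := by
      intro h
      exact Finset.disjoint_left.1 (hPPC.2 Be' hBe' Bf' hBf' hne') haiBe (h ▸ hajBf)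
    -- family of blocks on a i with 3 points outside Psup
    have hF₁mem : ∀ bb ∈ (B \ P).filter (fun bb => a i ∈ bb ∧ (bb \ Psup).card = 3),
        bb ∈ B ∧ a i ∈ bb ∧ (bb \ Psup).card = 3 := by
      intro bb hbb
      rw [Finset.mem_filter, Finset.mem_sdiff] at hbb
      exact ⟨hbb.1.1, hbb.2.1, hbb.2.2⟩
    have hF₁card : t (a i) =
        ((B \ P).filter (fun bb => a i ∈ bb ∧ (bb \ Psup).card = 3)).card := ht (a i)
    obtain ⟨B₁, hB₁F, hB₁av⟩ :
        ∃ bb ∈ (B \ P).filter (fun bb => a i ∈ bb ∧ (bb \ Psup).card = 3),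
          ∀ q ∈ bl \ Psup, q ∉ bb := by
      apply avoid_aux
      · intro q hq
        have hqP : q ∉ Psup := (Finset.mem_sdiff.1 hq).2
        have hqa : a i ≠ q := fun h => hqP (h ▸ haPsup i)
        exact huniq (a i) q hqa _ (fun bb hbb => ⟨(hF₁mem bb hbb).1, (hF₁mem bb hbb).2.1⟩)
      · omega
    obtain ⟨hB₁B, hB₁ai, hB₁3⟩ := hF₁mem B₁ hB₁F
    have hB₁cap : B₁ ∩ Psup = {a i} := hcapone (a i) B₁ hB₁B hB₁ai (haPsup i) hB₁3
    have hdB₁bl : Disjoint B₁ bl := by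
      rw [Finset.disjoint_left]
      intro q hqB₁ hqbl
      by_cases hqP : q ∈ Psup
      · have : q ∈ B₁ ∩ Psup := Finset.mem_inter.2 ⟨hqB₁, hqP⟩
        rw [hB₁cap, Finset.mem_singleton] at this
        exact hano i (this ▸ hqbl)
      · exact hB₁av q (Finset.mem_sdiff.2 ⟨hqbl, hqP⟩) hqB₁
    -- family on a j
    have hF₂mem : ∀ bb ∈ (B \ P).filter (fun bb => a j ∈ bb ∧ (bb \ Psup).card = 3),
        bb ∈ B ∧ a j ∈ bb ∧ (bb \ Psup).card = 3 := by
      intro bb hbb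
      rw [Finset.mem_filter, Finset.mem_sdiff] at hbb
      exact ⟨hbb.1.1, hbb.2.1, hbb.2.2⟩
    have hF₂card : t (a j) =
        ((B \ P).filter (fun bb => a j ∈ bb ∧ (bb \ Psup).card = 3)).card := ht (a j)
    obtain ⟨B₂, hB₂F, hB₂av⟩ :
        ∃ bb ∈ (B \ P).filter (fun bb => a j ∈ bb ∧ (bb \ Psup).card = 3),
          ∀ q ∈ (bl \ Psup) ∪ (B₁ \ Psup), q ∉ bb := by
      apply avoid_aux
      · intro q hq
        have hqP : q ∉ Psup := by
          rw [Finset.mem_union, Finset.mem_sdiff, Finset.mem_sdiff] at hq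
          rcases hq with h | h
          · exact h.2
          · exact h.2
        have hqa : a j ≠ q := fun h => hqP (h ▸ haPsup j)
        exact huniq (a j) q hqa _ (fun bb hbb => ⟨(hF₂mem bb hbb).1, (hF₂mem bb hbb).2.1⟩)
      · have := Finset.card_union_le (bl \ Psup) (B₁ \ Psup)
        omega
    obtain ⟨hB₂B, hB₂aj, hB₂3⟩ := hF₂mem B₂ hB₂F
    have hB₂cap : B₂ ∩ Psup = {a j} := hcapone (a j) B₂ hB₂B hB₂aj (haPsup j) hB₂3
    have hdB₂bl : Disjoint B₂ bl := by
      rw [Finset.disjoint_left]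
      intro q hqB₂ hqbl
      by_cases hqP : q ∈ Psup
      · have : q ∈ B₂ ∩ Psup := Finset.mem_inter.2 ⟨hqB₂, hqP⟩
        rw [hB₂cap, Finset.mem_singleton] at this
        exact hano j (this ▸ hqbl)
      · exact hB₂av q (Finset.mem_union_left _ (Finset.mem_sdiff.2 ⟨hqbl, hqP⟩)) hqB₂
    have hdB₂B₁ : Disjoint B₂ B₁ := by
      rw [Finset.disjoint_left]
      intro q hqB₂ hqB₁
      by_cases hqP : q ∈ Psup
      · have h1' : q ∈ B₂ ∩ Psup := Finset.mem_inter.2 ⟨hqB₂, hqP⟩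
        have h2' : q ∈ B₁ ∩ Psup := Finset.mem_inter.2 ⟨hqB₁, hqP⟩
        rw [hB₂cap, Finset.mem_singleton] at h1'
        rw [hB₁cap, Finset.mem_singleton] at h2'
        exact haij (h2' ▸ h1' ▸ rfl)
      · exact hB₂av q (Finset.mem_union_right _ (Finset.mem_sdiff.2 ⟨hqB₁, hqP⟩)) hqB₂
    -- B₁ and B₂ are disjoint from all blocks of P except Be' resp. Bf'
    have hdB₁P : ∀ Bb ∈ P, Bb ≠ Be' → Disjoint B₁ Bb := by
      intro Bb hBb hne
      rw [Finset.disjoint_left]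
      intro q hqB₁ hqBb
      have : q ∈ B₁ ∩ Psup := Finset.mem_inter.2 ⟨hqB₁, hPsub Bb hBb hqBb⟩
      rw [hB₁cap, Finset.mem_singleton] at this
      subst this
      exact Finset.disjoint_left.1 (hPPC.2 Bb hBb Be' hBe' hne) hqBb haiBe
    have hdB₂P : ∀ Bb ∈ P, Bb ≠ Bf' → Disjoint B₂ Bb := by
      intro Bb hBb hne
      rw [Finset.disjoint_left]
      intro q hqB₂ hqBb
      have : q ∈ B₂ ∩ Psup := Finset.mem_inter.2 ⟨hqB₂, hPsub Bb hBb hqBb⟩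
      rw [hB₂cap, Finset.mem_singleton] at this
      subst this
      exact Finset.disjoint_left.1 (hPPC.2 Bb hBb Bf' hBf' hne) hqBb hajBf
    -- the blocks are pairwise distinct and not in P
    have hB₁notP : B₁ ∉ P := hnotP B₁ (by omega)
    have hB₂notP : B₂ ∉ P := hnotP B₂ (by omega)
    have hblne : bl.Nonempty := Finset.card_pos.1 (by omega)
    have hB₁bl : B₁ ≠ bl := by
      rintro rfl
      obtain ⟨q, hq⟩ := hblne
      exact Finset.disjoint_left.1 hdB₁bl hq hq
    have hB₂bl : B₂ ≠ bl := by
      rintro rfl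
      obtain ⟨q, hq⟩ := hblne
      exact Finset.disjoint_left.1 hdB₂bl hq hq
    have hB₂B₁ : B₂ ≠ B₁ := by
      rintro rfl
      exact Finset.disjoint_left.1 hdB₂B₁ hB₂aj hB₂aj
    -- build the larger PPC
    obtain ⟨Q, hQdef⟩ : ∃ Q : Finset (Finset (Fin v)),
        Q = insert bl (insert B₁ (insert B₂ (P \ {Be', Bf'}))) := ⟨_, rfl⟩
    have hQmem : ∀ x, x ∈ Q ↔ x = bl ∨ x = B₁ ∨ x = B₂ ∨ (x ∈ P ∧ x ≠ Be' ∧ x ≠ Bf') := by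
      intro x
      rw [hQdef]
      simp only [Finset.mem_insert, Finset.mem_sdiff, Finset.mem_singleton]
      constructor
      · rintro (h | h | h | ⟨h, h'⟩)
        · exact Or.inl h
        · exact Or.inr (Or.inl h)
        · exact Or.inr (Or.inr (Or.inl h))
        · push_neg at h'
          exact Or.inr (Or.inr (Or.inr ⟨h, h'⟩))
      · rintro (h | h | h | ⟨h, h1', h2'⟩)
        · exact Or.inl h
        · exact Or.inr (Or.inl h)
        · exact Or.inr (Or.inr (Or.inl h))
        · exact Or.inr (Or.inr (Or.inr ⟨h, by tauto⟩))
    have hQPPC : IsPPC B Q := by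
      constructor
      · intro x hx
        rw [hQmem] at hx
        rcases hx with rfl | rfl | rfl | ⟨h, _, _⟩
        · exact hblB
        · exact hB₁B
        · exact hB₂B
        · exact hPPC.1 h
      · intro x hx y hy hxy
        rw [hQmem] at hx hy
        rcases hx with rfl | rfl | rfl | ⟨hxP, hxe, hxf⟩ <;>
          rcases hy with rfl | rfl | rfl | ⟨hyP, hye, hyf⟩
        · exact absurd rfl hxy
        · exact hdB₁bl.symm
        · exact hdB₂bl.symm
        · exact hdis' y hyP hye hyf
        · exact hdB₁bl
        · exact absurd rfl hxy
        · exact hdB₂B₁.symm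
        · exact hdB₁P y hyP hye
        · exact hdB₂bl
        · exact hdB₂B₁
        · exact absurd rfl hxy
        · exact hdB₂P y hyP hyf
        · exact (hdis' x hxP hxe hxf).symm
        · exact (hdB₁P x hxP hxe).symm
        · exact (hdB₂P x hxP hxf).symm
        · exact hPPC.2 x hxP y hyP hxy
    -- count
    have hpairsub : ({Be', Bf'} : Finset (Finset (Fin v))) ⊆ P := by
      intro x hx
      simp only [Finset.mem_insert, Finset.mem_singleton] at hx
      rcases hx with rfl | rfl
      · exact hBe'
      · exact hBf'
    have hsd : (P \ {Be', Bf'}).card = ρ - 2 := by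
      rw [Finset.card_sdiff_of_subset hpairsub, Finset.card_pair hne', hcard]
    have hB₂ni : B₂ ∉ P \ ({Be', Bf'} : Finset (Finset (Fin v))) := by
      intro h
      exact hB₂notP (Finset.mem_sdiff.1 h).1
    have hB₁ni : B₁ ∉ insert B₂ (P \ ({Be', Bf'} : Finset (Finset (Fin v)))) := by
      intro h
      rcases Finset.mem_insert.1 h with h | h
      · exact hB₂B₁ h.symm
      · exact hB₁notP (Finset.mem_sdiff.1 h).1
    have hblni : bl ∉ insert B₁ (insert B₂ (P \ ({Be', Bf'} : Finset (Finset (Fin v))))) := by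
      intro h
      rcases Finset.mem_insert.1 h with h | h
      · exact hB₁bl h.symm
      · rcases Finset.mem_insert.1 h with h | h
        · exact hB₂bl h.symm
        · exact hblnotP (Finset.mem_sdiff.1 h).1
    have hQcard : Q.card = ρ + 1 := by
      rw [hQdef, Finset.card_insert_of_notMem hblni, Finset.card_insert_of_notMem hB₁ni,
        Finset.card_insert_of_notMem hB₂ni, hsd]
      omega
    have := hmax Q hQPPC
    omega
  -- apply key with indices ordered
  obtain ⟨i, hi⟩ := hall Be hBe
  obtain ⟨j, hj⟩ := hall Bf hBf
  have hij : i ≠ j := by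
    rintro rfl
    exact hBeBf (hi.trans hj.symm)
  rcases lt_or_gt_of_ne hij with h | h
  · exact key i j Be Bf h hBe hBf hBeBf hi hj hdis
  · exact key j i Bf Be h hBf hBe hBeBf.symm hj hi
      (fun Bb hBb h1' h2' => hdis Bb hBb h2' h1')
end
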